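/- arXiv:0907.2543 — 4 statements merged into one kernel-verified Lean document; each statement's English description precedes it below -/
import Mathlib

section
/- The degenerate cyclotomic Hecke algebra of level two H_d^{p,q} := H_d / ⟨(x_1-p)(x_1-q)⟩, where H_d is the degenerate affine Hecke algebra over a field F of characteristic zero, has dimension 2^d · d! as an F-vector space. -/
/-- The degenerate affine Hecke algebra `H_d` over a field `F`: an `F`-algebra which,
as a vector space, is `F[x_1,…,x_d] ⊗ F[S_d]` (encoded by the PBW-type basis `pbw`
of monomials `x^σ · w`), in which the polynomial generators commute and the
relations `s_r x_t = x_t s_r` (for `t ≠ r, r+1`) and `s_r x_{r+1} = x_r s_r + 1` hold. -/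
structure DegAffineHecke (F : Type*) [Field F] (d : ℕ) where
  carrier : Type*
  [ring : Ring carrier]
  [alg : Algebra F carrier]
  x : Fin d → carrier
  s : Equiv.Perm (Fin d) →* carrier
  x_comm : ∀ i j, x i * x j = x j * x i
  s_x_comm : ∀ (r t : ℕ) (hr : r + 1 < d) (ht : t < d), t ≠ r → t ≠ r + 1 →
    s (Equiv.swap ⟨r, Nat.lt_of_succ_lt hr⟩ ⟨r + 1, hr⟩) * x ⟨t, ht⟩
      = x ⟨t, ht⟩ * s (Equiv.swap ⟨r, Nat.lt_of_succ_lt hr⟩ ⟨r + 1, hr⟩)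
  s_x_rel : ∀ (r : ℕ) (hr : r + 1 < d),
    s (Equiv.swap ⟨r, Nat.lt_of_succ_lt hr⟩ ⟨r + 1, hr⟩) * x ⟨r + 1, hr⟩
      = x ⟨r, Nat.lt_of_succ_lt hr⟩ * s (Equiv.swap ⟨r, Nat.lt_of_succ_lt hr⟩ ⟨r + 1, hr⟩) + 1
  pbw : Module.Basis ((Fin d → ℕ) × Equiv.Perm (Fin d)) F carrier
  pbw_eq : ∀ σ w, pbw (σ, w) = (List.ofFn fun i => x i ^ σ i).prod * s w

attribute [instance] DegAffineHecke.ring DegAffineHecke.alg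


open Equiv

namespace CycHecke

section ListLemmas

variable {M : Type*} [Monoid M]

lemma listProd_mul : ∀ {n : ℕ} (f g : Fin n → M),
    (∀ i j, Commute (f i) (g j)) →
    (List.ofFn fun i => f i * g i).prod = (List.ofFn f).prod * (List.ofFn g).prod := by
  intro n
  induction n with
  | zero => intro f g _; simp
  | succ n ih =>
    intro f g hc
    rw [List.ofFn_succ, List.ofFn_succ, List.ofFn_succ, List.prod_cons, List.prod_cons,
      List.prod_cons, ih (fun i => f i.succ) (fun i => g i.succ) (fun i j => hc _ _)]
    have hcomm : Commute (g 0) (List.ofFn fun i : Fin n => f i.succ).prod := by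
      apply Commute.list_prod_right
      intro y hy
      rw [List.mem_ofFn] at hy
      obtain ⟨i, rfl⟩ := hy
      exact (hc i.succ 0).symm
    rw [mul_assoc, mul_assoc, ← mul_assoc (g 0), hcomm.eq, mul_assoc]

lemma listProd_single : ∀ {n : ℕ} (f : Fin n → M) (i : Fin n),
    (∀ j, j ≠ i → f j = 1) → (List.ofFn f).prod = f i := by
  intro n
  induction n with
  | zero => intro _ i; exact absurd i.2 (by omega)
  | succ n ih =>
    intro f i hj
    rw [List.ofFn_succ, List.prod_cons]
    rcases Fin.eq_zero_or_eq_succ i with rfl | ⟨k, rfl⟩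
    · have : ∀ j : Fin n, f j.succ = 1 := fun j => hj _ (Fin.succ_ne_zero j)
      have h1 : (List.ofFn fun i : Fin n => f i.succ).prod = 1 := by
        apply List.prod_eq_one
        intro y hy
        rw [List.mem_ofFn] at hy
        obtain ⟨j, rfl⟩ := hy
        exact this j
      rw [h1, mul_one]
    · rw [hj 0 (Fin.succ_ne_zero k).symm, one_mul]
      exact ih (fun j => f j.succ) k fun j hjk => hj _ (by simpa using hjk)

end ListLemmas

section Main

variable {F : Type*} [Field F] {d : ℕ} (H : DegAffineHecke F d) (p q : ℤ)

/-- ordered monomial -/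
def XM (σ : Fin d → ℕ) : H.carrier := (List.ofFn fun i => H.x i ^ σ i).prod

lemma XM_mul (σ τ : Fin d → ℕ) : XM H σ * XM H τ = XM H (σ + τ) := by
  rw [XM, XM, XM, ← listProd_mul (fun i => H.x i ^ σ i) (fun i => H.x i ^ τ i)
    (fun i j => (Commute.pow_pow (by exact H.x_comm i j) _ _))]
  congr 1
  ext i
  simp [Pi.add_apply, pow_add]

lemma XM_zero : XM H 0 = 1 := by
  rw [XM]
  apply List.prod_eq_one
  intro y hy
  rw [List.mem_ofFn] at hy
  obtain ⟨j, rfl⟩ := hy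
  simp

lemma XM_single (i : Fin d) (k : ℕ) : XM H (Pi.single i k) = H.x i ^ k := by
  rw [XM]
  have := listProd_single (fun j => H.x j ^ Pi.single i k j) i ?_
  · rw [this, Pi.single_eq_same]
  · intro j hj
    simp [Pi.single_eq_of_ne hj]

lemma XM_single_one (i : Fin d) : XM H (Pi.single i 1) = H.x i := by
  rw [XM_single, pow_one]

/-- image of an adjacent transposition -/
def T (r : ℕ) (hr : r + 1 < d) : H.carrier :=
  H.s (Equiv.swap ⟨r, Nat.lt_of_succ_lt hr⟩ ⟨r + 1, hr⟩)

lemma T_sq (r : ℕ) (hr : r + 1 < d) : T H r hr * T H r hr = 1 := by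
  rw [T, ← map_mul, Equiv.swap_mul_self, map_one]

lemma T_x_comm (r : ℕ) (hr : r + 1 < d) (m : Fin d) (h1 : m.val ≠ r) (h2 : m.val ≠ r + 1) :
    T H r hr * H.x m = H.x m * T H r hr := by
  have := H.s_x_comm r m.val hr m.isLt h1 h2
  rwa [Fin.eta] at this

lemma T_x_succ (r : ℕ) (hr : r + 1 < d) :
    T H r hr * H.x ⟨r + 1, hr⟩ = H.x ⟨r, Nat.lt_of_succ_lt hr⟩ * T H r hr + 1 :=
  H.s_x_rel r hr

lemma T_x_self (r : ℕ) (hr : r + 1 < d) :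
    T H r hr * H.x ⟨r, Nat.lt_of_succ_lt hr⟩ = H.x ⟨r + 1, hr⟩ * T H r hr - 1 := by
  have h1 : T H r hr * H.x ⟨r + 1, hr⟩ * T H r hr
      = H.x ⟨r, Nat.lt_of_succ_lt hr⟩ + T H r hr := by
    rw [T_x_succ, add_mul, mul_assoc, T_sq, mul_one, one_mul]
  have h2 : H.x ⟨r + 1, hr⟩ * T H r hr
      = T H r hr * (H.x ⟨r, Nat.lt_of_succ_lt hr⟩ + T H r hr) := by
    rw [← h1, ← mul_assoc, ← mul_assoc, T_sq, one_mul]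
  rw [h2, mul_add, T_sq]
  simp

end Main

end CycHecke
section PermLemmas

open Equiv

variable {d : ℕ}

lemma fin_ne {a b : ℕ} (ha : a < d) (hb : b < d) (h : a ≠ b) :
    (⟨a, ha⟩ : Fin d) ≠ ⟨b, hb⟩ := by
  simp only [ne_eq, Fin.mk.injEq]; exact h

lemma swap_disjoint_comm {a b c e : Fin d} (hac : a ≠ c) (hae : a ≠ e) (hbc : b ≠ c)
    (hbe : b ≠ e) : swap a b * swap c e = swap c e * swap a b := by
  ext z
  simp only [Equiv.Perm.mul_apply]
  by_cases hza : z = a <;> by_cases hzb : z = b <;> by_cases hzc : z = c <;>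
    by_cases hze : z = e <;> subst_vars <;>
    simp_all [swap_apply_of_ne_of_ne, swap_apply_left, swap_apply_right, Equiv.swap_apply_def] <;>
    (try (split_ifs <;> simp_all))

lemma swap_braid {a b c : Fin d} (hab : a ≠ b) (hbc : b ≠ c) (hac : a ≠ c) :
    swap a b * swap b c * swap a b = swap b c * swap a b * swap b c := by
  have e1 : swap b a * swap c b * swap b a = swap a c :=
    swap_mul_swap_mul_swap (Ne.symm hbc) (Ne.symm hac)
  have e2 : swap b c * swap a b * swap b c = swap c a :=
    swap_mul_swap_mul_swap hab hac
  rw [swap_comm b a, swap_comm c b] at e1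
  rw [e1, e2, swap_comm c a]

lemma perm_adjacent_induction (P : Equiv.Perm (Fin d) → Prop) (h1 : P 1)
    (hmul : ∀ u v, P u → P v → P (u * v))
    (hgen : ∀ (r : ℕ) (hr : r + 1 < d),
      P (swap ⟨r, Nat.lt_of_succ_lt hr⟩ ⟨r + 1, hr⟩)) :
    ∀ w, P w := by
  intro w
  let S : Submonoid (Equiv.Perm (Fin d)) :=
    { carrier := setOf P
      one_mem' := h1
      mul_mem' := fun ha hb => hmul _ _ ha hb }
  suffices hS : w ∈ S from hS
  cases d with
  | zero =>
    have : w = 1 := Subsingleton.elim _ _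
    rw [this]; exact h1
  | succ n =>
    have htop := Equiv.Perm.mclosure_swap_castSucc_succ n
    have hw : w ∈ Submonoid.closure
        (Set.range fun i : Fin n => swap (Fin.castSucc i) (Fin.succ i)) := by
      rw [htop]; trivial
    refine Submonoid.closure_le.mpr ?_ hw
    rintro _ ⟨i, rfl⟩
    show P (swap (Fin.castSucc i) (Fin.succ i))
    have h1' : Fin.castSucc i = (⟨i.val, by omega⟩ : Fin (n+1)) := by ext; simp
    have h2' : Fin.succ i = (⟨i.val + 1, by omega⟩ : Fin (n+1)) := by ext; simp
    have hlt : i.val + 1 < n + 1 := by omega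
    rw [h1', h2']
    exact hgen i.val hlt

lemma swap_mk_fix {r jv : ℕ} (hr : r + 1 < d) (hj : jv < d) (h1 : jv ≠ r) (h2 : jv ≠ r + 1) :
    swap (⟨r, Nat.lt_of_succ_lt hr⟩ : Fin d) ⟨r + 1, hr⟩ ⟨jv, hj⟩ = ⟨jv, hj⟩ :=
  swap_apply_of_ne_of_ne (fin_ne _ _ h1) (fin_ne _ _ h2)

lemma swap_mk_left {r : ℕ} (hr : r + 1 < d) (hj : r < d) :
    swap (⟨r, Nat.lt_of_succ_lt hr⟩ : Fin d) ⟨r + 1, hr⟩ ⟨r, hj⟩ = ⟨r + 1, hr⟩ := by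
  rw [show (⟨r, hj⟩ : Fin d) = ⟨r, Nat.lt_of_succ_lt hr⟩ from rfl]
  exact swap_apply_left _ _

lemma swap_mk_right {r : ℕ} (hr : r + 1 < d) (hj : r + 1 < d) :
    swap (⟨r, Nat.lt_of_succ_lt hr⟩ : Fin d) ⟨r + 1, hr⟩ ⟨r + 1, hj⟩
      = ⟨r, Nat.lt_of_succ_lt hr⟩ := by
  rw [show (⟨r + 1, hj⟩ : Fin d) = ⟨r + 1, hr⟩ from rfl]
  exact swap_apply_right _ _

end PermLemmas

namespace CycHecke

section Zeta

open Equiv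

variable {F : Type*} [Field F] {d : ℕ} (H : DegAffineHecke F d) (p q : ℤ)

/-- The conjugates `ζ_j` of the cyclotomic element. -/
def Z : (j : ℕ) → j < d → H.carrier
  | 0, h => (H.x ⟨0, h⟩ - (p : H.carrier)) * (H.x ⟨0, h⟩ - (q : H.carrier))
  | j + 1, h => T H j h * Z j (Nat.lt_of_succ_lt h) * T H j h

def Zf (j : Fin d) : H.carrier := Z H p q j.1 j.2

lemma Zf_mk (j : ℕ) (h : j < d) : Zf H p q ⟨j, h⟩ = Z H p q j h := rfl

lemma T_commute_group {r jp : ℕ} (hr : r + 1 < d) (hj : jp + 1 < d)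
    (hd1 : r ≠ jp) (hd2 : r ≠ jp + 1) (hd3 : r + 1 ≠ jp) :
    Commute (T H r hr) (T H jp hj) := by
  show T H r hr * T H jp hj = T H jp hj * T H r hr
  rw [T, T, ← map_mul, ← map_mul,
    swap_disjoint_comm (fin_ne _ _ hd1) (fin_ne _ _ hd2) (fin_ne _ _ hd3)
      (fin_ne _ _ (by omega))]

lemma T_Zf : ∀ (j : ℕ) (hj : j < d) (r : ℕ) (hr : r + 1 < d),
    T H r hr * Z H p q j hj =
      Zf H p q (swap ⟨r, Nat.lt_of_succ_lt hr⟩ ⟨r + 1, hr⟩ ⟨j, hj⟩) * T H r hr := by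
  intro j
  induction j using Nat.strong_induction_on with
  | _ j IH =>
    intro hj r hr
    match j, hj with
    | 0, hj =>
      rcases Nat.eq_zero_or_pos r with rfl | hrpos
      · rw [swap_mk_left hr hj, Zf_mk]
        show T H 0 hr * Z H p q 0 hj = Z H p q (0 + 1) hr * T H 0 hr
        rw [show Z H p q (0 + 1) hr = T H 0 hr * Z H p q 0 (Nat.lt_of_succ_lt hr) * T H 0 hr
          from rfl]
        rw [mul_assoc, mul_assoc, T_sq, mul_one]
      · rw [swap_mk_fix hr hj (by omega) (by omega), Zf_mk]
        have hc : Commute (T H r hr) (H.x ⟨0, hj⟩) :=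
          T_x_comm H r hr ⟨0, hj⟩ (by show ¬(0 = r); omega) (by show ¬(0 = r + 1); omega)
        have hp : Commute (T H r hr) ((p : ℤ) : H.carrier) := (Int.cast_commute p _).symm
        have hq : Commute (T H r hr) ((q : ℤ) : H.carrier) := (Int.cast_commute q _).symm
        exact ((hc.sub_right hp).mul_right (hc.sub_right hq)).eq
    | (jp + 1), hj =>
      have e0 : Z H p q (jp + 1) hj
          = T H jp hj * Z H p q jp (Nat.lt_of_succ_lt hj) * T H jp hj := rfl
      by_cases h1 : r = jp
      · -- r = jp : T_jp ζ_{jp+1} = ζ_jp T_jp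
        subst h1
        rw [swap_mk_right hr hj, Zf_mk]
        have et : T H r hr = T H r hj := rfl
        rw [e0, et, ← mul_assoc, ← mul_assoc, T_sq, one_mul]
      by_cases h2 : r = jp + 1
      · -- r = jp + 1
        subst h2
        rw [swap_mk_left hr hj, Zf_mk]
        show _ = Z H p q (jp + 1 + 1) hr * _
        rw [show Z H p q (jp + 1 + 1) hr
            = T H (jp + 1) hr * Z H p q (jp + 1) (Nat.lt_of_succ_lt hr) * T H (jp + 1) hr
          from rfl]
        rw [mul_assoc, mul_assoc, T_sq, mul_one]
      by_cases h3 : r + 1 = jp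
      · -- braid case : r = jp - 1
        subst h3
        rw [swap_mk_fix hr hj (by omega) (by omega), Zf_mk]
        -- abbreviations
        have hjr : r + 1 < d := Nat.lt_of_succ_lt hj
        have e1 : Z H p q (r + 1) (Nat.lt_of_succ_lt hj)
            = T H r hjr * Z H p q r (Nat.lt_of_succ_lt hjr) * T H r hjr := rfl
        have eT : T H r hr = T H r hjr := rfl
        set a := T H r hjr with ha
        set b := T H (r + 1) hj with hb
        set z0 := Z H p q r (Nat.lt_of_succ_lt hjr) with hz0
        have hbz : b * z0 = z0 * b := by
          have := IH r (by omega) (Nat.lt_of_succ_lt hjr) (r + 1) hj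
          rwa [swap_mk_fix hj (Nat.lt_of_succ_lt hjr) (by omega) (by omega), Zf_mk] at this
        have hbraid : a * b * a = b * a * b := by
          rw [ha, hb, T, T, ← map_mul, ← map_mul, ← map_mul, ← map_mul,
            swap_braid (fin_ne _ _ (by omega)) (fin_ne _ _ (by omega)) (fin_ne _ _ (by omega))]
        have braid' : ∀ X : H.carrier, a * (b * (a * X)) = b * (a * (b * X)) := by
          intro X
          calc a * (b * (a * X)) = a * b * a * X := by rw [mul_assoc, mul_assoc]
            _ = b * a * b * X := by rw [hbraid]
            _ = b * (a * (b * X)) := by rw [mul_assoc, mul_assoc]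
        have hbz' : ∀ X : H.carrier, b * (z0 * X) = z0 * (b * X) := by
          intro X
          calc b * (z0 * X) = b * z0 * X := by rw [mul_assoc]
            _ = z0 * b * X := by rw [hbz]
            _ = z0 * (b * X) := by rw [mul_assoc]
        rw [e0, e1, eT]
        -- goal : a * (b * (a * z0 * a) * b) = b * (a * z0 * a) * b * a
        simp only [mul_assoc]
        rw [braid', hbz']
        have hfin : b * (a * b) = a * (b * a) := by
          rw [← mul_assoc, ← hbraid, mul_assoc]
        rw [hfin]
      · -- disjoint commuting case
        have hdis : jp ≠ r ∧ jp ≠ r + 1 := by omega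
        rw [swap_mk_fix hr hj (by omega) (by omega), Zf_mk]
        have hcg : Commute (T H r hr) (T H jp hj) :=
          T_commute_group H hr hj (by omega) (by omega) (by omega)
        have hcz : Commute (T H r hr) (Z H p q jp (Nat.lt_of_succ_lt hj)) := by
          show _ = _
          have := IH jp (by omega) (Nat.lt_of_succ_lt hj) r hr
          rwa [swap_mk_fix hr (Nat.lt_of_succ_lt hj) (by omega) (by omega), Zf_mk] at this
        rw [e0]
        exact ((hcg.mul_right hcz).mul_right hcg).eq

end Zeta

end CycHecke
namespace CycHecke

section Comm

open Equiv

variable {F : Type*} [Field F] {d : ℕ} (H : DegAffineHecke F d) (p q : ℤ)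

lemma T_Zf_fin (r : ℕ) (hr : r + 1 < d) (j : Fin d) :
    T H r hr * Zf H p q j =
      Zf H p q (swap ⟨r, Nat.lt_of_succ_lt hr⟩ ⟨r + 1, hr⟩ j) * T H r hr := by
  have := T_Zf H p q j.1 j.2 r hr
  rwa [Fin.eta] at this

/-- C0' : conjugation of the ζ's by arbitrary group elements -/
lemma s_Zf (u : Equiv.Perm (Fin d)) (j : Fin d) :
    H.s u * Zf H p q j = Zf H p q (u j) * H.s u := by
  revert j
  refine perm_adjacent_induction
    (fun u => ∀ j, H.s u * Zf H p q j = Zf H p q (u j) * H.s u) ?_ ?_ ?_ u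
  · intro j; simp
  · intro u v hu hv j
    rw [map_mul, mul_assoc, hv, ← mul_assoc, hu, mul_assoc, Equiv.Perm.mul_apply]
  · intro r hr j
    exact T_Zf_fin H p q r hr j

/-- C1 : ζ_j commutes with x_m for j < m -/
lemma Zf_x_gt : ∀ (jv : ℕ) (hj : jv < d) (m : Fin d), jv < m.val →
    Z H p q jv hj * H.x m = H.x m * Z H p q jv hj := by
  intro jv
  induction jv with
  | zero =>
    intro hj m hm
    have hc : Commute (H.x m) (H.x ⟨0, hj⟩) := H.x_comm m ⟨0, hj⟩
    have hp : Commute (H.x m) ((p : ℤ) : H.carrier) := (Int.cast_commute p _).symm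
    have hq : Commute (H.x m) ((q : ℤ) : H.carrier) := (Int.cast_commute q _).symm
    exact ((hc.sub_right hp).mul_right (hc.sub_right hq)).eq.symm
  | succ jv IH =>
    intro hj m hm
    have hT : Commute (H.x m) (T H jv hj) :=
      (T_x_comm H jv hj m (by omega) (by omega)).symm
    have hZ : Commute (H.x m) (Z H p q jv (Nat.lt_of_succ_lt hj)) :=
      (IH (Nat.lt_of_succ_lt hj) m (by omega)).symm
    show Z H p q (jv + 1) hj * H.x m = H.x m * Z H p q (jv + 1) hj
    rw [show Z H p q (jv + 1) hj
      = T H jv hj * Z H p q jv (Nat.lt_of_succ_lt hj) * T H jv hj from rfl]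
    exact ((hT.mul_right hZ).mul_right hT).eq.symm

lemma Zf_x_gt_fin (j m : Fin d) (h : j < m) :
    Zf H p q j * H.x m = H.x m * Zf H p q j :=
  Zf_x_gt H p q j.1 j.2 m h

/-- span of the `ζ_l · s_w` -/
def Z0span : Submodule F H.carrier :=
  Submodule.span F {a | ∃ (l : Fin d) (w : Equiv.Perm (Fin d)), a = Zf H p q l * H.s w}

lemma Zs_mem_Z0span (l : Fin d) (w : Equiv.Perm (Fin d)) :
    Zf H p q l * H.s w ∈ Z0span H p q :=
  Submodule.subset_span ⟨l, w, rfl⟩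

lemma Z_mem_Z0span (l : Fin d) : Zf H p q l ∈ Z0span H p q := by
  have := Zs_mem_Z0span H p q l 1
  rwa [map_one, mul_one] at this

lemma Z0span_T_mem (r : ℕ) (hr : r + 1 < d) :
    ∀ v ∈ Z0span H p q, T H r hr * v ∈ Z0span H p q := by
  intro v hv
  have : Z0span H p q ≤ Submodule.comap (LinearMap.mulLeft F (T H r hr)) (Z0span H p q) := by
    rw [Z0span, Submodule.span_le]
    rintro a ⟨l, w, rfl⟩
    simp only [SetLike.mem_coe, Submodule.mem_comap, LinearMap.mulLeft_apply]
    rw [← mul_assoc, T_Zf_fin, mul_assoc, T, ← map_mul]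
    exact Zs_mem_Z0span H p q _ _
  exact this hv

lemma Z0span_mul_s_mem (u : Equiv.Perm (Fin d)) :
    ∀ v ∈ Z0span H p q, v * H.s u ∈ Z0span H p q := by
  intro v hv
  have : Z0span H p q ≤ Submodule.comap (LinearMap.mulRight F (H.s u)) (Z0span H p q) := by
    rw [Z0span, Submodule.span_le]
    rintro a ⟨l, w, rfl⟩
    simp only [SetLike.mem_coe, Submodule.mem_comap, LinearMap.mulRight_apply]
    rw [mul_assoc, ← map_mul]
    exact Zs_mem_Z0span H p q _ _
  exact this hv

lemma Z0span_T_conj_mem (r : ℕ) (hr : r + 1 < d) :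
    ∀ v ∈ Z0span H p q, T H r hr * v * T H r hr ∈ Z0span H p q :=
  fun v hv => Z0span_mul_s_mem H p q _ _ (Z0span_T_mem H p q r hr v hv)

/-- Cmix : all commutators [ζ_j, x_m] lie in the span of the ζ_l·s_w -/
lemma Cmix : ∀ (jv : ℕ) (hj : jv < d) (m : Fin d),
    Z H p q jv hj * H.x m - H.x m * Z H p q jv hj ∈ Z0span H p q := by
  intro jv
  induction jv with
  | zero =>
    intro hj m
    have hc : Commute (H.x m) (H.x ⟨0, hj⟩) := H.x_comm m ⟨0, hj⟩
    have hp : Commute (H.x m) ((p : ℤ) : H.carrier) := (Int.cast_commute p _).symm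
    have hq : Commute (H.x m) ((q : ℤ) : H.carrier) := (Int.cast_commute q _).symm
    have hcomm : Z H p q 0 hj * H.x m = H.x m * Z H p q 0 hj := by
      rw [show Z H p q 0 hj
        = (H.x ⟨0, hj⟩ - (p : H.carrier)) * (H.x ⟨0, hj⟩ - (q : H.carrier)) from rfl]
      exact ((hc.sub_right hp).mul_right (hc.sub_right hq)).eq.symm
    rw [hcomm, sub_self]
    exact Submodule.zero_mem _
  | succ jv IH =>
    intro hj m
    have hjv : jv < d := Nat.lt_of_succ_lt hj
    have e0 : Z H p q (jv + 1) hj = T H jv hj * Z H p q jv hjv * T H jv hj := rfl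
    have hTZmem : T H jv hj * Z H p q jv hjv ∈ Z0span H p q := by
      rw [show T H jv hj * Z H p q jv hjv
          = Zf H p q (Equiv.swap ⟨jv, hjv⟩ ⟨jv + 1, hj⟩ ⟨jv, hjv⟩) * T H jv hj from
        T_Zf H p q jv hjv jv hj, T]
      exact Zs_mem_Z0span H p q _ _
    have hZTmem : Z H p q jv hjv * T H jv hj ∈ Z0span H p q := by
      rw [show Z H p q jv hjv * T H jv hj
          = Zf H p q ⟨jv, hjv⟩ * H.s (Equiv.swap ⟨jv, hjv⟩ ⟨jv + 1, hj⟩) from rfl]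
      exact Zs_mem_Z0span H p q _ _
    by_cases hm1 : m.val = jv + 1
    · have hme : m = ⟨jv + 1, hj⟩ := by ext; simp [hm1]
      subst hme
      have hsucc := T_x_succ H jv hj
      have hself := T_x_self H jv hj
      have hD := IH hjv ⟨jv, hjv⟩
      have key : Z H p q (jv + 1) hj * H.x ⟨jv + 1, hj⟩
          - H.x ⟨jv + 1, hj⟩ * Z H p q (jv + 1) hj
          = T H jv hj * (Z H p q jv hjv * H.x ⟨jv, hjv⟩
              - H.x ⟨jv, hjv⟩ * Z H p q jv hjv) * T H jv hj
            + T H jv hj * Z H p q jv hjv - Z H p q jv hjv * T H jv hj := by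
        rw [e0]
        calc T H jv hj * Z H p q jv hjv * T H jv hj * H.x ⟨jv + 1, hj⟩
            - H.x ⟨jv + 1, hj⟩ * (T H jv hj * Z H p q jv hjv * T H jv hj)
            = T H jv hj * Z H p q jv hjv * (T H jv hj * H.x ⟨jv + 1, hj⟩)
              - H.x ⟨jv + 1, hj⟩ * (T H jv hj * Z H p q jv hjv * T H jv hj) := by
              noncomm_ring
          _ = T H jv hj * Z H p q jv hjv * (H.x ⟨jv, hjv⟩ * T H jv hj + 1)
              - H.x ⟨jv + 1, hj⟩ * (T H jv hj * Z H p q jv hjv * T H jv hj) := by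
              rw [hsucc]
          _ = T H jv hj * (Z H p q jv hjv * H.x ⟨jv, hjv⟩) * T H jv hj
              + T H jv hj * Z H p q jv hjv
              - H.x ⟨jv + 1, hj⟩ * (T H jv hj * Z H p q jv hjv * T H jv hj) := by
              noncomm_ring
          _ = T H jv hj * (Z H p q jv hjv * H.x ⟨jv, hjv⟩
                - H.x ⟨jv, hjv⟩ * Z H p q jv hjv) * T H jv hj
              + (T H jv hj * H.x ⟨jv, hjv⟩) * Z H p q jv hjv * T H jv hj
              + T H jv hj * Z H p q jv hjv
              - H.x ⟨jv + 1, hj⟩ * (T H jv hj * Z H p q jv hjv * T H jv hj) := by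
              noncomm_ring
          _ = T H jv hj * (Z H p q jv hjv * H.x ⟨jv, hjv⟩
                - H.x ⟨jv, hjv⟩ * Z H p q jv hjv) * T H jv hj
              + (H.x ⟨jv + 1, hj⟩ * T H jv hj - 1) * Z H p q jv hjv * T H jv hj
              + T H jv hj * Z H p q jv hjv
              - H.x ⟨jv + 1, hj⟩ * (T H jv hj * Z H p q jv hjv * T H jv hj) := by
              rw [hself]
          _ = T H jv hj * (Z H p q jv hjv * H.x ⟨jv, hjv⟩
                - H.x ⟨jv, hjv⟩ * Z H p q jv hjv) * T H jv hj
              + T H jv hj * Z H p q jv hjv - Z H p q jv hjv * T H jv hj := by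
              noncomm_ring
      rw [key]
      refine Submodule.sub_mem _ (Submodule.add_mem _ ?_ hTZmem) hZTmem
      exact Z0span_T_conj_mem H p q jv hj _ hD
    by_cases hm2 : m.val = jv
    · have hme : m = ⟨jv, hjv⟩ := by ext; simp [hm2]
      subst hme
      have hsucc := T_x_succ H jv hj
      have hself := T_x_self H jv hj
      have hcomm : Z H p q jv hjv * H.x ⟨jv + 1, hj⟩
          = H.x ⟨jv + 1, hj⟩ * Z H p q jv hjv := Zf_x_gt H p q jv hjv ⟨jv + 1, hj⟩ (by simp)
      have key : Z H p q (jv + 1) hj * H.x ⟨jv, hjv⟩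
          - H.x ⟨jv, hjv⟩ * Z H p q (jv + 1) hj
          = Z H p q jv hjv * T H jv hj - T H jv hj * Z H p q jv hjv := by
        rw [e0]
        calc T H jv hj * Z H p q jv hjv * T H jv hj * H.x ⟨jv, hjv⟩
            - H.x ⟨jv, hjv⟩ * (T H jv hj * Z H p q jv hjv * T H jv hj)
            = T H jv hj * Z H p q jv hjv * (T H jv hj * H.x ⟨jv, hjv⟩)
              - H.x ⟨jv, hjv⟩ * (T H jv hj * Z H p q jv hjv * T H jv hj) := by
              noncomm_ring
          _ = T H jv hj * Z H p q jv hjv * (H.x ⟨jv + 1, hj⟩ * T H jv hj - 1)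
              - H.x ⟨jv, hjv⟩ * (T H jv hj * Z H p q jv hjv * T H jv hj) := by
              rw [hself]
          _ = T H jv hj * (Z H p q jv hjv * H.x ⟨jv + 1, hj⟩) * T H jv hj
              - T H jv hj * Z H p q jv hjv
              - H.x ⟨jv, hjv⟩ * (T H jv hj * Z H p q jv hjv * T H jv hj) := by
              noncomm_ring
          _ = (T H jv hj * H.x ⟨jv + 1, hj⟩) * Z H p q jv hjv * T H jv hj
              - T H jv hj * Z H p q jv hjv
              - H.x ⟨jv, hjv⟩ * (T H jv hj * Z H p q jv hjv * T H jv hj) := by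
              rw [hcomm]; noncomm_ring
          _ = (H.x ⟨jv, hjv⟩ * T H jv hj + 1) * Z H p q jv hjv * T H jv hj
              - T H jv hj * Z H p q jv hjv
              - H.x ⟨jv, hjv⟩ * (T H jv hj * Z H p q jv hjv * T H jv hj) := by
              rw [hsucc]
          _ = Z H p q jv hjv * T H jv hj - T H jv hj * Z H p q jv hjv := by
              noncomm_ring
      rw [key]
      exact Submodule.sub_mem _ hZTmem hTZmem
    · have hxT : T H jv hj * H.x m = H.x m * T H jv hj := T_x_comm H jv hj m hm2 hm1
      have hD := IH hjv m
      have key : Z H p q (jv + 1) hj * H.x m - H.x m * Z H p q (jv + 1) hj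
          = T H jv hj * (Z H p q jv hjv * H.x m - H.x m * Z H p q jv hjv) * T H jv hj := by
        rw [e0]
        calc T H jv hj * Z H p q jv hjv * T H jv hj * H.x m
            - H.x m * (T H jv hj * Z H p q jv hjv * T H jv hj)
            = T H jv hj * Z H p q jv hjv * (T H jv hj * H.x m)
              - H.x m * (T H jv hj * Z H p q jv hjv * T H jv hj) := by noncomm_ring
          _ = T H jv hj * Z H p q jv hjv * (H.x m * T H jv hj)
              - H.x m * (T H jv hj * Z H p q jv hjv * T H jv hj) := by rw [hxT]
          _ = T H jv hj * Z H p q jv hjv * (H.x m * T H jv hj)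
              - H.x m * (T H jv hj * (Z H p q jv hjv * T H jv hj)) := by noncomm_ring
          _ = T H jv hj * Z H p q jv hjv * (H.x m * T H jv hj)
              - T H jv hj * (H.x m * (Z H p q jv hjv * T H jv hj)) := by
              rw [← mul_assoc (H.x m), ← hxT]; noncomm_ring
          _ = T H jv hj * (Z H p q jv hjv * H.x m - H.x m * Z H p q jv hjv) * T H jv hj := by
              noncomm_ring
      rw [key]
      exact Z0span_T_conj_mem H p q jv hj _ hD

end Comm

end CycHecke
namespace CycHecke

section Ideal

open Equiv

variable {F : Type*} [Field F] {d : ℕ} (H : DegAffineHecke F d) (p q : ℤ)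

/-- span of the pure group elements -/
def G0span : Submodule F H.carrier :=
  Submodule.span F {a | ∃ w : Equiv.Perm (Fin d), a = H.s w}

/-- span of elements of x-degree at most 1 -/
def F1span : Submodule F H.carrier :=
  Submodule.span F {a | ∃ w : Equiv.Perm (Fin d), a = H.s w ∨ ∃ m : Fin d, a = H.x m * H.s w}

lemma s_mem_F1 (w : Equiv.Perm (Fin d)) : H.s w ∈ F1span H :=
  Submodule.subset_span ⟨w, Or.inl rfl⟩

lemma xs_mem_F1 (m : Fin d) (w : Equiv.Perm (Fin d)) : H.x m * H.s w ∈ F1span H :=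
  Submodule.subset_span ⟨w, Or.inr ⟨m, rfl⟩⟩

lemma one_mem_F1 : (1 : H.carrier) ∈ F1span H := by
  have := s_mem_F1 H 1; rwa [map_one] at this

lemma x_mem_F1 (m : Fin d) : H.x m ∈ F1span H := by
  have := xs_mem_F1 H m 1; rwa [map_one, mul_one] at this

lemma F1_T_conj (r : ℕ) (hr : r + 1 < d) :
    ∀ v ∈ F1span H, T H r hr * v * T H r hr ∈ F1span H := by
  intro v hv
  have : F1span H ≤ Submodule.comap
      ((LinearMap.mulRight F (T H r hr)).comp (LinearMap.mulLeft F (T H r hr))) (F1span H) := by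
    rw [F1span, Submodule.span_le]
    rintro a ⟨w, (rfl | ⟨m, rfl⟩)⟩
    · simp only [SetLike.mem_coe, Submodule.mem_comap, LinearMap.coe_comp, Function.comp_apply,
        LinearMap.mulLeft_apply, LinearMap.mulRight_apply]
      rw [T, ← map_mul, ← map_mul]
      exact s_mem_F1 H _
    · simp only [SetLike.mem_coe, Submodule.mem_comap, LinearMap.coe_comp, Function.comp_apply,
        LinearMap.mulLeft_apply, LinearMap.mulRight_apply]
      by_cases hm1 : m.val = r
      · have hme : m = ⟨r, Nat.lt_of_succ_lt hr⟩ := by ext; simp [hm1]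
        subst hme
        have : T H r hr * (H.x ⟨r, Nat.lt_of_succ_lt hr⟩ * H.s w) * T H r hr
            = H.x ⟨r + 1, hr⟩ * H.s (Equiv.swap ⟨r, Nat.lt_of_succ_lt hr⟩ ⟨r + 1, hr⟩
                * w * Equiv.swap ⟨r, Nat.lt_of_succ_lt hr⟩ ⟨r + 1, hr⟩)
              - H.s (w * Equiv.swap ⟨r, Nat.lt_of_succ_lt hr⟩ ⟨r + 1, hr⟩) := by
          simp only [map_mul]
          rw [show H.s (Equiv.swap ⟨r, Nat.lt_of_succ_lt hr⟩ ⟨r + 1, hr⟩) = T H r hr from rfl,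
            ← mul_assoc, T_x_self H r hr]
          noncomm_ring
        rw [this]
        exact Submodule.sub_mem _ (xs_mem_F1 H _ _) (s_mem_F1 H _)
      by_cases hm2 : m.val = r + 1
      · have hme : m = ⟨r + 1, hr⟩ := by ext; simp [hm2]
        subst hme
        have : T H r hr * (H.x ⟨r + 1, hr⟩ * H.s w) * T H r hr
            = H.x ⟨r, Nat.lt_of_succ_lt hr⟩ * H.s (Equiv.swap ⟨r, Nat.lt_of_succ_lt hr⟩
                  ⟨r + 1, hr⟩ * w * Equiv.swap ⟨r, Nat.lt_of_succ_lt hr⟩ ⟨r + 1, hr⟩)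
              + H.s (w * Equiv.swap ⟨r, Nat.lt_of_succ_lt hr⟩ ⟨r + 1, hr⟩) := by
          simp only [map_mul]
          rw [show H.s (Equiv.swap ⟨r, Nat.lt_of_succ_lt hr⟩ ⟨r + 1, hr⟩) = T H r hr from rfl,
            ← mul_assoc, T_x_succ H r hr]
          noncomm_ring
        rw [this]
        exact Submodule.add_mem _ (xs_mem_F1 H _ _) (s_mem_F1 H _)
      · have : T H r hr * (H.x m * H.s w) * T H r hr
            = H.x m * H.s (Equiv.swap ⟨r, Nat.lt_of_succ_lt hr⟩ ⟨r + 1, hr⟩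
                * w * Equiv.swap ⟨r, Nat.lt_of_succ_lt hr⟩ ⟨r + 1, hr⟩) := by
          simp only [map_mul]
          rw [show H.s (Equiv.swap ⟨r, Nat.lt_of_succ_lt hr⟩ ⟨r + 1, hr⟩) = T H r hr from rfl,
            ← mul_assoc, T_x_comm H r hr m hm1 hm2]
          noncomm_ring
        rw [this]
        exact xs_mem_F1 H _ _
  exact this hv

/-- A1 : ζ_j − x_j² has x-degree at most 1 -/
lemma Z_sub_sq_mem : ∀ (jv : ℕ) (hj : jv < d),
    Z H p q jv hj - (H.x ⟨jv, hj⟩) ^ 2 ∈ F1span H := by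
  intro jv
  induction jv with
  | zero =>
    intro hj
    set x0 := H.x ⟨0, hj⟩ with hx0
    have hqc : ((q : ℤ) : H.carrier) * x0 = x0 * ((q : ℤ) : H.carrier) :=
      (Int.cast_commute q x0).eq
    have key : Z H p q 0 hj - x0 ^ 2
        = ((-(p + q) : ℤ) : H.carrier) * x0 + (((p * q) : ℤ) : H.carrier) * 1 := by
      rw [show Z H p q 0 hj = (x0 - (p : H.carrier)) * (x0 - (q : H.carrier)) from rfl]
      rw [show (x0 - (p : H.carrier)) * (x0 - (q : H.carrier))
          = x0 * x0 - x0 * (q : H.carrier) - (p : H.carrier) * x0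
            + (p : H.carrier) * (q : H.carrier) from by noncomm_ring]
      rw [← hqc]
      push_cast
      noncomm_ring
    rw [key]
    have h1 : ((-(p + q) : ℤ) : H.carrier) * x0 = ((-(p + q) : ℤ) : F) • x0 := by
      rw [Algebra.smul_def, map_intCast]
    have h2 : (((p * q) : ℤ) : H.carrier) * 1 = (((p * q) : ℤ) : F) • (1 : H.carrier) := by
      rw [Algebra.smul_def, map_intCast]
    rw [h1, h2]
    exact Submodule.add_mem _ (Submodule.smul_mem _ _ (x_mem_F1 H _))
      (Submodule.smul_mem _ _ (one_mem_F1 H))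
  | succ jv IH =>
    intro hj
    have hjv : jv < d := Nat.lt_of_succ_lt hj
    set Tv := T H jv hj with hTv
    set xj := H.x ⟨jv, hjv⟩ with hxj
    set xj1 := H.x ⟨jv + 1, hj⟩ with hxj1
    have hsucc : Tv * xj1 = xj * Tv + 1 := T_x_succ H jv hj
    have hself : Tv * xj = xj1 * Tv - 1 := T_x_self H jv hj
    have hsq : Tv * Tv = 1 := T_sq H jv hj
    set E := Z H p q jv hjv - xj ^ 2 with hE
    have hZ : Z H p q jv hjv = xj ^ 2 + E := by rw [hE]; abel
    have key : Z H p q (jv + 1) hj - xj1 ^ 2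
        = - (xj1 * Tv) - xj * Tv + Tv * E * Tv := by
      rw [show Z H p q (jv + 1) hj = Tv * Z H p q jv hjv * Tv from rfl, hZ]
      have expand : Tv * (xj ^ 2 + E) * Tv = Tv * xj * xj * Tv + Tv * E * Tv := by
        noncomm_ring
      rw [expand, hself]
      have : (xj1 * Tv - 1) * xj * Tv = xj1 * (Tv * xj) * Tv - xj * Tv := by noncomm_ring
      rw [this, hself]
      have : xj1 * (xj1 * Tv - 1) * Tv = xj1 * xj1 * (Tv * Tv) - xj1 * Tv := by noncomm_ring
      rw [this, hsq]
      noncomm_ring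
    rw [key]
    refine Submodule.add_mem _ (Submodule.sub_mem _ (Submodule.neg_mem _ ?_) ?_) ?_
    · rw [hTv]; exact xs_mem_F1 H _ _
    · rw [hTv]; exact xs_mem_F1 H _ _
    · exact F1_T_conj H jv hj E (by rw [hE]; exact IH hjv)

lemma s_mem_G0 (w : Equiv.Perm (Fin d)) : H.s w ∈ G0span H :=
  Submodule.subset_span ⟨w, rfl⟩

lemma one_mem_G0 : (1 : H.carrier) ∈ G0span H := by
  have := s_mem_G0 H 1; rwa [map_one] at this

/-- pushing a variable through a group element -/
lemma G0_s_mul (u : Equiv.Perm (Fin d)) : ∀ g ∈ G0span H, H.s u * g ∈ G0span H := by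
  intro g hg
  have : G0span H ≤ Submodule.comap (LinearMap.mulLeft F (H.s u)) (G0span H) := by
    rw [G0span, Submodule.span_le]
    rintro a ⟨w, rfl⟩
    simp only [SetLike.mem_coe, Submodule.mem_comap, LinearMap.mulLeft_apply]
    rw [← map_mul]
    exact Submodule.subset_span ⟨_, rfl⟩
  exact this hg

lemma G0_mul_s (u : Equiv.Perm (Fin d)) : ∀ g ∈ G0span H, g * H.s u ∈ G0span H := by
  intro g hg
  have : G0span H ≤ Submodule.comap (LinearMap.mulRight F (H.s u)) (G0span H) := by
    rw [G0span, Submodule.span_le]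
    rintro a ⟨w, rfl⟩
    simp only [SetLike.mem_coe, Submodule.mem_comap, LinearMap.mulRight_apply]
    rw [← map_mul]
    exact Submodule.subset_span ⟨_, rfl⟩
  exact this hg

lemma s_x_push (u : Equiv.Perm (Fin d)) (m : Fin d) :
    H.s u * H.x m - H.x (u m) * H.s u ∈ G0span H := by
  revert m
  refine perm_adjacent_induction
    (fun u => ∀ m, H.s u * H.x m - H.x (u m) * H.s u ∈ G0span H) ?_ ?_ ?_ u
  · intro m
    simp only [map_one, one_mul, mul_one, Equiv.Perm.one_apply, sub_self]
    exact Submodule.zero_mem _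
  · intro u v hu hv m
    have hv' := hv m
    have hu' := hu (v m)
    have key : H.s (u * v) * H.x m - H.x ((u * v) m) * H.s (u * v)
        = H.s u * (H.s v * H.x m - H.x (v m) * H.s v)
          + (H.s u * H.x (v m) - H.x (u (v m)) * H.s u) * H.s v := by
      rw [map_mul, Equiv.Perm.mul_apply]
      noncomm_ring
    rw [key]
    exact Submodule.add_mem _ (G0_s_mul H u _ hv') (G0_mul_s H v _ hu')
  · intro r hr m
    by_cases hm1 : m.val = r
    · have hme : m = ⟨r, Nat.lt_of_succ_lt hr⟩ := by ext; simp [hm1]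
      subst hme
      rw [show H.s (Equiv.swap ⟨r, Nat.lt_of_succ_lt hr⟩ ⟨r + 1, hr⟩) = T H r hr from rfl]
      rw [swap_mk_left hr (Nat.lt_of_succ_lt hr), T_x_self H r hr]
      have : H.x ⟨r + 1, hr⟩ * T H r hr - 1 - H.x ⟨r + 1, hr⟩ * T H r hr
          = -(1 : H.carrier) := by abel
      rw [this]
      exact Submodule.neg_mem _ (one_mem_G0 H)
    by_cases hm2 : m.val = r + 1
    · have hme : m = ⟨r + 1, hr⟩ := by ext; simp [hm2]
      subst hme
      rw [show H.s (Equiv.swap ⟨r, Nat.lt_of_succ_lt hr⟩ ⟨r + 1, hr⟩) = T H r hr from rfl]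
      rw [swap_mk_right hr hr, T_x_succ H r hr]
      have : H.x ⟨r, Nat.lt_of_succ_lt hr⟩ * T H r hr + 1
          - H.x ⟨r, Nat.lt_of_succ_lt hr⟩ * T H r hr = (1 : H.carrier) := by abel
      rw [this]
      exact one_mem_G0 H
    · rw [show H.s (Equiv.swap ⟨r, Nat.lt_of_succ_lt hr⟩ ⟨r + 1, hr⟩) = T H r hr from rfl]
      rw [swap_mk_fix hr m.isLt hm1 hm2, Fin.eta, T_x_comm H r hr m hm1 hm2, sub_self]
      exact Submodule.zero_mem _

end Ideal

end CycHecke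
namespace CycHecke

section Jideal

open Equiv

variable {F : Type*} [Field F] {d : ℕ} (H : DegAffineHecke F d) (p q : ℤ)

/-- generators of the cyclotomic ideal -/
def Gen (σ : Fin d → ℕ) (l : Fin d) (w : Equiv.Perm (Fin d)) : H.carrier :=
  XM H σ * Zf H p q l * H.s w

/-- the two-sided ideal generated by the cyclotomic relation, as a span -/
def Jspan : Submodule F H.carrier :=
  Submodule.span F {a | ∃ σ l w, a = Gen H p q σ l w}

lemma Gen_mem (σ : Fin d → ℕ) (l : Fin d) (w : Equiv.Perm (Fin d)) :
    Gen H p q σ l w ∈ Jspan H p q :=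
  Submodule.subset_span ⟨σ, l, w, rfl⟩

lemma pbw_XM (τ : Fin d → ℕ) (u : Equiv.Perm (Fin d)) :
    H.pbw (τ, u) = XM H τ * H.s u := H.pbw_eq τ u

lemma mem_of_pbw (K : Submodule F H.carrier)
    (h : ∀ τ u, XM H τ * H.s u ∈ K) (a : H.carrier) : a ∈ K := by
  have h2 : Set.range H.pbw ⊆ (K : Set H.carrier) := by
    rintro _ ⟨⟨τ, u⟩, rfl⟩
    rw [pbw_XM]
    exact h τ u
  have h3 := H.pbw.span_eq
  exact (Submodule.span_le.mpr h2) (h3 ▸ Submodule.mem_top)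

lemma XM_mul_x (σ : Fin d → ℕ) (k : Fin d) :
    XM H σ * H.x k = XM H (σ + Pi.single k 1) := by
  rw [← XM_single_one H k, XM_mul]

lemma b_mul_Zs_mem (b : H.carrier) (l : Fin d) (w : Equiv.Perm (Fin d)) :
    b * (Zf H p q l * H.s w) ∈ Jspan H p q := by
  refine mem_of_pbw H (Submodule.comap (LinearMap.mulRight F (Zf H p q l * H.s w))
    (Jspan H p q)) ?_ b
  intro τ u
  simp only [Submodule.mem_comap, LinearMap.mulRight_apply]
  have : XM H τ * H.s u * (Zf H p q l * H.s w) = Gen H p q τ (u l) (u * w) := by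
    rw [Gen, map_mul, mul_assoc (XM H τ), ← mul_assoc (H.s u), s_Zf H p q u l]
    noncomm_ring
  rw [this]
  exact Gen_mem H p q _ _ _

lemma J_mul_left (a : H.carrier) : ∀ v ∈ Jspan H p q, a * v ∈ Jspan H p q := by
  intro v hv
  have : Jspan H p q ≤ Submodule.comap (LinearMap.mulLeft F a) (Jspan H p q) := by
    rw [Jspan, Submodule.span_le]
    rintro _ ⟨σ, l, w, rfl⟩
    simp only [SetLike.mem_coe, Submodule.mem_comap, LinearMap.mulLeft_apply]
    have : a * Gen H p q σ l w = (a * XM H σ) * (Zf H p q l * H.s w) := by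
      rw [Gen]; noncomm_ring
    rw [this]
    exact b_mul_Zs_mem H p q _ _ _
  exact this hv

lemma J_mul_s (u : Equiv.Perm (Fin d)) : ∀ v ∈ Jspan H p q, v * H.s u ∈ Jspan H p q := by
  intro v hv
  have : Jspan H p q ≤ Submodule.comap (LinearMap.mulRight F (H.s u)) (Jspan H p q) := by
    rw [Jspan, Submodule.span_le]
    rintro _ ⟨σ, l, w, rfl⟩
    simp only [SetLike.mem_coe, Submodule.mem_comap, LinearMap.mulRight_apply]
    have : Gen H p q σ l w * H.s u = Gen H p q σ l (w * u) := by
      rw [Gen, Gen, map_mul]; noncomm_ring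
    rw [this]
    exact Gen_mem H p q _ _ _
  exact this hv

lemma XM_Z0_s_mem (σ : Fin d → ℕ) (w' : Equiv.Perm (Fin d)) :
    ∀ g ∈ Z0span H p q, XM H σ * g * H.s w' ∈ Jspan H p q := by
  intro g hg
  have : Z0span H p q ≤ Submodule.comap
      ((LinearMap.mulRight F (H.s w')).comp (LinearMap.mulLeft F (XM H σ)))
      (Jspan H p q) := by
    rw [Z0span, Submodule.span_le]
    rintro _ ⟨l, u, rfl⟩
    simp only [SetLike.mem_coe, Submodule.mem_comap, LinearMap.coe_comp, Function.comp_apply,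
      LinearMap.mulLeft_apply, LinearMap.mulRight_apply]
    have : XM H σ * (Zf H p q l * H.s u) * H.s w' = Gen H p q σ l (u * w') := by
      rw [Gen, map_mul]; noncomm_ring
    rw [this]
    exact Gen_mem H p q _ _ _
  exact this hg

lemma XM_Z_G0_mem (σ : Fin d → ℕ) (l : Fin d) :
    ∀ g ∈ G0span H, XM H σ * Zf H p q l * g ∈ Jspan H p q := by
  intro g hg
  have : G0span H ≤ Submodule.comap
      (LinearMap.mulLeft F (XM H σ * Zf H p q l)) (Jspan H p q) := by
    rw [G0span, Submodule.span_le]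
    rintro _ ⟨u, rfl⟩
    simp only [SetLike.mem_coe, Submodule.mem_comap, LinearMap.mulLeft_apply]
    exact Gen_mem H p q σ l u
  exact this hg

lemma J_mul_x (m : Fin d) : ∀ v ∈ Jspan H p q, v * H.x m ∈ Jspan H p q := by
  intro v hv
  have : Jspan H p q ≤ Submodule.comap (LinearMap.mulRight F (H.x m)) (Jspan H p q) := by
    rw [Jspan, Submodule.span_le]
    rintro _ ⟨σ, l, w, rfl⟩
    simp only [SetLike.mem_coe, Submodule.mem_comap, LinearMap.mulRight_apply]
    have key : Gen H p q σ l w * H.x m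
        = XM H (σ + Pi.single (w m) 1) * Zf H p q l * H.s w
          + XM H σ * (Zf H p q l * H.x (w m) - H.x (w m) * Zf H p q l) * H.s w
          + XM H σ * Zf H p q l * (H.s w * H.x m - H.x (w m) * H.s w) := by
      rw [Gen, ← XM_mul_x H σ (w m)]
      noncomm_ring
    rw [key]
    refine Submodule.add_mem _ (Submodule.add_mem _ ?_ ?_) ?_
    · exact Gen_mem H p q _ _ _
    · exact XM_Z0_s_mem H p q σ w _ (Cmix H p q l.1 l.2 (w m))
    · exact XM_Z_G0_mem H p q σ l _ (s_x_push H w m)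
  exact this hv

lemma deg_sub_single {τ : Fin d → ℕ} {m : Fin d} (hm : τ m ≠ 0) :
    (∑ i, (τ - Pi.single m 1 : Fin d → ℕ) i) < ∑ i, τ i := by
  apply Finset.sum_lt_sum
  · intro i _
    by_cases him : i = m
    · subst him
      simp only [Pi.sub_apply, Pi.single_eq_same]
      omega
    · simp [Pi.sub_apply, Pi.single_eq_of_ne him]
  · exact ⟨m, Finset.mem_univ m, by simp only [Pi.sub_apply, Pi.single_eq_same]; omega⟩

lemma sub_single_add {τ : Fin d → ℕ} {m : Fin d} (hm : τ m ≠ 0) :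
    (τ - Pi.single m 1 : Fin d → ℕ) + Pi.single m 1 = τ := by
  funext i
  by_cases him : i = m
  · subst him
    simp only [Pi.add_apply, Pi.sub_apply, Pi.single_eq_same]
    omega
  · simp [Pi.add_apply, Pi.sub_apply, Pi.single_eq_of_ne him]

lemma J_mul_XM (τ : Fin d → ℕ) : ∀ v ∈ Jspan H p q, v * XM H τ ∈ Jspan H p q := by
  suffices hs : ∀ (n : ℕ) (τ : Fin d → ℕ), (∑ i, τ i) ≤ n →
      ∀ v ∈ Jspan H p q, v * XM H τ ∈ Jspan H p q from hs _ τ le_rfl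
  intro n
  induction n using Nat.strong_induction_on with
  | _ n IH =>
    intro τ hτ v hv
    by_cases h0 : ∑ i, τ i = 0
    · have : τ = 0 := by
        funext i
        have := Finset.sum_eq_zero_iff.mp h0 i (Finset.mem_univ i)
        simpa using this
      rw [this, XM_zero, mul_one]
      exact hv
    · obtain ⟨m, _, hm⟩ := Finset.exists_ne_zero_of_sum_ne_zero h0
      have hXM : XM H τ = XM H (τ - Pi.single m 1) * H.x m := by
        rw [XM_mul_x, sub_single_add hm]
      rw [hXM, ← mul_assoc]
      refine J_mul_x H p q m _ ?_
      have hdeg := deg_sub_single (τ := τ) (m := m) hm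
      exact IH (∑ i, (τ - Pi.single m 1 : Fin d → ℕ) i) (by omega) _ le_rfl v hv

lemma J_mul_right (a : H.carrier) : ∀ v ∈ Jspan H p q, v * a ∈ Jspan H p q := by
  intro v hv
  refine mem_of_pbw H (Submodule.comap (LinearMap.mulLeft F v) (Jspan H p q)) ?_ a
  intro τ u
  simp only [Submodule.mem_comap, LinearMap.mulLeft_apply]
  rw [← mul_assoc]
  exact J_mul_s H p q u _ (J_mul_XM H p q τ v hv)

lemma z_mem_J (hd : 0 < d) :
    (H.x ⟨0, hd⟩ - (p : H.carrier)) * (H.x ⟨0, hd⟩ - (q : H.carrier)) ∈ Jspan H p q := by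
  have : (H.x ⟨0, hd⟩ - (p : H.carrier)) * (H.x ⟨0, hd⟩ - (q : H.carrier))
      = Gen H p q 0 ⟨0, hd⟩ 1 := by
    rw [Gen, XM_zero, map_one, one_mul, mul_one]
    rfl
  rw [this]
  exact Gen_mem H p q _ _ _

end Jideal

end CycHecke
namespace CycHecke

section Red

open Equiv

variable {F : Type*} [Field F] {d : ℕ} (H : DegAffineHecke F d) (p q : ℤ)

/-- generators of the ideal with coefficients of degree at most one -/
def J1span : Submodule F H.carrier :=
  Submodule.span F {a | ∃ (l : Fin d) (w : Equiv.Perm (Fin d)),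
    a = Zf H p q l * H.s w ∨ ∃ m : Fin d, a = H.x m * (Zf H p q l * H.s w)}

lemma Zs_mem_J1 (l : Fin d) (w : Equiv.Perm (Fin d)) :
    Zf H p q l * H.s w ∈ J1span H p q :=
  Submodule.subset_span ⟨l, w, Or.inl rfl⟩

lemma xZs_mem_J1 (m l : Fin d) (w : Equiv.Perm (Fin d)) :
    H.x m * (Zf H p q l * H.s w) ∈ J1span H p q :=
  Submodule.subset_span ⟨l, w, Or.inr ⟨m, rfl⟩⟩

lemma Z0_s_mem_J1 (w : Equiv.Perm (Fin d)) :
    ∀ g ∈ Z0span H p q, g * H.s w ∈ J1span H p q := by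
  intro g hg
  have : Z0span H p q ≤ Submodule.comap (LinearMap.mulRight F (H.s w)) (J1span H p q) := by
    rw [Z0span, Submodule.span_le]
    rintro _ ⟨l, u, rfl⟩
    simp only [SetLike.mem_coe, Submodule.mem_comap, LinearMap.mulRight_apply]
    rw [mul_assoc, ← map_mul]
    exact Zs_mem_J1 H p q _ _
  exact this hg

lemma F1_mul_Z_mem_J1 (j : Fin d) :
    ∀ v ∈ F1span H, v * Zf H p q j ∈ J1span H p q := by
  intro v hv
  have : F1span H ≤ Submodule.comap (LinearMap.mulRight F (Zf H p q j)) (J1span H p q) := by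
    rw [F1span, Submodule.span_le]
    rintro _ ⟨w, (rfl | ⟨m, rfl⟩)⟩
    · simp only [SetLike.mem_coe, Submodule.mem_comap, LinearMap.mulRight_apply]
      rw [s_Zf H p q w j]
      exact Zs_mem_J1 H p q _ _
    · simp only [SetLike.mem_coe, Submodule.mem_comap, LinearMap.mulRight_apply]
      rw [mul_assoc, s_Zf H p q w j, ← mul_assoc]
      have : H.x m * Zf H p q (w j) * H.s w = H.x m * (Zf H p q (w j) * H.s w) := by
        rw [mul_assoc]
      rw [this]
      exact xZs_mem_J1 H p q _ _ _
  exact this hv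

lemma Z_mul_F1_mem_J1 (k : Fin d) :
    ∀ v ∈ F1span H, Zf H p q k * v ∈ J1span H p q := by
  intro v hv
  have : F1span H ≤ Submodule.comap (LinearMap.mulLeft F (Zf H p q k)) (J1span H p q) := by
    rw [F1span, Submodule.span_le]
    rintro _ ⟨w, (rfl | ⟨m, rfl⟩)⟩
    · simp only [SetLike.mem_coe, Submodule.mem_comap, LinearMap.mulLeft_apply]
      exact Zs_mem_J1 H p q _ _
    · simp only [SetLike.mem_coe, Submodule.mem_comap, LinearMap.mulLeft_apply]
      have key : Zf H p q k * (H.x m * H.s w)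
          = H.x m * (Zf H p q k * H.s w)
            + (Zf H p q k * H.x m - H.x m * Zf H p q k) * H.s w := by
        noncomm_ring
      rw [key]
      refine Submodule.add_mem _ (xZs_mem_J1 H p q _ _ _) ?_
      exact Z0_s_mem_J1 H p q w _ (Cmix H p q k.1 k.2 m)
  exact this hv

/-- the S-pair identity -/
lemma spair (k j : Fin d) (hkj : k < j) :
    H.x k ^ 2 * Zf H p q j - H.x j ^ 2 * Zf H p q k ∈ J1span H p q := by
  have hC : Commute (Zf H p q k) (H.x j) := Zf_x_gt_fin H p q k j hkj
  have hC2 : Zf H p q k * H.x j ^ 2 = H.x j ^ 2 * Zf H p q k := (hC.pow_right 2).eq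
  have key : H.x k ^ 2 * Zf H p q j - H.x j ^ 2 * Zf H p q k
      = (H.x k ^ 2 - Zf H p q k) * Zf H p q j
        + Zf H p q k * (Zf H p q j - H.x j ^ 2)
        + (Zf H p q k * H.x j ^ 2 - H.x j ^ 2 * Zf H p q k) := by
    noncomm_ring
  rw [key, hC2, sub_self, add_zero]
  refine Submodule.add_mem _ ?_ ?_
  · refine F1_mul_Z_mem_J1 H p q j _ ?_
    have h1 := Z_sub_sq_mem H p q k.1 k.2
    rw [Fin.eta] at h1
    have h2 := Submodule.neg_mem _ h1
    rw [neg_sub] at h2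
    exact h2
  · refine Z_mul_F1_mem_J1 H p q k _ ?_
    have h1 := Z_sub_sq_mem H p q j.1 j.2
    rw [Fin.eta] at h1
    exact h1

end Red

end CycHecke
namespace CycHecke

section RedSpan

open Equiv

variable {F : Type*} [Field F] {d : ℕ} (H : DegAffineHecke F d) (p q : ℤ)

lemma sum_add_single {τ : Fin d → ℕ} {m : Fin d} {c : ℕ} :
    (∑ i, (τ + Pi.single m c : Fin d → ℕ) i) = (∑ i, τ i) + c := by
  have h1 : ∑ i, Pi.single m c i = c := by
    rw [Finset.sum_pi_single']
    simp
  rw [Finset.sum_congr rfl (fun i _ => Pi.add_apply τ (Pi.single m c) i),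
    Finset.sum_add_distrib, h1]

lemma sub_single_add_cancel' {τ : Fin d → ℕ} {m : Fin d} {c : ℕ} (h : c ≤ τ m) :
    (τ - Pi.single m c : Fin d → ℕ) + Pi.single m c = τ := by
  funext i
  by_cases him : i = m
  · subst him
    simp only [Pi.add_apply, Pi.sub_apply, Pi.single_eq_same]
    omega
  · simp [Pi.add_apply, Pi.sub_apply, Pi.single_eq_of_ne him]

lemma sum_sub_single {τ : Fin d → ℕ} {m : Fin d} {c : ℕ} (h : c ≤ τ m) :
    (∑ i, (τ - Pi.single m c : Fin d → ℕ) i) + c = ∑ i, τ i := by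
  have h2 := sum_add_single (τ := (τ - Pi.single m c : Fin d → ℕ)) (m := m) (c := c)
  rw [sub_single_add_cancel' h] at h2
  omega

/-- reduced generators -/
def Rset : Set H.carrier :=
  {a | ∃ σ l w, (∀ k : Fin d, k < l → σ k ≤ 1) ∧ a = Gen H p q σ l w}

def Jred : Submodule F H.carrier := Submodule.span F (Rset H p q)

lemma toRed : ∀ (n : ℕ) (σ : Fin d → ℕ) (l : Fin d) (w : Equiv.Perm (Fin d)),
    (∑ i, σ i) * d + l.val ≤ n → Gen H p q σ l w ∈ Jred H p q := by
  intro n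
  induction n using Nat.strong_induction_on with
  | _ n IH =>
    intro σ l w hn
    by_cases hred : ∀ k : Fin d, k < l → σ k ≤ 1
    · exact Submodule.subset_span ⟨σ, l, w, hred, rfl⟩
    · push_neg at hred
      obtain ⟨k, hkl, hσk⟩ := hred
      have hd : 0 < d := l.pos
      set σ' := (σ - Pi.single k 2 : Fin d → ℕ) with hσ'
      have hcanc : σ' + Pi.single k 2 = σ := sub_single_add_cancel' (by omega)
      have hsum : (∑ i, σ' i) + 2 = ∑ i, σ i := sum_sub_single (by omega)
      have hXM : XM H σ = XM H σ' * H.x k ^ 2 := by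
        rw [← XM_single H k 2, XM_mul, hcanc]
      have hdecomp : Gen H p q σ l w
          = XM H σ' * (H.x l ^ 2 * Zf H p q k) * H.s w
            + XM H σ' * (H.x k ^ 2 * Zf H p q l - H.x l ^ 2 * Zf H p q k) * H.s w := by
        rw [Gen, hXM]
        noncomm_ring
      have hmul2 : (∑ i, σ' i) * d + 2 * d = (∑ i, σ i) * d := by
        rw [← hsum]; ring
      rw [hdecomp]
      refine Submodule.add_mem _ ?_ ?_
      · -- main term
        have e1 : XM H σ' * (H.x l ^ 2 * Zf H p q k) * H.s w
            = Gen H p q (σ' + Pi.single l 2) k w := by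
          rw [Gen, ← XM_mul H σ' (Pi.single l 2), XM_single H l 2]
          noncomm_ring
        rw [e1]
        have hsum2 : (∑ i, (σ' + Pi.single l 2 : Fin d → ℕ) i) = ∑ i, σ i := by
          rw [sum_add_single]; omega
        refine IH ((∑ i, σ i) * d + k.val) (by omega) _ _ _ (by rw [hsum2])
      · -- junk term
        have hJ1 : ∀ v ∈ J1span H p q, XM H σ' * v * H.s w ∈ Jred H p q := by
          intro v hv
          have : J1span H p q ≤ Submodule.comap
              ((LinearMap.mulRight F (H.s w)).comp (LinearMap.mulLeft F (XM H σ')))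
              (Jred H p q) := by
            rw [J1span, Submodule.span_le]
            rintro _ ⟨l', u, (rfl | ⟨m, rfl⟩)⟩
            · simp only [SetLike.mem_coe, Submodule.mem_comap, LinearMap.coe_comp,
                Function.comp_apply, LinearMap.mulLeft_apply, LinearMap.mulRight_apply]
              have e2 : XM H σ' * (Zf H p q l' * H.s u) * H.s w
                  = Gen H p q σ' l' (u * w) := by
                rw [Gen, map_mul]; noncomm_ring
              rw [e2]
              have hl' : l'.val < d := l'.isLt
              refine IH ((∑ i, σ' i) * d + l'.val) (by omega) _ _ _ le_rfl
            · simp only [SetLike.mem_coe, Submodule.mem_comap, LinearMap.coe_comp,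
                Function.comp_apply, LinearMap.mulLeft_apply, LinearMap.mulRight_apply]
              have e2 : XM H σ' * (H.x m * (Zf H p q l' * H.s u)) * H.s w
                  = Gen H p q (σ' + Pi.single m 1) l' (u * w) := by
                rw [Gen, map_mul, ← XM_mul_x H σ' m]
                noncomm_ring
              rw [e2]
              have hl' : l'.val < d := l'.isLt
              have hsum3 : (∑ i, (σ' + Pi.single m 1 : Fin d → ℕ) i) = (∑ i, σ' i) + 1 :=
                sum_add_single
              have hmul3 : ((∑ i, σ' i) + 1) * d + d = (∑ i, σ i) * d := by
                rw [← hsum]; ring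
              refine IH ((∑ i, (σ' + Pi.single m 1 : Fin d → ℕ) i) * d + l'.val)
                (by rw [hsum3]; omega) _ _ _ le_rfl
          exact this hv
        exact hJ1 _ (spair H p q k l hkl)

lemma J_le_Jred : Jspan H p q ≤ Jred H p q := by
  rw [Jspan, Submodule.span_le]
  rintro _ ⟨σ, l, w, rfl⟩
  exact toRed H p q ((∑ i, σ i) * d + l.val) σ l w le_rfl

/-- span of the reduced monomial-words -/
def B0span : Submodule F H.carrier :=
  Submodule.span F {a | ∃ σ w, (∀ i, σ i ≤ 1) ∧ a = XM H σ * H.s w}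

lemma top_split : ∀ a : H.carrier, a ∈ B0span H ⊔ Jspan H p q := by
  intro a
  refine mem_of_pbw H _ ?_ a
  suffices hs : ∀ (n : ℕ) (τ : Fin d → ℕ) (u : Equiv.Perm (Fin d)), (∑ i, τ i) ≤ n →
      XM H τ * H.s u ∈ B0span H ⊔ Jspan H p q from fun τ u => hs _ τ u le_rfl
  intro n
  induction n using Nat.strong_induction_on with
  | _ n IH =>
    intro τ u hτ
    by_cases hsq : ∀ i, τ i ≤ 1
    · exact Submodule.mem_sup_left (Submodule.subset_span ⟨τ, u, hsq, rfl⟩)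
    · push_neg at hsq
      obtain ⟨j, hj⟩ := hsq
      set τ' := (τ - Pi.single j 2 : Fin d → ℕ) with hτ'
      have hcanc : τ' + Pi.single j 2 = τ := sub_single_add_cancel' (by omega)
      have hsum : (∑ i, τ' i) + 2 = ∑ i, τ i := sum_sub_single (by omega)
      have hXM : XM H τ = XM H τ' * H.x j ^ 2 := by
        rw [← XM_single H j 2, XM_mul, hcanc]
      have hdecomp : XM H τ * H.s u
          = Gen H p q τ' j u + XM H τ' * (H.x j ^ 2 - Zf H p q j) * H.s u := by
        rw [Gen, hXM]
        noncomm_ring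
      rw [hdecomp]
      refine Submodule.add_mem _ (Submodule.mem_sup_right (Gen_mem H p q _ _ _)) ?_
      have hF1 : ∀ v ∈ F1span H, XM H τ' * v * H.s u ∈ B0span H ⊔ Jspan H p q := by
        intro v hv
        have : F1span H ≤ Submodule.comap
            ((LinearMap.mulRight F (H.s u)).comp (LinearMap.mulLeft F (XM H τ')))
            (B0span H ⊔ Jspan H p q) := by
          rw [F1span, Submodule.span_le]
          rintro _ ⟨w, (rfl | ⟨m, rfl⟩)⟩
          · simp only [SetLike.mem_coe, Submodule.mem_comap, LinearMap.coe_comp,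
              Function.comp_apply, LinearMap.mulLeft_apply, LinearMap.mulRight_apply]
            rw [mul_assoc, ← map_mul]
            exact IH (∑ i, τ' i) (by omega) τ' (w * u) le_rfl
          · simp only [SetLike.mem_coe, Submodule.mem_comap, LinearMap.coe_comp,
              Function.comp_apply, LinearMap.mulLeft_apply, LinearMap.mulRight_apply]
            have e2 : XM H τ' * (H.x m * H.s w) * H.s u
                = XM H (τ' + Pi.single m 1) * H.s (w * u) := by
              rw [map_mul, ← XM_mul_x H τ' m]
              noncomm_ring
            rw [e2]
            have hsum3 : (∑ i, (τ' + Pi.single m 1 : Fin d → ℕ) i) = (∑ i, τ' i) + 1 :=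
              sum_add_single
            exact IH (∑ i, (τ' + Pi.single m 1 : Fin d → ℕ) i) (by omega) _ (w * u) le_rfl
        exact this hv
      refine hF1 _ ?_
      have h1 := Z_sub_sq_mem H p q j.1 j.2
      rw [Fin.eta] at h1
      have h2 := Submodule.neg_mem _ h1
      rw [neg_sub] at h2
      exact h2

end RedSpan

end CycHecke
namespace CycHecke

section Indep

open Equiv

variable {F : Type*} [Field F] {d : ℕ} (H : DegAffineHecke F d) (p q : ℤ)

def GenT (γ : (Fin d → ℕ) × Fin d × Equiv.Perm (Fin d)) : H.carrier :=
  Gen H p q γ.1 γ.2.1 γ.2.2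

def RedT : Set ((Fin d → ℕ) × Fin d × Equiv.Perm (Fin d)) :=
  {γ | ∀ k : Fin d, k < γ.2.1 → γ.1 k ≤ 1}

def indT (γ : (Fin d → ℕ) × Fin d × Equiv.Perm (Fin d)) :
    (Fin d → ℕ) × Equiv.Perm (Fin d) :=
  (γ.1 + Pi.single γ.2.1 2, γ.2.2)

lemma indT_inj {γ γ' : (Fin d → ℕ) × Fin d × Equiv.Perm (Fin d)}
    (hγ : γ ∈ RedT) (hγ' : γ' ∈ RedT) (h : indT γ = indT γ') : γ = γ' := by
  obtain ⟨σ, l, w⟩ := γ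
  obtain ⟨σ', l', w'⟩ := γ'
  simp only [indT, Prod.mk.injEq] at h
  obtain ⟨hσ, hw⟩ := h
  have hll : l = l' := by
    by_contra hne
    rcases lt_or_gt_of_ne hne with hlt | hlt
    · have h1 := congrFun hσ l
      simp only [Pi.add_apply, Pi.single_eq_same, Pi.single_eq_of_ne hne,
        Pi.single_eq_of_ne (Ne.symm hne)] at h1
      have hred := hγ' l hlt
      simp only [RedT, Set.mem_setOf_eq] at hred
      omega
    · have h1 := congrFun hσ l'
      simp only [Pi.add_apply, Pi.single_eq_same, Pi.single_eq_of_ne hne,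
        Pi.single_eq_of_ne (Ne.symm hne)] at h1
      have hred := hγ l' hlt
      simp only [RedT, Set.mem_setOf_eq] at hred
      omega
  subst hll
  have hσσ : σ = σ' := by
    funext i
    have h1 := congrFun hσ i
    simp only [Pi.add_apply] at h1
    omega
  subst hσσ
  subst hw
  rfl

/-- degree filtration -/
def FXG (n : ℕ) : Submodule F H.carrier :=
  Submodule.span F {a | ∃ τ u, (∑ i, τ i) ≤ n ∧ a = XM H τ * H.s u}

lemma F1_XM_s (τ : Fin d → ℕ) (u : Equiv.Perm (Fin d)) :
    ∀ v ∈ F1span H, XM H τ * v * H.s u ∈ FXG H ((∑ i, τ i) + 1) := by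
  intro v hv
  have : F1span H ≤ Submodule.comap
      ((LinearMap.mulRight F (H.s u)).comp (LinearMap.mulLeft F (XM H τ)))
      (FXG H ((∑ i, τ i) + 1)) := by
    rw [F1span, Submodule.span_le]
    rintro _ ⟨w, (rfl | ⟨m, rfl⟩)⟩
    · simp only [SetLike.mem_coe, Submodule.mem_comap, LinearMap.coe_comp,
        Function.comp_apply, LinearMap.mulLeft_apply, LinearMap.mulRight_apply]
      rw [mul_assoc, ← map_mul]
      exact Submodule.subset_span ⟨τ, w * u, by omega, rfl⟩
    · simp only [SetLike.mem_coe, Submodule.mem_comap, LinearMap.coe_comp,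
        Function.comp_apply, LinearMap.mulLeft_apply, LinearMap.mulRight_apply]
      have e2 : XM H τ * (H.x m * H.s w) * H.s u
          = XM H (τ + Pi.single m 1) * H.s (w * u) := by
        rw [map_mul, ← XM_mul_x H τ m]
        noncomm_ring
      rw [e2]
      exact Submodule.subset_span ⟨τ + Pi.single m 1, w * u, by rw [sum_add_single], rfl⟩
  exact this hv

lemma Gen_expand (σ : Fin d → ℕ) (l : Fin d) (w : Equiv.Perm (Fin d)) :
    Gen H p q σ l w - XM H (σ + Pi.single l 2) * H.s w ∈ FXG H ((∑ i, σ i) + 1) := by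
  have hE : Zf H p q l - H.x l ^ 2 ∈ F1span H := by
    have h1 := Z_sub_sq_mem H p q l.1 l.2
    rwa [Fin.eta] at h1
  have key : Gen H p q σ l w - XM H (σ + Pi.single l 2) * H.s w
      = XM H σ * (Zf H p q l - H.x l ^ 2) * H.s w := by
    rw [Gen, ← XM_mul H σ (Pi.single l 2), XM_single H l 2]
    noncomm_ring
  rw [key]
  exact F1_XM_s H σ w _ hE

lemma coord_FXG {n : ℕ} {v : H.carrier} (hv : v ∈ FXG H n)
    (τ : Fin d → ℕ) (u : Equiv.Perm (Fin d)) (hτ : n < ∑ i, τ i) :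
    H.pbw.repr v (τ, u) = 0 := by
  have : FXG H n ≤ LinearMap.ker
      ((Finsupp.lapply (τ, u) :
          (((Fin d → ℕ) × Equiv.Perm (Fin d)) →₀ F) →ₗ[F] F).comp
        (H.pbw.repr : H.carrier →ₗ[F] _)) := by
    rw [FXG, Submodule.span_le]
    rintro _ ⟨ρ, w, hρ, rfl⟩
    simp only [SetLike.mem_coe, LinearMap.mem_ker, LinearMap.coe_comp, Function.comp_apply,
      Finsupp.lapply_apply, LinearEquiv.coe_coe]
    rw [← pbw_XM, H.pbw.repr_self, Finsupp.single_apply]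
    rw [if_neg]
    rintro h
    have : ρ = τ := (Prod.mk.injEq _ _ _ _ ▸ h).1
    subst this
    omega
  exact this hv

lemma coord_B0 {v : H.carrier} (hv : v ∈ B0span H)
    (τ : Fin d → ℕ) (u : Equiv.Perm (Fin d)) (hτ : ∃ i, 2 ≤ τ i) :
    H.pbw.repr v (τ, u) = 0 := by
  obtain ⟨i0, hi0⟩ := hτ
  have : B0span H ≤ LinearMap.ker
      ((Finsupp.lapply (τ, u) :
          (((Fin d → ℕ) × Equiv.Perm (Fin d)) →₀ F) →ₗ[F] F).comp
        (H.pbw.repr : H.carrier →ₗ[F] _)) := by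
    rw [B0span, Submodule.span_le]
    rintro _ ⟨ρ, w, hρ, rfl⟩
    simp only [SetLike.mem_coe, LinearMap.mem_ker, LinearMap.coe_comp, Function.comp_apply,
      Finsupp.lapply_apply, LinearEquiv.coe_coe]
    rw [← pbw_XM, H.pbw.repr_self, Finsupp.single_apply]
    rw [if_neg]
    rintro h
    have : ρ = τ := (Prod.mk.injEq _ _ _ _ ▸ h).1
    subst this
    have := hρ i0
    omega
  exact this hv

lemma coord_GenT (γ : (Fin d → ℕ) × Fin d × Equiv.Perm (Fin d))
    (i0 : (Fin d → ℕ) × Equiv.Perm (Fin d)) (hdeg : (∑ i, γ.1 i) + 1 < ∑ i, i0.1 i) :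
    H.pbw.repr (GenT H p q γ) i0
      = if indT γ = i0 then 1 else 0 := by
  obtain ⟨σ, l, w⟩ := γ
  obtain ⟨τ, u⟩ := i0
  have hexp := Gen_expand H p q σ l w
  have : GenT H p q (σ, l, w)
      = XM H (σ + Pi.single l 2) * H.s w
        + (Gen H p q σ l w - XM H (σ + Pi.single l 2) * H.s w) := by
    rw [GenT]; abel
  rw [this, map_add, Finsupp.add_apply]
  have h2 : H.pbw.repr (Gen H p q σ l w - XM H (σ + Pi.single l 2) * H.s w) (τ, u) = 0 :=
    coord_FXG H hexp τ u hdeg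
  rw [h2, add_zero, ← pbw_XM, H.pbw.repr_self, Finsupp.single_apply, indT]

end Indep

end CycHecke
namespace CycHecke

section Final

open Equiv

variable {F : Type*} [Field F] {d : ℕ} (H : DegAffineHecke F d) (p q : ℤ)

lemma indep_main : ∀ (n : ℕ) (c : ((Fin d → ℕ) × Fin d × Equiv.Perm (Fin d)) →₀ F),
    (↑c.support ⊆ RedT (d := d)) →
    (∀ γ ∈ c.support, (∑ i, γ.1 i) + 2 ≤ n) →
    Finsupp.linearCombination F (GenT H p q) c ∈ B0span H →
    Finsupp.linearCombination F (GenT H p q) c = 0 := by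
  intro n
  induction n using Nat.strong_induction_on with
  | _ n IH =>
    intro c hsupp hdeg hmem
    rcases Nat.lt_or_ge n 2 with hn | hn
    · have hc : c = 0 := by
        ext γ
        by_contra hne
        have hγ : γ ∈ c.support := Finsupp.mem_support_iff.mpr hne
        have := hdeg γ hγ
        omega
      rw [hc, map_zero]
    · have hzero : ∀ γ ∈ c.support, (∑ i, γ.1 i) + 2 = n → c γ = 0 := by
        intro γ0 hγ0 hd0
        have hsum_i0 : (∑ i, (indT γ0).1 i) = n := by
          rw [indT, sum_add_single]
          omega
        have hv0 : H.pbw.repr (Finsupp.linearCombination F (GenT H p q) c) (indT γ0) = 0 := by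
          have h2 : ∃ i, 2 ≤ (indT γ0).1 i := by
            refine ⟨γ0.2.1, ?_⟩
            simp [indT, Pi.single_eq_same]
          have := coord_B0 H hmem (indT γ0).1 (indT γ0).2 h2
          rwa [Prod.mk.eta] at this
        have hcalc : H.pbw.repr (Finsupp.linearCombination F (GenT H p q) c) (indT γ0)
            = c γ0 := by
          rw [Finsupp.linearCombination_apply, Finsupp.sum, map_sum,
            Finsupp.finset_sum_apply]
          rw [Finset.sum_eq_single γ0]
          · rw [map_smul, Finsupp.smul_apply,
              coord_GenT H p q γ0 (indT γ0) (by omega), if_pos rfl, smul_eq_mul, mul_one]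
          · intro b hb hbne
            rw [map_smul, Finsupp.smul_apply,
              coord_GenT H p q b (indT γ0) (by have := hdeg b hb; omega), if_neg ?_,
              smul_eq_mul, mul_zero]
            intro hcon
            exact hbne (indT_inj (hsupp hb) (hsupp hγ0) hcon)
          · intro hcon
            exact absurd hγ0 hcon
        rw [hv0] at hcalc
        exact hcalc.symm
      refine IH (n - 1) (by omega) c hsupp ?_ hmem
      intro γ hγ
      have h1 := hdeg γ hγ
      rcases Nat.lt_or_ge ((∑ i, γ.1 i) + 2) n with h2 | h2
      · omega
      · exfalso
        exact (Finsupp.mem_support_iff.mp hγ) (hzero γ hγ (by omega))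

lemma Rset_eq_image : Rset H p q = GenT H p q '' RedT := by
  ext a
  constructor
  · rintro ⟨σ, l, w, hred, rfl⟩
    exact ⟨(σ, l, w), hred, rfl⟩
  · rintro ⟨⟨σ, l, w⟩, hred, rfl⟩
    exact ⟨σ, l, w, hred, rfl⟩

lemma J_cap_B0 : ∀ v ∈ Jspan H p q, v ∈ B0span H → v = 0 := by
  intro v hv hb
  have hv2 : v ∈ Jred H p q := J_le_Jred H p q hv
  rw [Jred, Rset_eq_image] at hv2
  obtain ⟨c, hc, rfl⟩ := (Finsupp.mem_span_image_iff_linearCombination F).mp hv2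
  refine indep_main H p q ((c.support.sup fun γ => ∑ i, γ.1 i) + 2) c ?_ ?_ hb
  · exact (Finsupp.mem_supported F c).mp hc
  · intro γ hγ
    have h2 := Finset.le_sup (f := fun γ : (Fin d → ℕ) × Fin d × Equiv.Perm (Fin d) =>
      ∑ i, γ.1 i) hγ
    omega

/-- the ring congruence defined by the ideal -/
def Jcon : RingCon H.carrier where
  r a b := a - b ∈ Jspan H p q
  iseqv := by
    refine ⟨fun a => ?_, fun h => ?_, fun h1 h2 => ?_⟩
    · rw [sub_self]; exact Submodule.zero_mem _
    · have := Submodule.neg_mem _ h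
      rwa [neg_sub] at this
    · have := Submodule.add_mem _ h1 h2
      rwa [sub_add_sub_cancel] at this
  mul' := by
    intro a b c e h1 h2
    have h1' : a - b ∈ Jspan H p q := h1
    have h2' : c - e ∈ Jspan H p q := h2
    show a * c - b * e ∈ Jspan H p q
    have key : a * c - b * e = a * (c - e) + (a - b) * e := by noncomm_ring
    rw [key]
    exact Submodule.add_mem _ (J_mul_left H p q a _ h2') (J_mul_right H p q e _ h1')
  add' := by
    intro a b c e h1 h2
    have h1' : a - b ∈ Jspan H p q := h1
    have h2' : c - e ∈ Jspan H p q := h2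
    show a + c - (b + e) ∈ Jspan H p q
    have key : a + c - (b + e) = (a - b) + (c - e) := by abel
    rw [key]
    exact Submodule.add_mem _ h1' h2'

end Final

end CycHecke

open CycHecke in
/-- The degenerate cyclotomic Hecke algebra of level two
`H_d^{p,q} = H_d / ⟨(x_1 - p)(x_1 - q)⟩` has dimension `2^d · d!` over `F`. -/
theorem dim_cyclotomic_hecke_level_two (F : Type*) [Field F] [CharZero F]
    (d : ℕ) (hd : 0 < d) (p q : ℤ) (hpq : p ≤ q) (H : DegAffineHecke F d) :
    Module.finrank F (RingQuot (fun a b : H.carrier =>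
        a = (H.x ⟨0, hd⟩ - (p : H.carrier)) * (H.x ⟨0, hd⟩ - (q : H.carrier)) ∧ b = 0))
      = 2 ^ d * Nat.factorial d := by

  classical
  set rel : H.carrier → H.carrier → Prop := fun a b =>
    a = (H.x ⟨0, hd⟩ - (p : H.carrier)) * (H.x ⟨0, hd⟩ - (q : H.carrier)) ∧ b = 0 with hreldef
  -- `mk` kills the conjugates ζ_j
  have hmkZ : ∀ (j : ℕ) (hj : j < d),
      RingQuot.mkAlgHom F rel (Z H p q j hj) = 0 := by
    intro j
    induction j with
    | zero =>
      intro hj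
      have h0 : Z H p q 0 hj
          = (H.x ⟨0, hd⟩ - (p : H.carrier)) * (H.x ⟨0, hd⟩ - (q : H.carrier)) := rfl
      rw [h0]
      have h1 : rel ((H.x ⟨0, hd⟩ - (p : H.carrier)) * (H.x ⟨0, hd⟩ - (q : H.carrier))) 0 :=
        ⟨rfl, rfl⟩
      have := RingQuot.mkAlgHom_rel F h1
      rwa [map_zero] at this
    | succ j IH =>
      intro hj
      have h0 : Z H p q (j + 1) hj
          = T H j hj * Z H p q j (Nat.lt_of_succ_lt hj) * T H j hj := rfl
      rw [h0, map_mul, map_mul, IH (Nat.lt_of_succ_lt hj), mul_zero, zero_mul]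
  -- `mk` kills the ideal
  have hmkJ : ∀ v ∈ Jspan H p q, RingQuot.mkAlgHom F rel v = 0 := by
    intro v hv
    have hker : Jspan H p q ≤ LinearMap.ker (RingQuot.mkAlgHom F rel).toLinearMap := by
      rw [Jspan, Submodule.span_le]
      rintro _ ⟨σ, l, w, rfl⟩
      simp only [SetLike.mem_coe, LinearMap.mem_ker, AlgHom.toLinearMap_apply]
      rw [Gen, map_mul, map_mul]
      have h2 : RingQuot.mkAlgHom F rel (Zf H p q l) = 0 := hmkZ l.1 l.2
      rw [h2, mul_zero, zero_mul]
    exact hker hv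
  -- index family
  let ι : (Fin d → Fin 2) × Equiv.Perm (Fin d) → (Fin d → ℕ) × Equiv.Perm (Fin d) :=
    fun iw => (fun i => (iw.1 i : ℕ), iw.2)
  have hι : Function.Injective ι := by
    intro a b hab
    have h1 := congrArg Prod.fst hab
    have h2 := congrArg Prod.snd hab
    have h3 : a.1 = b.1 := by
      funext i
      have h4 : ((a.1 i : ℕ)) = ((b.1 i : ℕ)) := congrFun h1 i
      exact Fin.ext h4
    exact Prod.ext h3 h2
  let qb : (Fin d → Fin 2) × Equiv.Perm (Fin d) → RingQuot rel :=
    fun iw => RingQuot.mkAlgHom F rel (H.pbw (ι iw))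
  -- spanning
  have hspan : ⊤ ≤ Submodule.span F (Set.range qb) := by
    intro y _
    obtain ⟨a, rfl⟩ := RingQuot.mkAlgHom_surjective F rel y
    have hsplit := top_split H p q a
    rw [Submodule.mem_sup] at hsplit
    obtain ⟨b, hb, j, hj, rfl⟩ := hsplit
    rw [map_add, hmkJ j hj, add_zero]
    have hcm : B0span H ≤ Submodule.comap (RingQuot.mkAlgHom F rel).toLinearMap
        (Submodule.span F (Set.range qb)) := by
      rw [B0span, Submodule.span_le]
      rintro _ ⟨σ, w, hσ, rfl⟩
      simp only [SetLike.mem_coe, Submodule.mem_comap, AlgHom.toLinearMap_apply]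
      have hιeq : ι ((fun i => ⟨σ i, by have := hσ i; omega⟩), w) = (σ, w) := by
        refine Prod.ext ?_ rfl
        funext i
        rfl
      refine Submodule.subset_span ⟨((fun i => ⟨σ i, by have := hσ i; omega⟩), w), ?_⟩
      show RingQuot.mkAlgHom F rel (H.pbw _) = _
      rw [hιeq, pbw_XM]
    exact hcm hb
  -- the congruence quotient
  have hrelJ : ∀ ⦃x y⦄, rel x y → (Jcon H p q).mk' x = (Jcon H p q).mk' y := by
    rintro x y ⟨rfl, rfl⟩
    have hz : (Jcon H p q) ((H.x ⟨0, hd⟩ - (p : H.carrier)) * (H.x ⟨0, hd⟩ - (q : H.carrier))) 0 := by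
      show _ - (0 : H.carrier) ∈ Jspan H p q
      rw [sub_zero]
      exact z_mem_J H p q hd
    exact Quotient.sound' hz
  let Φ : RingQuot rel →+* (Jcon H p q).Quotient := RingQuot.lift ⟨(Jcon H p q).mk', hrelJ⟩
  have hΦmk : ∀ x : H.carrier, Φ (RingQuot.mkAlgHom F rel x) = (Jcon H p q).mk' x := by
    intro x
    have hcoe : RingQuot.mkAlgHom F rel x = RingQuot.mkRingHom rel x := by
      rw [← RingQuot.mkAlgHom_coe F rel]
      rfl
    rw [hcoe]
    exact RingQuot.lift_mkRingHom_apply _ _ x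
  -- linear independence
  have hli : LinearIndependent F qb := by
    rw [Fintype.linearIndependent_iff]
    intro g hg
    set a : H.carrier := ∑ iw, g iw • H.pbw (ι iw) with ha
    have hmka : RingQuot.mkAlgHom F rel a = 0 := by
      rw [ha, map_sum]
      simp only [map_smul]
      exact hg
    have h0 : (Jcon H p q).mk' a = (Jcon H p q).mk' 0 := by
      rw [← hΦmk, hmka, map_zero, map_zero]
    have haJ : a ∈ Jspan H p q := by
      have hcon : (Jcon H p q) a 0 := Quotient.exact' h0
      have h' : a - 0 ∈ Jspan H p q := hcon
      rwa [sub_zero] at h'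
    have haB : a ∈ B0span H := by
      rw [ha]
      refine Submodule.sum_mem _ fun iw _ => Submodule.smul_mem _ _ ?_
      rw [pbw_XM]
      exact Submodule.subset_span ⟨(ι iw).1, iw.2, fun i =>
        Nat.lt_succ_iff.mp (iw.1 i).isLt, rfl⟩
    have hzero : a = 0 := J_cap_B0 H p q a haJ haB
    have hli2 : LinearIndependent F (fun iw => H.pbw (ι iw)) :=
      H.pbw.linearIndependent.comp ι hι
    exact Fintype.linearIndependent_iff.mp hli2 g (by rw [← ha]; exact hzero)
  -- conclude
  let B : Module.Basis ((Fin d → Fin 2) × Equiv.Perm (Fin d)) F (RingQuot rel) := Module.Basis.mk hli hspan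
  rw [Module.finrank_eq_card_basis B, Fintype.card_prod, Fintype.card_perm, Fintype.card_fun,
    Fintype.card_fin, Fintype.card_fin]
end

section
/- The element (x_1 - p)(x_1 - q) of the degenerate affine Hecke algebra H_d acts as zero on the module V(λ_{p,q}) ⊗ V^{⊗d}, where V is the natural gl(m|n)-module; in particular the action of H_d factors through the level-two cyclotomic quotient H_d^{p,q}. -/
set_option linter.unusedSectionVars false
set_option linter.unusedVariables false
set_option maxHeartbeats 1000000


/-- Parity: `bar r = 0` for `r < m` and `1` otherwise (0-based indexing). -/
def bar (m : ℕ) (i : ℕ) : ℕ := if i < m then 0 else 1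

/-- The universal enveloping algebra `U(gl(m|n,F))`, encoded as an `F`-algebra `U`
generated by matrix units `e i j` satisfying the super-commutation relations, with the
PBW basis of ordered monomials in the `e i j` (odd generators appearing with exponent
at most one). -/
structure GLSuperUEA (F : Type*) [Field F] (m n : ℕ) where
  U : Type*
  [ringU : Ring U]
  [algU : Algebra F U]
  e : Fin (m + n) → Fin (m + n) → U
  supercomm : ∀ i j k l : Fin (m + n),
    e i j * e k l
        - ((-1 : F) ^ ((bar m i + bar m j) * (bar m k + bar m l))) • (e k l * e i j)
      = (if j = k then e i l else 0)
        - ((-1 : F) ^ ((bar m i + bar m j) * (bar m k + bar m l))) •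
            (if l = i then e k j else 0)
  gen : Algebra.adjoin F
      (Set.range fun pr : Fin (m + n) × Fin (m + n) => e pr.1 pr.2) = ⊤

attribute [instance] GLSuperUEA.ringU GLSuperUEA.algU

/-- The matrix unit `e_{ij}` acting on the natural module `V = F^{m+n}` (realised as
functions `Fin (m+n) → F`): `e_{ij} v_k = δ_{jk} v_i`. -/
def natAct (F : Type*) [Field F] (m n : ℕ) (i j : Fin (m + n)) :
    (Fin (m + n) → F) →ₗ[F] (Fin (m + n) → F) where
  toFun w := fun k => if k = i then w j else 0
  map_add' a b := by funext k; by_cases h : k = i <;> simp [h]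
  map_smul' c a := by funext k; by_cases h : k = i <;> simp [h]

namespace CycRelAux

variable {F : Type*} [Field F] {m n : ℕ}

/-- basis vector -/
def bv (F : Type*) [Field F] (m n : ℕ) (k : Fin (m + n)) : Fin (m + n) → F := Pi.single k 1

lemma sq_neg_one (a : ℕ) : ((-1 : F) ^ a) * ((-1 : F) ^ a) = 1 := by
  rw [← pow_add, ← two_mul, pow_mul, neg_one_sq, one_pow]

lemma neg_one_pow_congr {a b : ℕ} (h : a % 2 = b % 2) : ((-1 : F) ^ a) = (-1 : F) ^ b := by
  rw [neg_one_pow_eq_pow_mod_two, h, ← neg_one_pow_eq_pow_mod_two]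

lemma natAct_bv (i j k : Fin (m + n)) :
    natAct F m n i j (bv F m n k) = if j = k then bv F m n i else 0 := by
  funext l
  by_cases hj : j = k <;> by_cases hl : l = i <;>
    simp [natAct, bv, hj, hl, Pi.single_apply]

lemma tmul_ite {M : Type*} [AddCommGroup M] [Module F M]
    (w : M) (c : Prop) [Decidable c] (x y : Fin (m+n) → F) :
    (w ⊗ₜ[F] (if c then x else y)) = (if c then w ⊗ₜ[F] x else w ⊗ₜ[F] y) := by
  split <;> rfl

section WithModule

variable (S : GLSuperUEA F m n)
variable {M : Type*} [AddCommGroup M] [Module F M] [Module S.U M]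
  [IsScalarTower F S.U M] [SMulCommClass S.U F M]

/-- parity operator power -/
def Tp (σ : M →ₗ[F] M) (a : ℕ) : M →ₗ[F] M := if a % 2 = 1 then σ else LinearMap.id

variable {σ : M →ₗ[F] M}

omit S in
lemma Tp_Tp (hσσ : ∀ w : M, σ (σ w) = w) (a b : ℕ) (w : M) :
    Tp σ a (Tp σ b w) = Tp σ (a + b) w := by
  have hab : (a + b) % 2 = (a % 2 + b % 2) % 2 := by rw [Nat.add_mod]
  unfold Tp
  rcases Nat.mod_two_eq_zero_or_one a with ha | ha <;>
    rcases Nat.mod_two_eq_zero_or_one b with hb | hb <;>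
      simp [ha, hb, hab, hσσ]

omit S in
lemma Tp_congr {a b : ℕ} (h : a % 2 = b % 2) : Tp (σ := σ) a = Tp σ b := by
  unfold Tp; rw [h]

omit S in
lemma Tp_sigma (a : ℕ) (w : M) : Tp σ a (σ w) = σ (Tp σ a w) := by
  unfold Tp; split <;> rfl

lemma Tp_smul
    (hσe : ∀ (i j : Fin (m + n)) (w : M),
      σ (S.e i j • w) = ((-1 : F) ^ (bar m i + bar m j)) • (S.e i j • σ w))
    (a : ℕ) (i j : Fin (m + n)) (w : M) :
    Tp σ a (S.e i j • w)
      = ((-1 : F) ^ (a * (bar m i + bar m j))) • (S.e i j • Tp σ a w) := by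
  unfold Tp
  rcases Nat.mod_two_eq_zero_or_one a with ha | ha
  · have h1 : (-1 : F) ^ (a * (bar m i + bar m j)) = 1 := by
      rw [neg_one_pow_eq_pow_mod_two, Nat.mul_mod, ha, zero_mul, Nat.zero_mod, pow_zero]
    simp [ha, h1]
  · have h1 : (-1 : F) ^ (a * (bar m i + bar m j)) = (-1 : F) ^ (bar m i + bar m j) := by
      apply neg_one_pow_congr
      rw [Nat.mul_mod, ha, one_mul, Nat.mod_mod_of_dvd _ dvd_rfl]
    simp only [ha, if_pos]
    rw [h1]
    exact hσe i j w

lemma e_Tp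
    (hσe : ∀ (i j : Fin (m + n)) (w : M),
      σ (S.e i j • w) = ((-1 : F) ^ (bar m i + bar m j)) • (S.e i j • σ w))
    (a : ℕ) (i j : Fin (m + n)) (w : M) :
    S.e i j • Tp σ a w
      = ((-1 : F) ^ (a * (bar m i + bar m j))) • Tp σ a (S.e i j • w) := by
  rw [Tp_smul S hσe, smul_smul, sq_neg_one, one_smul]

/-- pointwise supercommutation -/
lemma super_smul (i j k l : Fin (m + n)) (u : M) :
    S.e i j • (S.e k l • u)
      = ((-1 : F) ^ ((bar m i + bar m j) * (bar m k + bar m l))) •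
          (S.e k l • (S.e i j • u))
        + (if j = k then S.e i l • u else 0)
        - ((-1 : F) ^ ((bar m i + bar m j) * (bar m k + bar m l))) •
            (if l = i then S.e k j • u else 0) := by
  have h := congrArg (fun z : S.U => z • u) (S.supercomm i j k l)
  simp only [sub_smul, smul_assoc, mul_smul, ite_smul, zero_smul] at h
  rw [sub_eq_iff_eq_add] at h
  rw [h]; abel

omit [IsScalarTower F S.U M] [SMulCommClass S.U F M] in
lemma tensor_ext {P : Type*} [AddCommGroup P] [Module F P]
    {L L' : TensorProduct F M (Fin (m + n) → F) →ₗ[F] P}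
    (h : ∀ (w : M) (k : Fin (m + n)),
      L (w ⊗ₜ[F] bv F m n k) = L' (w ⊗ₜ[F] bv F m n k)) : L = L' := by
  apply TensorProduct.ext
  apply LinearMap.ext; intro w
  apply Module.Basis.ext (Pi.basisFun F (Fin (m + n)))
  intro k
  simpa [bv] using h w k

/-- the Ω operator -/
noncomputable def Xop (σ : M →ₗ[F] M) :
    TensorProduct F M (Fin (m + n) → F) →ₗ[F] TensorProduct F M (Fin (m + n) → F) :=
  ∑ r : Fin (m + n), ∑ s : Fin (m + n),
    ((-1 : F) ^ bar m (s : ℕ)) •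
      TensorProduct.map
        ((DistribMulAction.toLinearMap F M (S.e r s)) ∘ₗ
          (if (bar m (s : ℕ) + bar m (r : ℕ)) % 2 = 1 then σ else LinearMap.id))
        (natAct F m n s r)

lemma Xop_tmul (σ : M →ₗ[F] M) (w : M) (k : Fin (m + n)) :
    Xop S σ (w ⊗ₜ[F] bv F m n k)
      = ∑ s : Fin (m + n), ((-1 : F) ^ bar m (s : ℕ)) •
          ((S.e k s • Tp σ (bar m (s : ℕ) + bar m (k : ℕ)) w) ⊗ₜ[F] bv F m n s) := by
  unfold Xop
  simp only [LinearMap.sum_apply, LinearMap.smul_apply, TensorProduct.map_tmul, natAct_bv]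
  rw [Finset.sum_comm]
  apply Finset.sum_congr rfl; intro s _
  rw [Finset.sum_eq_single k]
  · simp [Tp, DistribMulAction.toLinearMap, DistribSMul.toLinearMap_apply]
  · intro r _ hr
    rw [if_neg hr, TensorProduct.tmul_zero, smul_zero]
  · intro hk; exact absurd (Finset.mem_univ k) hk

lemma e_sigma_of
    (hσe : ∀ (i j : Fin (m + n)) (w : M),
      σ (S.e i j • w) = ((-1 : F) ^ (bar m i + bar m j)) • (S.e i j • σ w))
    (i j : Fin (m + n)) (u : M) :
    S.e i j • σ u = ((-1 : F) ^ (bar m i + bar m j)) • σ (S.e i j • u) := by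
  rw [hσe i j u, smul_smul, sq_neg_one, one_smul]

end WithModule

/-- parity operator on the natural module -/
def tau (F : Type*) [Field F] (m n : ℕ) :
    (Fin (m + n) → F) →ₗ[F] (Fin (m + n) → F) where
  toFun x := fun k => ((-1 : F) ^ bar m (k : ℕ)) * x k
  map_add' a b := by funext k; simp [mul_add]
  map_smul' c a := by funext k; simp; ring

lemma tau_bv (k : Fin (m + n)) :
    tau F m n (bv F m n k) = ((-1 : F) ^ bar m (k : ℕ)) • bv F m n k := by
  funext l
  by_cases hl : l = k <;> simp [tau, bv, Pi.single_apply, hl]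

section WithModule2

variable (S : GLSuperUEA F m n)
variable {M : Type*} [AddCommGroup M] [Module F M] [Module S.U M]
  [IsScalarTower F S.U M] [SMulCommClass S.U F M]
variable {σ : M →ₗ[F] M}

lemma C1
    (hσσ : ∀ w : M, σ (σ w) = w)
    (hσe : ∀ (i j : Fin (m + n)) (w : M),
      σ (S.e i j • w) = ((-1 : F) ^ (bar m i + bar m j)) • (S.e i j • σ w)) :
    Xop S σ ∘ₗ TensorProduct.map σ (tau F m n)
      = TensorProduct.map σ (tau F m n) ∘ₗ Xop S σ := by
  apply tensor_ext
  intro w k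
  rw [LinearMap.comp_apply, LinearMap.comp_apply, TensorProduct.map_tmul, tau_bv,
    TensorProduct.tmul_smul, map_smul, Xop_tmul, Xop_tmul, map_sum, Finset.smul_sum]
  apply Finset.sum_congr rfl; intro s _
  rw [map_smul, TensorProduct.map_tmul, tau_bv, TensorProduct.tmul_smul]
  rw [Tp_sigma, e_sigma_of S hσe, TensorProduct.smul_tmul', smul_smul]
  rw [← TensorProduct.smul_tmul', smul_smul, smul_smul]
  congr 1
  simp only [bar]
  split_ifs <;> norm_num

end WithModule2

section HW

variable (S : GLSuperUEA F m n)
variable {M : Type*} [AddCommGroup M] [Module F M] [Module S.U M]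
  [IsScalarTower F S.U M] [SMulCommClass S.U F M]
variable {σ : M →ₗ[F] M} {v : M} {p q : ℤ}

lemma card_lt_m : (Finset.univ.filter fun s : Fin (m + n) => (s : ℕ) < m).card = m := by
  rw [Finset.card_filter]
  rw [Fin.sum_univ_eq_sum_range (fun i => if i < m then (1 : ℕ) else 0) (m + n)]
  rw [← Finset.sum_filter]
  have h : (Finset.range (m + n)).filter (fun i => i < m) = Finset.range m := by
    ext i
    simp only [Finset.mem_filter, Finset.mem_range]
    omega
  rw [h, Finset.sum_const, smul_eq_mul, mul_one, Finset.card_range]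

lemma B0
    (hσv : σ v = v)
    (hwt : ∀ i : Fin (m + n),
      S.e i i • v = (if (i : ℕ) < m then ((p : F)) else (((-(q + (m : ℤ))) : F))) • v)
    (hraise : ∀ i j : Fin (m + n), i < j → S.e i j • v = 0)
    (hlower : ∀ i j : Fin (m + n), j < i → (((i : ℕ) < m) ∨ (m ≤ (j : ℕ))) →
      S.e i j • v = 0)
    (k : Fin (m + n)) (hk : (k : ℕ) < m) :
    Xop S σ (v ⊗ₜ[F] bv F m n k) = (p : F) • (v ⊗ₜ[F] bv F m n k) := by
  have hTv : ∀ a : ℕ, Tp σ a v = v := by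
    intro a; unfold Tp; split
    · exact hσv
    · rfl
  rw [Xop_tmul]
  simp only [hTv]
  rw [Finset.sum_eq_single k]
  · rw [hwt k, if_pos hk]
    have hb : bar m (k : ℕ) = 0 := if_pos hk
    rw [hb, pow_zero, one_smul, ← TensorProduct.smul_tmul']
  · intro s _ hsk
    have h0 : S.e k s • v = 0 := by
      rcases lt_or_gt_of_ne hsk with h | h
      · exact hlower k s h (Or.inl hk)
      · exact hraise k s h
    rw [h0, TensorProduct.zero_tmul, smul_zero]
  · intro hk'; exact absurd (Finset.mem_univ k) hk'

/-- auxiliary element -/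
noncomputable def Wk (v : M) (k : Fin (m + n)) : TensorProduct F M (Fin (m + n) → F) :=
  ∑ s : Fin (m + n), if (s : ℕ) < m then (S.e k s • v) ⊗ₜ[F] bv F m n s else 0

lemma B1a
    (hσv : σ v = v)
    (hwt : ∀ i : Fin (m + n),
      S.e i i • v = (if (i : ℕ) < m then ((p : F)) else (((-(q + (m : ℤ))) : F))) • v)
    (hraise : ∀ i j : Fin (m + n), i < j → S.e i j • v = 0)
    (hlower : ∀ i j : Fin (m + n), j < i → (((i : ℕ) < m) ∨ (m ≤ (j : ℕ))) →
      S.e i j • v = 0)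
    (k : Fin (m + n)) (hk : ¬ (k : ℕ) < m) :
    Xop S σ (v ⊗ₜ[F] bv F m n k)
      = ((q : F) + (m : ℕ)) • (v ⊗ₜ[F] bv F m n k) + Wk S v k := by
  have hTv : ∀ a : ℕ, Tp σ a v = v := by
    intro a; unfold Tp; split
    · exact hσv
    · rfl
  rw [Xop_tmul]
  simp only [hTv]
  have hterm : ∀ s ∈ (Finset.univ : Finset (Fin (m + n))),
      ((-1 : F) ^ bar m (s : ℕ)) • ((S.e k s • v) ⊗ₜ[F] bv F m n s)
        = (if (s : ℕ) < m then (S.e k s • v) ⊗ₜ[F] bv F m n s else 0)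
          + (if s = k then ((q : F) + (m : ℕ)) • (v ⊗ₜ[F] bv F m n k) else 0) := by
    intro s _
    by_cases hs : (s : ℕ) < m
    · have hsk : ¬ s = k := fun h => hk (h ▸ hs)
      rw [if_pos hs, if_neg hsk, add_zero]
      have hb : bar m (s : ℕ) = 0 := if_pos hs
      rw [hb, pow_zero, one_smul]
    · by_cases hsk : s = k
      · subst hsk
        rw [if_neg hs, if_pos rfl, zero_add, hwt s, if_neg hs]
        have hb : bar m (s : ℕ) = 1 := if_neg hs
        rw [hb, pow_one, ← TensorProduct.smul_tmul', smul_smul]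
        congr 1
        push_cast
        ring
      · have h0 : S.e k s • v = 0 := by
          rcases lt_or_gt_of_ne hsk with h | h
          · exact hlower k s h (Or.inr (Nat.le_of_not_lt hs))
          · exact hraise k s h
        rw [h0, TensorProduct.zero_tmul, smul_zero, if_neg hs, if_neg hsk, add_zero]
  rw [Finset.sum_congr rfl hterm, Finset.sum_add_distrib, Fintype.sum_ite_eq' k
    (fun _ => ((q : F) + (m : ℕ)) • (v ⊗ₜ[F] bv F m n k))]
  exact add_comm _ _

lemma B1b
    (hσσ : ∀ w : M, σ (σ w) = w)
    (hσe : ∀ (i j : Fin (m + n)) (w : M),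
      σ (S.e i j • w) = ((-1 : F) ^ (bar m i + bar m j)) • (S.e i j • σ w))
    (hσv : σ v = v)
    (hwt : ∀ i : Fin (m + n),
      S.e i i • v = (if (i : ℕ) < m then ((p : F)) else (((-(q + (m : ℤ))) : F))) • v)
    (hraise : ∀ i j : Fin (m + n), i < j → S.e i j • v = 0)
    (hlower : ∀ i j : Fin (m + n), j < i → (((i : ℕ) < m) ∨ (m ≤ (j : ℕ))) →
      S.e i j • v = 0)
    (k : Fin (m + n)) (hk : ¬ (k : ℕ) < m) :
    Xop S σ (Wk S v k)
      = ((p : F) - (m : ℕ)) • Wk S v k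
        + (((m : ℕ) : F) * ((p : F) - (q : F) - ((m : ℕ) : F))) • (v ⊗ₜ[F] bv F m n k) := by
  have hTv : ∀ a : ℕ, Tp σ a v = v := by
    intro a; unfold Tp; split
    · exact hσv
    · rfl
  -- first: value of Xop on each summand of Wk
  have key : ∀ s : Fin (m + n), (s : ℕ) < m →
      Xop S σ ((S.e k s • v) ⊗ₜ[F] bv F m n s)
        = (p : F) • ((S.e k s • v) ⊗ₜ[F] bv F m n s)
          + ((((p : F) - (q : F) - ((m : ℕ) : F)) • (v ⊗ₜ[F] bv F m n k)) - Wk S v k) := by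
    intro s hs
    rw [Xop_tmul]
    have h1 : ∀ t : Fin (m + n),
        ((-1 : F) ^ bar m (t : ℕ)) •
            ((S.e s t • Tp σ (bar m (t : ℕ) + bar m (s : ℕ)) (S.e k s • v)) ⊗ₜ[F] bv F m n t)
          = (S.e s t • (S.e k s • v)) ⊗ₜ[F] bv F m n t := by
      intro t
      rw [Tp_smul S hσe, hTv, smul_comm, ← TensorProduct.smul_tmul', smul_smul]
      have hsgn : ((-1 : F) ^ bar m (t : ℕ)) *
          ((-1 : F) ^ ((bar m (t : ℕ) + bar m (s : ℕ)) * (bar m (k : ℕ) + bar m (s : ℕ)))) = 1 := by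
        simp only [bar, if_pos hs, if_neg hk]
        split_ifs <;> norm_num
      rw [hsgn, one_smul]
    rw [Finset.sum_congr rfl (fun t _ => h1 t)]
    have h2 : ∀ t ∈ (Finset.univ : Finset (Fin (m + n))),
        (S.e s t • (S.e k s • v)) ⊗ₜ[F] bv F m n t
          = (if (t : ℕ) < m then -((S.e k t • v) ⊗ₜ[F] bv F m n t) else 0)
            + ((if t = s then (p : F) • ((S.e k s • v) ⊗ₜ[F] bv F m n s) else 0)
              + (if t = k then (((p : F) - (q : F) - ((m : ℕ) : F)) • (v ⊗ₜ[F] bv F m n k)) else 0)) := by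
      intro t _
      rw [super_smul S s t k s, if_pos rfl]
      by_cases hts : t = s
      · subst hts
        have htk : ¬ t = k := fun h => hk (h ▸ hs)
        have hsgn2 : ((-1 : F) ^ ((bar m (t : ℕ) + bar m (t : ℕ)) * (bar m (k : ℕ) + bar m (t : ℕ)))) = 1 := by
          simp only [bar, if_pos hs, if_neg hk]
          norm_num
        have hc : S.e k t • ((p : F) • v) = (p : F) • (S.e k t • v) := smul_comm _ _ _
        simp only [htk, if_false, ite_false, hs, if_true, ite_true, hwt t, hsgn2, one_smul,
          add_zero, hc]
        rw [TensorProduct.sub_tmul, ← TensorProduct.smul_tmul']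
        abel
      · by_cases htk : t = k
        · subst htk
          have hsk : s < t := by
            rw [Fin.lt_def]; exact lt_of_lt_of_le hs (Nat.le_of_not_lt hk)
          have h0 : S.e s t • v = 0 := hraise s t hsk
          have hsgn : ((-1 : F) ^ ((bar m (s : ℕ) + bar m (t : ℕ)) * (bar m (t : ℕ) + bar m (s : ℕ)))) = -1 := by
            simp only [bar, if_pos hs, if_neg hk]
            norm_num
          rw [h0, smul_zero, smul_zero, zero_add, hwt t, if_neg hk, hsgn]
          simp only [hts, if_false, ite_false, hk, if_true, ite_true, if_pos rfl, zero_add]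
          rw [hwt s, if_pos hs, smul_smul, ← sub_smul, ← TensorProduct.smul_tmul']
          congr 1
          push_cast
          ring
        · by_cases htm : (t : ℕ) < m
          · have h0 : S.e s t • v = 0 := by
              rcases lt_or_gt_of_ne hts with h | h
              · exact hlower s t h (Or.inl hs)
              · exact hraise s t h
            have hsgn : ((-1 : F) ^ ((bar m (s : ℕ) + bar m (t : ℕ)) * (bar m (k : ℕ) + bar m (s : ℕ)))) = 1 := by
              simp only [bar, if_pos hs, if_pos htm, if_neg hk]
              norm_num
            rw [h0, smul_zero, smul_zero, zero_add, hsgn, one_smul]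
            simp only [hts, htk, if_false, ite_false, htm, if_true, ite_true, add_zero, zero_add]
            rw [zero_sub, TensorProduct.neg_tmul]
          · have h0 : S.e s t • v = 0 := by
              apply hraise s t
              rw [Fin.lt_def]; exact lt_of_lt_of_le hs (Nat.le_of_not_lt htm)
            have h0' : S.e k t • v = 0 := by
              rcases lt_or_gt_of_ne htk with h | h
              · exact hlower k t h (Or.inr (Nat.le_of_not_lt htm))
              · exact hraise k t h
            simp only [h0, h0', smul_zero, zero_add, sub_zero, hts, htk, htm, if_false,
              ite_false, TensorProduct.zero_tmul, add_zero]
    rw [Finset.sum_congr rfl h2, Finset.sum_add_distrib, Finset.sum_add_distrib,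
      Fintype.sum_ite_eq' s (fun _ => (p : F) • ((S.e k s • v) ⊗ₜ[F] bv F m n s)),
      Fintype.sum_ite_eq' k (fun _ => (((p : F) - (q : F) - ((m : ℕ) : F)) • (v ⊗ₜ[F] bv F m n k)))]
    have hneg : (∑ t : Fin (m + n), if (t : ℕ) < m then -((S.e k t • v) ⊗ₜ[F] bv F m n t) else 0)
        = - Wk S v k := by
      rw [Wk, ← Finset.sum_neg_distrib]
      apply Finset.sum_congr rfl; intro t _
      split <;> simp
    rw [hneg]
    abel
  -- now sum up
  rw [Wk, map_sum]
  have hsum : ∀ s ∈ (Finset.univ : Finset (Fin (m + n))),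
      Xop S σ (if (s : ℕ) < m then (S.e k s • v) ⊗ₜ[F] bv F m n s else 0)
        = (if (s : ℕ) < m then (p : F) • ((S.e k s • v) ⊗ₜ[F] bv F m n s) else 0)
          + (if (s : ℕ) < m then
              ((((p : F) - (q : F) - ((m : ℕ) : F)) • (v ⊗ₜ[F] bv F m n k)) - Wk S v k) else 0) := by
    intro s _
    by_cases hs : (s : ℕ) < m
    · rw [if_pos hs, if_pos hs, if_pos hs, key s hs]
    · rw [if_neg hs, if_neg hs, if_neg hs, map_zero, add_zero]
  rw [Finset.sum_congr rfl hsum, Finset.sum_add_distrib]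
  have h1 : (∑ s : Fin (m + n),
      if (s : ℕ) < m then (p : F) • ((S.e k s • v) ⊗ₜ[F] bv F m n s) else 0)
      = (p : F) • Wk S v k := by
    rw [Wk, Finset.smul_sum]
    apply Finset.sum_congr rfl; intro s _
    split <;> simp
  have h2' : (∑ s : Fin (m + n),
      if (s : ℕ) < m then
        ((((p : F) - (q : F) - ((m : ℕ) : F)) • (v ⊗ₜ[F] bv F m n k)) - Wk S v k) else 0)
      = ((m : ℕ) : F) •
          ((((p : F) - (q : F) - ((m : ℕ) : F)) • (v ⊗ₜ[F] bv F m n k)) - Wk S v k) := by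
    rw [← Finset.sum_filter, Finset.sum_const, card_lt_m, ← Nat.cast_smul_eq_nsmul F]
  rw [h1, h2']
  rw [smul_sub, smul_smul]
  have hW : (∑ s : Fin (m + n), if (s : ℕ) < m then (S.e k s • v) ⊗ₜ[F] bv F m n s else 0)
      = Wk S v k := rfl
  rw [hW]
  module

end HW

section C2sec

variable (S : GLSuperUEA F m n)
variable {M : Type*} [AddCommGroup M] [Module F M] [Module S.U M]
  [IsScalarTower F S.U M] [SMulCommClass S.U F M]
variable {σ : M →ₗ[F] M}

/-- coproduct action of a generator -/
noncomputable def Dop (σ : M →ₗ[F] M) (i j : Fin (m + n)) :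
    TensorProduct F M (Fin (m + n) → F) →ₗ[F] TensorProduct F M (Fin (m + n) → F) :=
  TensorProduct.map (DistribMulAction.toLinearMap F M (S.e i j)) LinearMap.id
    + TensorProduct.map (Tp σ (bar m (j : ℕ) + bar m (i : ℕ))) (natAct F m n i j)

lemma Dop_tmul (i j : Fin (m + n)) (w : M) (x : Fin (m + n) → F) :
    Dop S σ i j (w ⊗ₜ[F] x)
      = (S.e i j • w) ⊗ₜ[F] x
        + (Tp σ (bar m (j : ℕ) + bar m (i : ℕ)) w) ⊗ₜ[F] (natAct F m n i j x) := by
  simp only [Dop, LinearMap.add_apply, TensorProduct.map_tmul,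
    DistribMulAction.toLinearMap, DistribSMul.toLinearMap_apply, LinearMap.id_coe, id_eq]

lemma hcore
    (hσσ : ∀ w : M, σ (σ w) = w)
    (hσe : ∀ (i j : Fin (m + n)) (w : M),
      σ (S.e i j • w) = ((-1 : F) ^ (bar m i + bar m j)) • (S.e i j • σ w))
    (i j k : Fin (m + n)) (w : M) (s : Fin (m + n)) :
    S.e k s • Tp σ (bar m (s : ℕ) + bar m (k : ℕ)) (S.e i j • w)
      + (if j = k then
          S.e i s • Tp σ (bar m (s : ℕ) + bar m (i : ℕ))
            (Tp σ (bar m (j : ℕ) + bar m (i : ℕ)) w) else 0)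
    = S.e i j • (S.e k s • Tp σ (bar m (s : ℕ) + bar m (k : ℕ)) w)
      + (if s = i then
          ((-1 : F) ^ ((bar m (i : ℕ) + bar m (k : ℕ)) * (bar m (i : ℕ) + bar m (j : ℕ)))) •
            (S.e k j • Tp σ (bar m (i : ℕ) + bar m (k : ℕ)) w) else 0) := by
  have hTT : Tp σ (bar m (s : ℕ) + bar m (i : ℕ)) (Tp σ (bar m (j : ℕ) + bar m (i : ℕ)) w)
      = Tp σ ((bar m (s : ℕ) + bar m (i : ℕ)) + (bar m (j : ℕ) + bar m (i : ℕ))) w :=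
    Tp_Tp hσσ _ _ _
  rw [Tp_smul S hσe (bar m (s : ℕ) + bar m (k : ℕ)) i j w,
    smul_comm (S.e k s)
      ((-1 : F) ^ ((bar m (s : ℕ) + bar m (k : ℕ)) * (bar m (i : ℕ) + bar m (j : ℕ)))),
    super_smul S k s i j (Tp σ (bar m (s : ℕ) + bar m (k : ℕ)) w),
    smul_sub, smul_add]
  have hγδ : ((-1 : F) ^ ((bar m (s : ℕ) + bar m (k : ℕ)) * (bar m (i : ℕ) + bar m (j : ℕ))))
      * ((-1 : F) ^ ((bar m (k : ℕ) + bar m (s : ℕ)) * (bar m (i : ℕ) + bar m (j : ℕ)))) = 1 := by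
    simp only [bar]; split_ifs <;> norm_num
  have hγδs : ∀ x : M,
      ((-1 : F) ^ ((bar m (s : ℕ) + bar m (k : ℕ)) * (bar m (i : ℕ) + bar m (j : ℕ)))) •
        (((-1 : F) ^ ((bar m (k : ℕ) + bar m (s : ℕ)) * (bar m (i : ℕ) + bar m (j : ℕ)))) • x)
      = x := fun x => by rw [smul_smul, hγδ, one_smul]
  simp only [hγδs]
  by_cases hjk : j = k
  · subst hjk
    rw [if_pos rfl, if_pos rfl, hTT]
    have hcg : Tp σ ((bar m (s : ℕ) + bar m (i : ℕ)) + (bar m (j : ℕ) + bar m (i : ℕ)))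
        = Tp σ (bar m (s : ℕ) + bar m (j : ℕ)) := Tp_congr (by omega)
    rw [hcg]
    by_cases hsi : s = i
    · subst hsi
      rw [if_pos rfl, if_pos rfl]
      abel
    · rw [if_neg hsi, if_neg hsi, smul_zero]
      abel
  · rw [if_neg hjk, if_neg hjk, sub_zero, add_zero]
    by_cases hsi : s = i
    · subst hsi
      rw [if_pos rfl, if_pos rfl]
    · rw [if_neg hsi, if_neg hsi, smul_zero]

lemma C2
    (hσσ : ∀ w : M, σ (σ w) = w)
    (hσe : ∀ (i j : Fin (m + n)) (w : M),
      σ (S.e i j • w) = ((-1 : F) ^ (bar m i + bar m j)) • (S.e i j • σ w))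
    (i j : Fin (m + n)) :
    Xop S σ ∘ₗ Dop S σ i j = Dop S σ i j ∘ₗ Xop S σ := by
  apply tensor_ext
  intro w k
  rw [LinearMap.comp_apply, LinearMap.comp_apply, Dop_tmul, natAct_bv, map_add, Xop_tmul]
  have hB : Xop S σ ((Tp σ (bar m (j : ℕ) + bar m (i : ℕ)) w) ⊗ₜ[F]
        (if j = k then bv F m n i else 0))
      = ∑ s : Fin (m + n), (if j = k then
          ((-1 : F) ^ bar m (s : ℕ)) •
            ((S.e i s • Tp σ (bar m (s : ℕ) + bar m (i : ℕ))
              (Tp σ (bar m (j : ℕ) + bar m (i : ℕ)) w)) ⊗ₜ[F] bv F m n s) else 0) := by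
    by_cases hjk : j = k
    · simp only [if_pos hjk, Xop_tmul]
    · simp only [if_neg hjk, TensorProduct.tmul_zero, map_zero, Finset.sum_const_zero]
  rw [hB, Xop_tmul, map_sum, ← Finset.sum_add_distrib]
  simp only [map_smul, Dop_tmul, natAct_bv]
  have hL : ∀ s ∈ (Finset.univ : Finset (Fin (m + n))),
      ((-1 : F) ^ bar m (s : ℕ)) •
          ((S.e k s • Tp σ (bar m (s : ℕ) + bar m (k : ℕ)) (S.e i j • w)) ⊗ₜ[F] bv F m n s)
        + (if j = k then
            ((-1 : F) ^ bar m (s : ℕ)) •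
              ((S.e i s • Tp σ (bar m (s : ℕ) + bar m (i : ℕ))
                (Tp σ (bar m (j : ℕ) + bar m (i : ℕ)) w)) ⊗ₜ[F] bv F m n s) else 0)
      = ((-1 : F) ^ bar m (s : ℕ)) •
          ((S.e i j • (S.e k s • Tp σ (bar m (s : ℕ) + bar m (k : ℕ)) w)) ⊗ₜ[F] bv F m n s)
        + (if s = i then
            ((-1 : F) ^ bar m (i : ℕ)) •
              ((((-1 : F) ^ ((bar m (i : ℕ) + bar m (k : ℕ)) * (bar m (i : ℕ) + bar m (j : ℕ)))) •
                (S.e k j • Tp σ (bar m (i : ℕ) + bar m (k : ℕ)) w)) ⊗ₜ[F] bv F m n i) else 0) := by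
    intro s _
    have h1 : (if j = k then
          ((-1 : F) ^ bar m (s : ℕ)) •
            ((S.e i s • Tp σ (bar m (s : ℕ) + bar m (i : ℕ))
              (Tp σ (bar m (j : ℕ) + bar m (i : ℕ)) w)) ⊗ₜ[F] bv F m n s) else 0)
        = ((-1 : F) ^ bar m (s : ℕ)) •
            ((if j = k then (S.e i s • Tp σ (bar m (s : ℕ) + bar m (i : ℕ))
              (Tp σ (bar m (j : ℕ) + bar m (i : ℕ)) w)) else 0) ⊗ₜ[F] bv F m n s) := by
      split
      · rfl
      · rw [TensorProduct.zero_tmul, smul_zero]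
    have h2 : (if s = i then
          ((-1 : F) ^ bar m (i : ℕ)) •
            ((((-1 : F) ^ ((bar m (i : ℕ) + bar m (k : ℕ)) * (bar m (i : ℕ) + bar m (j : ℕ)))) •
              (S.e k j • Tp σ (bar m (i : ℕ) + bar m (k : ℕ)) w)) ⊗ₜ[F] bv F m n i) else 0)
        = ((-1 : F) ^ bar m (s : ℕ)) •
            ((if s = i then
              ((-1 : F) ^ ((bar m (i : ℕ) + bar m (k : ℕ)) * (bar m (i : ℕ) + bar m (j : ℕ)))) •
                (S.e k j • Tp σ (bar m (i : ℕ) + bar m (k : ℕ)) w) else 0) ⊗ₜ[F] bv F m n s) := by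
      by_cases hsi : s = i
      · subst hsi; rw [if_pos rfl, if_pos rfl]
      · rw [if_neg hsi, if_neg hsi, TensorProduct.zero_tmul, smul_zero]
    rw [h1, h2, ← smul_add, ← smul_add, ← TensorProduct.add_tmul, ← TensorProduct.add_tmul,
      hcore S hσσ hσe i j k w s]
  rw [Finset.sum_congr rfl hL, Finset.sum_add_distrib,
    Fintype.sum_ite_eq' i (fun _ =>
      ((-1 : F) ^ bar m (i : ℕ)) •
        ((((-1 : F) ^ ((bar m (i : ℕ) + bar m (k : ℕ)) * (bar m (i : ℕ) + bar m (j : ℕ)))) •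
          (S.e k j • Tp σ (bar m (i : ℕ) + bar m (k : ℕ)) w)) ⊗ₜ[F] bv F m n i))]
  have hR : ∀ s ∈ (Finset.univ : Finset (Fin (m + n))),
      ((-1 : F) ^ bar m (s : ℕ)) •
          ((S.e i j • (S.e k s • Tp σ (bar m (s : ℕ) + bar m (k : ℕ)) w)) ⊗ₜ[F] bv F m n s
            + (Tp σ (bar m (j : ℕ) + bar m (i : ℕ))
                (S.e k s • Tp σ (bar m (s : ℕ) + bar m (k : ℕ)) w)) ⊗ₜ[F]
                  (if j = s then bv F m n i else 0))
      = ((-1 : F) ^ bar m (s : ℕ)) •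
          ((S.e i j • (S.e k s • Tp σ (bar m (s : ℕ) + bar m (k : ℕ)) w)) ⊗ₜ[F] bv F m n s)
        + (if s = j then
            ((-1 : F) ^ bar m (j : ℕ)) •
              ((Tp σ (bar m (j : ℕ) + bar m (i : ℕ))
                (S.e k j • Tp σ (bar m (j : ℕ) + bar m (k : ℕ)) w)) ⊗ₜ[F] bv F m n i) else 0) := by
    intro s _
    rw [smul_add]
    congr 1
    by_cases hsj : s = j
    · subst hsj; rw [if_pos rfl, if_pos rfl]
    · rw [if_neg (fun h => hsj h.symm), if_neg hsj, TensorProduct.tmul_zero, smul_zero]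
  rw [Finset.sum_congr rfl hR, Finset.sum_add_distrib,
    Fintype.sum_ite_eq' j (fun _ =>
      ((-1 : F) ^ bar m (j : ℕ)) •
        ((Tp σ (bar m (j : ℕ) + bar m (i : ℕ))
          (S.e k j • Tp σ (bar m (j : ℕ) + bar m (k : ℕ)) w)) ⊗ₜ[F] bv F m n i))]
  congr 1
  rw [Tp_smul S hσe (bar m (j : ℕ) + bar m (i : ℕ)) k j,
    Tp_Tp hσσ (bar m (j : ℕ) + bar m (i : ℕ)) (bar m (j : ℕ) + bar m (k : ℕ)) w]
  have hcg : Tp σ ((bar m (j : ℕ) + bar m (i : ℕ)) + (bar m (j : ℕ) + bar m (k : ℕ)))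
      = Tp σ (bar m (i : ℕ) + bar m (k : ℕ)) := Tp_congr (by omega)
  rw [hcg]
  have hsg : ((-1 : F) ^ bar m (i : ℕ) *
        (-1 : F) ^ ((bar m (i : ℕ) + bar m (k : ℕ)) * (bar m (i : ℕ) + bar m (j : ℕ))))
      = ((-1 : F) ^ bar m (j : ℕ) *
        (-1 : F) ^ ((bar m (j : ℕ) + bar m (i : ℕ)) * (bar m (k : ℕ) + bar m (j : ℕ)))) := by
    simp only [bar]; split_ifs <;> norm_num
  simp only [TensorProduct.smul_tmul', smul_smul, hsg]

end C2sec

section Main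

variable (S : GLSuperUEA F m n)
variable {M : Type*} [AddCommGroup M] [Module F M] [Module S.U M]
  [IsScalarTower F S.U M] [SMulCommClass S.U F M]
variable {σ : M →ₗ[F] M} {v : M} {p q : ℤ}

theorem Ycomp_eq_zero
    (hσσ : ∀ w : M, σ (σ w) = w)
    (hσe : ∀ (i j : Fin (m + n)) (w : M),
      σ (S.e i j • w) = ((-1 : F) ^ (bar m i + bar m j)) • (S.e i j • σ w))
    (hσv : σ v = v)
    (hcyc : Submodule.span S.U {v} = ⊤)
    (hwt : ∀ i : Fin (m + n),
      S.e i i • v = (if (i : ℕ) < m then ((p : F)) else (((-(q + (m : ℤ))) : F))) • v)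
    (hraise : ∀ i j : Fin (m + n), i < j → S.e i j • v = 0)
    (hlower : ∀ i j : Fin (m + n), j < i → (((i : ℕ) < m) ∨ (m ≤ (j : ℕ))) →
      S.e i j • v = 0) :
    (Xop S σ - (p : F) • LinearMap.id) ∘ₗ (Xop S σ - (q : F) • LinearMap.id) = 0 := by
  set Y := (Xop S σ - (p : F) • LinearMap.id) ∘ₗ (Xop S σ - (q : F) • LinearMap.id) with hY
  have hcomm : ∀ (D : TensorProduct F M (Fin (m + n) → F) →ₗ[F]
        TensorProduct F M (Fin (m + n) → F)),
      (∀ z, Xop S σ (D z) = D (Xop S σ z)) → ∀ z, Y (D z) = D (Y z) := by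
    intro D hD z
    simp only [hY, LinearMap.comp_apply, LinearMap.sub_apply, LinearMap.smul_apply,
      LinearMap.id_apply, map_sub, map_smul, hD]
  have hXD : ∀ (i j : Fin (m + n)) z, Xop S σ (Dop S σ i j z) = Dop S σ i j (Xop S σ z) :=
    fun i j z => LinearMap.congr_fun (C2 S hσσ hσe i j) z
  have hXS : ∀ z, Xop S σ (TensorProduct.map σ (tau F m n) z)
      = TensorProduct.map σ (tau F m n) (Xop S σ z) :=
    fun z => LinearMap.congr_fun (C1 S hσσ hσe) z
  have hNv : ∀ k, Y (v ⊗ₜ[F] bv F m n k) = 0 := by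
    intro k
    by_cases hk : (k : ℕ) < m
    · simp only [hY, LinearMap.comp_apply, LinearMap.sub_apply, LinearMap.smul_apply,
        LinearMap.id_apply]
      rw [B0 S hσv hwt hraise hlower k hk, map_sub, map_smul,
        B0 S hσv hwt hraise hlower k hk, map_smul, B0 S hσv hwt hraise hlower k hk]
      module
    · simp only [hY, LinearMap.comp_apply, LinearMap.sub_apply, LinearMap.smul_apply,
        LinearMap.id_apply]
      rw [B1a S hσv hwt hraise hlower k hk, map_sub, map_add, map_smul,
        B1a S hσv hwt hraise hlower k hk, B1b S hσσ hσe hσv hwt hraise hlower k hk,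
        map_smul, B1a S hσv hwt hraise hlower k hk]
      module
  let NN : Submodule F M :=
    { carrier := {w : M | ∀ k, Y (w ⊗ₜ[F] bv F m n k) = 0}
      add_mem' := by
        intro a b ha hb k
        rw [TensorProduct.add_tmul, map_add, ha k, hb k, add_zero]
      zero_mem' := by
        intro k
        rw [TensorProduct.zero_tmul, map_zero]
      smul_mem' := by
        intro c a ha k
        rw [← TensorProduct.smul_tmul', map_smul, ha k, smul_zero] }
  have hNσ : ∀ w ∈ NN, σ w ∈ NN := by
    intro w hw k
    have h1 : TensorProduct.map σ (tau F m n) (w ⊗ₜ[F] bv F m n k)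
        = ((-1 : F) ^ bar m (k : ℕ)) • ((σ w) ⊗ₜ[F] bv F m n k) := by
      rw [TensorProduct.map_tmul, tau_bv, TensorProduct.tmul_smul]
    have h1' : (σ w) ⊗ₜ[F] bv F m n k
        = ((-1 : F) ^ bar m (k : ℕ)) •
            TensorProduct.map σ (tau F m n) (w ⊗ₜ[F] bv F m n k) := by
      rw [h1, smul_smul, sq_neg_one, one_smul]
    rw [h1', map_smul, hcomm _ hXS, hw k, map_zero, smul_zero]
  have hNe : ∀ (i j : Fin (m + n)), ∀ w ∈ NN, S.e i j • w ∈ NN := by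
    intro i j w hw k
    have hD : (S.e i j • w) ⊗ₜ[F] bv F m n k
        = Dop S σ i j (w ⊗ₜ[F] bv F m n k)
          - (Tp σ (bar m (j : ℕ) + bar m (i : ℕ)) w) ⊗ₜ[F]
              (natAct F m n i j (bv F m n k)) := by
      rw [Dop_tmul]; abel
    have hTpN : Tp σ (bar m (j : ℕ) + bar m (i : ℕ)) w ∈ NN := by
      unfold Tp; split
      · exact hNσ w hw
      · exact hw
    show Y _ = 0
    rw [hD, map_sub, hcomm _ (hXD i j), hw k, map_zero, zero_sub, neg_eq_zero, natAct_bv]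
    by_cases hjk : j = k
    · rw [if_pos hjk]
      exact hTpN i
    · rw [if_neg hjk, TensorProduct.tmul_zero, map_zero]
  let T : Subalgebra F S.U :=
    { carrier := {u : S.U | ∀ w ∈ NN, u • w ∈ NN}
      mul_mem' := by
        intro a b ha hb w hw
        rw [mul_smul]; exact ha _ (hb _ hw)
      one_mem' := by
        intro w hw
        rw [one_smul]; exact hw
      add_mem' := by
        intro a b ha hb w hw
        rw [add_smul]; exact NN.add_mem (ha _ hw) (hb _ hw)
      zero_mem' := by
        intro w hw
        rw [zero_smul]; exact NN.zero_mem
      algebraMap_mem' := by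
        intro c w hw
        rw [algebraMap_smul]; exact NN.smul_mem c hw }
  have hTtop : ∀ u : S.U, u ∈ T := by
    have h1 : Algebra.adjoin F
        (Set.range fun pr : Fin (m + n) × Fin (m + n) => S.e pr.1 pr.2) ≤ T := by
      apply Algebra.adjoin_le
      rintro u ⟨pr, rfl⟩
      exact fun w hw => hNe pr.1 pr.2 w hw
    intro u
    exact h1 (by rw [S.gen]; trivial)
  have hall : ∀ w : M, w ∈ NN := by
    intro w
    have hv : v ∈ NN := hNv
    have hwspan : w ∈ Submodule.span S.U {v} := by rw [hcyc]; trivial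
    obtain ⟨u, hu⟩ := Submodule.mem_span_singleton.mp hwspan
    exact hu ▸ hTtop u v hv
  apply tensor_ext
  intro w k
  rw [LinearMap.zero_apply]
  exact hall w k

end Main

end CycRelAux

/-- The element `(x_1 - p)(x_1 - q)` of the degenerate affine Hecke algebra `H_d` acts
as zero on `V(λ_{p,q}) ⊗ V^{⊗d}`.  Here `M` is the Kac module `V(λ_{p,q})`: a cyclic
highest weight module of highest weight `λ_{p,q}`, with its `ℤ₂`-grading recorded by
the parity involution `σ`, on which the off-diagonal part of `gl(m)⊕gl(n)` and the
odd raising operators kill the (even) highest weight vector `v`.  The generator `x_1`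
acts on `V(λ_{p,q}) ⊗ V ⊗ V^{⊗(d-1)}` by the operator
`Ω = Σ_{r,s} (-1)^{bar s} e_{rs} ⊗ e_{sr}` on the first two tensor factors (with the
super sign realised by `σ`) and by the identity on the remaining factors; the theorem
states `(Ω - p)(Ω - q) ⊗ id = 0`, so the `H_d`-action factors through the level-two
cyclotomic quotient `H_d^{p,q}`. -/
theorem cyclotomic_relation_on_tensor_space (F : Type*) [Field F] [CharZero F]
    (m n : ℕ) (p q : ℤ) (hpq : p ≤ q) (S : GLSuperUEA F m n)
    (M : Type*) [AddCommGroup M] [Module F M] [Module S.U M]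
    [IsScalarTower F S.U M] [SMulCommClass S.U F M]
    (v : M) (σ : M →ₗ[F] M)
    (hσσ : ∀ w : M, σ (σ w) = w)
    (hσe : ∀ (i j : Fin (m + n)) (w : M),
      σ (S.e i j • w) = ((-1 : F) ^ (bar m i + bar m j)) • (S.e i j • σ w))
    (hσv : σ v = v)
    (hcyc : Submodule.span S.U {v} = ⊤)
    (hwt : ∀ i : Fin (m + n),
      S.e i i • v = (if (i : ℕ) < m then ((p : F)) else (((-(q + (m : ℤ))) : F))) • v)
    (hraise : ∀ i j : Fin (m + n), i < j → S.e i j • v = 0)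
    (hlower : ∀ i j : Fin (m + n), j < i → (((i : ℕ) < m) ∨ (m ≤ (j : ℕ))) →
      S.e i j • v = 0)
    (d : ℕ) (hd : 0 < d) :
    let X : TensorProduct F M (Fin (m + n) → F) →ₗ[F] TensorProduct F M (Fin (m + n) → F) :=
      ∑ r : Fin (m + n), ∑ s : Fin (m + n),
        ((-1 : F) ^ bar m (s : ℕ)) •
          TensorProduct.map
            ((DistribMulAction.toLinearMap F M (S.e r s)) ∘ₗ
              (if (bar m (s : ℕ) + bar m (r : ℕ)) % 2 = 1 then σ else LinearMap.id))
            (natAct F m n s r)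
    TensorProduct.map
      ((X - (p : F) • LinearMap.id) ∘ₗ (X - (q : F) • LinearMap.id))
      (LinearMap.id : ((Fin (d - 1) → Fin (m + n)) → F) →ₗ[F] ((Fin (d - 1) → Fin (m + n)) → F))
      = 0 := by
  intro X
  have hX : X = CycRelAux.Xop S σ := rfl
  have h0 : (X - (p : F) • LinearMap.id) ∘ₗ (X - (q : F) • LinearMap.id) = 0 := by
    rw [hX]
    exact CycRelAux.Ycomp_eq_zero S hσσ hσe hσv hcyc hwt hraise hlower
  rw [h0]
  apply TensorProduct.ext'
  intro x y
  simp
end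

section
/- In the algebra K₁^∞ (the path algebra of the doubly infinite quiver with arrows a_i: i → i+1, b_i: i+1 → i modulo the relations a_i b_i = b_{i-1} a_{i-1}, a_i a_{i+1} = 0, b_{i+1} b_i = 0), the set {e_i, c_i := b_i a_i, a_i, b_i : i ∈ ℤ} is an F-basis; in particular, the space e_j K₁^∞ e_i is zero whenever |i - j| ≥ 2. -/
/-- Generators of the path algebra of the doubly infinite quiver with vertex set `ℤ`
and arrows `a_i : i → i+1` and `b_i : i+1 → i`: a lazy path `e i` at each vertex and
the two families of arrows. -/
inductive PathGen : Type
  | e : ℤ → PathGen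
  | a : ℤ → PathGen
  | b : ℤ → PathGen

open FreeAlgebra in
/-- The relations presenting `K₁^∞`: the path-algebra relations for the doubly infinite
quiver (orthogonal lazy idempotents, source/target relations for the arrows, with
products written as left-to-right concatenation of paths), together with the relations
`a_i b_i = b_{i-1} a_{i-1}`, `a_i a_{i+1} = 0` and `b_{i+1} b_i = 0`. -/
inductive PathRel (F : Type*) [Field F] :
    FreeAlgebra F PathGen → FreeAlgebra F PathGen → Prop
  | ee (i j : ℤ) : PathRel F (ι F (PathGen.e i) * ι F (PathGen.e j))
      (if i = j then ι F (PathGen.e i) else 0)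
  | ea (i j : ℤ) : PathRel F (ι F (PathGen.e j) * ι F (PathGen.a i))
      (if j = i then ι F (PathGen.a i) else 0)
  | ae (i j : ℤ) : PathRel F (ι F (PathGen.a i) * ι F (PathGen.e j))
      (if j = i + 1 then ι F (PathGen.a i) else 0)
  | eb (i j : ℤ) : PathRel F (ι F (PathGen.e j) * ι F (PathGen.b i))
      (if j = i + 1 then ι F (PathGen.b i) else 0)
  | be (i j : ℤ) : PathRel F (ι F (PathGen.b i) * ι F (PathGen.e j))
      (if j = i then ι F (PathGen.b i) else 0)
  | ab (i : ℤ) : PathRel F (ι F (PathGen.a i) * ι F (PathGen.b i))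
      (ι F (PathGen.b (i - 1)) * ι F (PathGen.a (i - 1)))
  | aa (i : ℤ) : PathRel F (ι F (PathGen.a i) * ι F (PathGen.a (i + 1))) 0
  | bb (i : ℤ) : PathRel F (ι F (PathGen.b (i + 1)) * ι F (PathGen.b i)) 0

/-- The algebra `K₁^∞`: the path algebra of the doubly infinite quiver modulo the
relations `a_i b_i = b_{i-1} a_{i-1}`, `a_i a_{i+1} = 0`, `b_{i+1} b_i = 0`. -/
def KOneInf (F : Type*) [Field F] : Type _ := RingQuot (PathRel F)

noncomputable instance (F : Type*) [Field F] : Ring (KOneInf F) :=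
  inferInstanceAs (Ring (RingQuot (PathRel F)))

noncomputable instance (F : Type*) [Field F] : Algebra F (KOneInf F) :=
  inferInstanceAs (Algebra F (RingQuot (PathRel F)))

/-- The lazy path (idempotent) `e_i` at vertex `i` in `K₁^∞`. -/
noncomputable def Ke (F : Type*) [Field F] (i : ℤ) : KOneInf F :=
  RingQuot.mkAlgHom F (PathRel F) (FreeAlgebra.ι F (PathGen.e i))

/-- The arrow `a_i : i → i+1` in `K₁^∞`. -/
noncomputable def Ka (F : Type*) [Field F] (i : ℤ) : KOneInf F :=
  RingQuot.mkAlgHom F (PathRel F) (FreeAlgebra.ι F (PathGen.a i))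

/-- The arrow `b_i : i+1 → i` in `K₁^∞`. -/
noncomputable def Kb (F : Type*) [Field F] (i : ℤ) : KOneInf F :=
  RingQuot.mkAlgHom F (PathRel F) (FreeAlgebra.ι F (PathGen.b i))

/-- The loop `c_i = b_i ∘ a_i` at vertex `i` (as a concatenation of paths this is
`a_i` followed by `b_i`). -/
noncomputable def Kc (F : Type*) [Field F] (i : ℤ) : KOneInf F := Ka F i * Kb F i

section Products
variable (F : Type*) [Field F]

lemma Qmul (x y : FreeAlgebra F PathGen) :
    (RingQuot.mkAlgHom F (PathRel F) x * RingQuot.mkAlgHom F (PathRel F) y : KOneInf F)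
      = RingQuot.mkAlgHom F (PathRel F) (x * y) := (map_mul _ _ _).symm

lemma Qzero : (RingQuot.mkAlgHom F (PathRel F) 0 : KOneInf F) = 0 := map_zero _

lemma mul_ee (i j : ℤ) : Ke F i * Ke F j = if i = j then Ke F i else 0 := by
  rw [Ke, Ke]; erw [Qmul, RingQuot.mkAlgHom_rel F (PathRel.ee i j)]
  split_ifs <;> simp_all <;> first | rfl | exact Qzero F

lemma mul_ea (i j : ℤ) : Ke F j * Ka F i = if j = i then Ka F i else 0 := by
  rw [Ke, Ka]; erw [Qmul, RingQuot.mkAlgHom_rel F (PathRel.ea i j)]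
  split_ifs <;> simp_all <;> first | rfl | exact Qzero F

lemma mul_ae (i j : ℤ) : Ka F i * Ke F j = if j = i + 1 then Ka F i else 0 := by
  rw [Ke, Ka]; erw [Qmul, RingQuot.mkAlgHom_rel F (PathRel.ae i j)]
  split_ifs <;> simp_all <;> first | rfl | exact Qzero F

lemma mul_eb (i j : ℤ) : Ke F j * Kb F i = if j = i + 1 then Kb F i else 0 := by
  rw [Ke, Kb]; erw [Qmul, RingQuot.mkAlgHom_rel F (PathRel.eb i j)]
  split_ifs <;> simp_all <;> first | rfl | exact Qzero F

lemma mul_be (i j : ℤ) : Kb F i * Ke F j = if j = i then Kb F i else 0 := by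
  rw [Ke, Kb]; erw [Qmul, RingQuot.mkAlgHom_rel F (PathRel.be i j)]
  split_ifs <;> simp_all <;> first | rfl | exact Qzero F

lemma rel_ab (i : ℤ) : Ka F i * Kb F i = Kb F (i - 1) * Ka F (i - 1) := by
  rw [Ka, Kb, Ka, Kb]; erw [Qmul, Qmul, RingQuot.mkAlgHom_rel F (PathRel.ab i)]

lemma rel_aa (i : ℤ) : Ka F i * Ka F (i + 1) = 0 := by
  rw [Ka, Ka]; erw [Qmul, RingQuot.mkAlgHom_rel F (PathRel.aa i), Qzero]; rfl

lemma rel_bb (i : ℤ) : Kb F (i + 1) * Kb F i = 0 := by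
  rw [Kb, Kb]; erw [Qmul, RingQuot.mkAlgHom_rel F (PathRel.bb i), Qzero]; rfl

lemma mul_aa (i j : ℤ) : Ka F i * Ka F j = 0 := by
  have h1 : Ka F i * Ke F (i + 1) = Ka F i := by simp [mul_ae]
  have h2 : Ke F j * Ka F j = Ka F j := by simp [mul_ea]
  rw [← h1, ← h2, mul_assoc, ← mul_assoc (Ke F (i+1)), mul_ee]
  by_cases h : i + 1 = j
  · subst h; simp [← mul_assoc, h1, rel_aa]
  · simp [h]

lemma mul_bb (i j : ℤ) : Kb F i * Kb F j = 0 := by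
  have h1 : Kb F i * Ke F i = Kb F i := by simp [mul_be]
  have h2 : Ke F (j + 1) * Kb F j = Kb F j := by simp [mul_eb]
  rw [← h1, ← h2, mul_assoc, ← mul_assoc (Ke F i), mul_ee]
  by_cases h : i = j + 1
  · subst h; simp [← mul_assoc, h1, rel_bb]
  · simp [h]

lemma mul_ab (i j : ℤ) : Ka F i * Kb F j = if i = j then Kc F i else 0 := by
  by_cases h : i = j
  · subst h; simp [Kc]
  · have h1 : Ka F i * Ke F (i + 1) = Ka F i := by simp [mul_ae]
    have h2 : Ke F (j + 1) * Kb F j = Kb F j := by simp [mul_eb]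
    rw [← h1, ← h2, mul_assoc, ← mul_assoc (Ke F (i+1)), mul_ee]
    simp [h, show ¬ (i + 1 = j + 1) by omega]

lemma mul_ba (i j : ℤ) : Kb F i * Ka F j = if i = j then Kc F (i + 1) else 0 := by
  by_cases h : i = j
  · subst h
    have := rel_ab F (i + 1)
    simp only [add_sub_cancel_right] at this
    simp [Kc, ← this]
  · have h1 : Kb F i * Ke F i = Kb F i := by simp [mul_be]
    have h2 : Ke F j * Ka F j = Ka F j := by simp [mul_ea]
    rw [← h1, ← h2, mul_assoc, ← mul_assoc (Ke F i), mul_ee]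
    simp [h]

lemma mul_ec (i j : ℤ) : Ke F j * Kc F i = if j = i then Kc F i else 0 := by
  rw [Kc, ← mul_assoc, mul_ea]
  split_ifs <;> simp [Kc]

lemma mul_ce (i j : ℤ) : Kc F i * Ke F j = if j = i then Kc F i else 0 := by
  rw [Kc, mul_assoc, mul_be]
  split_ifs <;> simp [Kc]

lemma mul_ac (i j : ℤ) : Ka F i * Kc F j = 0 := by
  rw [Kc, ← mul_assoc, mul_aa, zero_mul]

lemma mul_cb (i j : ℤ) : Kc F i * Kb F j = 0 := by
  rw [Kc, mul_assoc, mul_bb, mul_zero]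

lemma mul_ca (i j : ℤ) : Kc F i * Ka F j = 0 := by
  rw [Kc, mul_assoc, mul_ba]
  split_ifs <;> simp [mul_ac]

lemma mul_bc (i j : ℤ) : Kb F i * Kc F j = 0 := by
  rw [Kc, ← mul_assoc, mul_ba]
  split_ifs <;> simp [mul_cb]

lemma mul_cc (i j : ℤ) : Kc F i * Kc F j = 0 := by
  rw [show Kc F j = Ka F j * Kb F j from rfl, ← mul_assoc, mul_ca, zero_mul]

end Products

section Rep
variable (F : Type*) [Field F]

/-- left multiplication by `e i` on the regular module. -/
noncomputable def Le (i : ℤ) : Module.End F (ℤ × Fin 4 → F) where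
  toFun f p := if (if p.2 = 3 then i = p.1 + 1 else i = p.1) then f p else 0
  map_add' f g := by funext p; split_ifs <;> simp_all
  map_smul' c f := by funext p; split_ifs <;> simp_all

/-- left multiplication by `a i` on the regular module. -/
noncomputable def La (i : ℤ) : Module.End F (ℤ × Fin 4 → F) where
  toFun f p := if p = (i, 2) then f (i + 1, 0) else if p = (i, 1) then f (i, 3) else 0
  map_add' f g := by funext p; split_ifs <;> simp_all
  map_smul' c f := by funext p; split_ifs <;> simp_all

/-- left multiplication by `b i` on the regular module. -/
noncomputable def Lb (i : ℤ) : Module.End F (ℤ × Fin 4 → F) where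
  toFun f p := if p = (i, 3) then f (i, 0) else if p = (i + 1, 1) then f (i, 2) else 0
  map_add' f g := by funext p; split_ifs <;> simp_all
  map_smul' c f := by funext p; split_ifs <;> simp_all

/-- assignment of generators to endomorphisms. -/
noncomputable def rho : PathGen → Module.End F (ℤ × Fin 4 → F)
  | .e i => Le F i
  | .a i => La F i
  | .b i => Lb F i

set_option maxRecDepth 10000 in
lemma rho_rel : ∀ ⦃x y : FreeAlgebra F PathGen⦄, PathRel F x y →
    FreeAlgebra.lift F (rho F) x = FreeAlgebra.lift F (rho F) y := by
  intro x y h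
  induction h with
  | ee i j =>
      simp only [map_mul, FreeAlgebra.lift_ι_apply, rho]
      by_cases h : i = j <;>
        simp only [h, if_true, if_false, ite_true, ite_false, map_zero,
          FreeAlgebra.lift_ι_apply, rho] <;>
      · ext f ⟨p1, p2⟩
        fin_cases p2 <;>
          simp_all [Le, La, Lb, Module.End.mul_apply] <;>
          first
            | rfl
            | omega
            | (intros; exfalso; omega)
            | (split_ifs <;> subst_vars <;> first | rfl | omega | (intros; exfalso; omega) | simp_all)
  | ea i j =>
      simp only [map_mul, FreeAlgebra.lift_ι_apply, rho]
      by_cases h : j = i <;>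
        simp only [h, if_true, if_false, ite_true, ite_false, map_zero,
          FreeAlgebra.lift_ι_apply, rho] <;>
      · ext f ⟨p1, p2⟩
        fin_cases p2 <;>
          simp_all [Le, La, Lb, Module.End.mul_apply] <;>
          first
            | rfl
            | omega
            | (intros; exfalso; omega)
            | (split_ifs <;> subst_vars <;> first | rfl | omega | (intros; exfalso; omega) | simp_all)
  | ae i j =>
      simp only [map_mul, FreeAlgebra.lift_ι_apply, rho]
      by_cases h : j = i + 1 <;>
        simp only [h, if_true, if_false, ite_true, ite_false, map_zero,
          FreeAlgebra.lift_ι_apply, rho] <;>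
      · ext f ⟨p1, p2⟩
        fin_cases p2 <;>
          simp_all [Le, La, Lb, Module.End.mul_apply] <;>
          first
            | rfl
            | omega
            | (intros; exfalso; omega)
            | (split_ifs <;> subst_vars <;> first | rfl | omega | (intros; exfalso; omega) | simp_all)
  | eb i j =>
      simp only [map_mul, FreeAlgebra.lift_ι_apply, rho]
      by_cases h : j = i + 1 <;>
        simp only [h, if_true, if_false, ite_true, ite_false, map_zero,
          FreeAlgebra.lift_ι_apply, rho] <;>
      · ext f ⟨p1, p2⟩
        fin_cases p2 <;>
          simp_all [Le, La, Lb, Module.End.mul_apply] <;>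
          first
            | rfl
            | omega
            | (intros; exfalso; omega)
            | (split_ifs <;> subst_vars <;> first | rfl | omega | (intros; exfalso; omega) | simp_all)
  | be i j =>
      simp only [map_mul, FreeAlgebra.lift_ι_apply, rho]
      by_cases h : j = i <;>
        simp only [h, if_true, if_false, ite_true, ite_false, map_zero,
          FreeAlgebra.lift_ι_apply, rho] <;>
      · ext f ⟨p1, p2⟩
        fin_cases p2 <;>
          simp_all [Le, La, Lb, Module.End.mul_apply] <;>
          first
            | rfl
            | omega
            | (intros; exfalso; omega)
            | (split_ifs <;> subst_vars <;> first | rfl | omega | (intros; exfalso; omega) | simp_all)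
  | ab i =>
      simp only [map_mul, FreeAlgebra.lift_ι_apply, rho]
      ext f ⟨p1, p2⟩
      fin_cases p2 <;>
        simp_all [Le, La, Lb, Module.End.mul_apply] <;>
        first
          | rfl
          | omega
          | (intros; exfalso; omega)
          | (split_ifs <;> subst_vars <;> first | rfl | omega | (intros; exfalso; omega) | simp_all)
  | aa i =>
      simp only [map_mul, map_zero, FreeAlgebra.lift_ι_apply, rho]
      ext f ⟨p1, p2⟩
      fin_cases p2 <;>
        simp_all [Le, La, Lb, Module.End.mul_apply] <;>
        first
          | rfl
          | omega
          | (intros; exfalso; omega)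
          | (split_ifs <;> subst_vars <;> first | rfl | omega | (intros; exfalso; omega) | simp_all)
  | bb i =>
      simp only [map_mul, map_zero, FreeAlgebra.lift_ι_apply, rho]
      ext f ⟨p1, p2⟩
      fin_cases p2 <;>
        simp_all [Le, La, Lb, Module.End.mul_apply] <;>
        first
          | rfl
          | omega
          | (intros; exfalso; omega)
          | (split_ifs <;> subst_vars <;> first | rfl | omega | (intros; exfalso; omega) | simp_all)

/-- the representation of `K₁^∞` on the regular module. -/
noncomputable def phi : KOneInf F →ₐ[F] Module.End F (ℤ × Fin 4 → F) :=
  RingQuot.liftAlgHom F ⟨FreeAlgebra.lift F (rho F), rho_rel F⟩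

lemma phi_Ke (i : ℤ) : phi F (Ke F i) = Le F i := by
  have h : phi F (Ke F i)
      = FreeAlgebra.lift F (rho F) (FreeAlgebra.ι F (PathGen.e i)) :=
    RingQuot.liftAlgHom_mkAlgHom_apply _ _ _ _
  rw [h, FreeAlgebra.lift_ι_apply]
  rfl

lemma phi_Ka (i : ℤ) : phi F (Ka F i) = La F i := by
  have h : phi F (Ka F i)
      = FreeAlgebra.lift F (rho F) (FreeAlgebra.ι F (PathGen.a i)) :=
    RingQuot.liftAlgHom_mkAlgHom_apply _ _ _ _
  rw [h]; simp [FreeAlgebra.lift_ι_apply, rho]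

lemma phi_Kb (i : ℤ) : phi F (Kb F i) = Lb F i := by
  have h : phi F (Kb F i)
      = FreeAlgebra.lift F (rho F) (FreeAlgebra.ι F (PathGen.b i)) :=
    RingQuot.liftAlgHom_mkAlgHom_apply _ _ _ _
  rw [h]; simp [FreeAlgebra.lift_ι_apply, rho]

lemma phi_Kc (i : ℤ) : phi F (Kc F i) = La F i * Lb F i := by
  rw [Kc, map_mul, phi_Ka, phi_Kb]

end Rep

section Main
variable (F : Type*) [Field F]

/-- the basis family. -/
noncomputable def fam : ℤ × Fin 4 → KOneInf F := fun pr =>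
  ![Ke F pr.1, Kc F pr.1, Ka F pr.1, Kb F pr.1] pr.2

lemma fam_e (i : ℤ) : fam F (i, 0) = Ke F i := rfl
lemma fam_c (i : ℤ) : fam F (i, 1) = Kc F i := rfl
lemma fam_a (i : ℤ) : fam F (i, 2) = Ka F i := rfl
lemma fam_b (i : ℤ) : fam F (i, 3) = Kb F i := rfl

/-- evaluation at the vector supported on the `e`-coordinates. -/
noncomputable def evE : Module.End F (ℤ × Fin 4 → F) →ₗ[F] (ℤ × Fin 4 → F) where
  toFun T := T (fun p => if p.2 = 0 then 1 else 0)
  map_add' _ _ := rfl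
  map_smul' _ _ := rfl

lemma psi_fam (p : ℤ × Fin 4) :
    evE F (phi F (fam F p)) = Pi.single p (1 : F) := by
  obtain ⟨i, k⟩ := p
  fin_cases k
  · show evE F (phi F (Ke F i)) = Pi.single ((i, 0) : ℤ × Fin 4) (1 : F)
    rw [phi_Ke]
    funext ⟨p1, p2⟩
    fin_cases p2 <;>
      simp [evE, Le, Pi.single_apply, Prod.ext_iff] <;> split_ifs <;> simp_all <;> omega
  · show evE F (phi F (Kc F i)) = Pi.single ((i, 1) : ℤ × Fin 4) (1 : F)
    rw [phi_Kc]
    funext ⟨p1, p2⟩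
    fin_cases p2 <;>
      simp [evE, La, Lb, Module.End.mul_apply, Pi.single_apply, Prod.ext_iff] <;>
        split_ifs <;> simp_all <;> omega
  · show evE F (phi F (Ka F i)) = Pi.single ((i, 2) : ℤ × Fin 4) (1 : F)
    rw [phi_Ka]
    funext ⟨p1, p2⟩
    fin_cases p2 <;>
      simp [evE, La, Pi.single_apply, Prod.ext_iff] <;> split_ifs <;> simp_all <;> omega
  · show evE F (phi F (Kb F i)) = Pi.single ((i, 3) : ℤ × Fin 4) (1 : F)
    rw [phi_Kb]
    funext ⟨p1, p2⟩
    fin_cases p2 <;>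
      simp [evE, Lb, Pi.single_apply, Prod.ext_iff] <;> split_ifs <;> simp_all <;> omega

lemma lin_indep : LinearIndependent F (fam F) := by
  have h1 : LinearIndependent F
      (fun p : ℤ × Fin 4 => (Finsupp.single p (1 : F) : (ℤ × Fin 4) →₀ F)) := by
    simpa using (Finsupp.basisSingleOne (R := F) (ι := ℤ × Fin 4)).linearIndependent
  have h2 : LinearIndependent F
      (fun p : ℤ × Fin 4 => (Pi.single p (1 : F) : ℤ × Fin 4 → F)) := by
    have h3 := h1.map' (Finsupp.lcoeFun (R := F))
      (LinearMap.ker_eq_bot.mpr (fun f g hfg => by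
        ext a; exact congrFun hfg a))
    convert h3 using 2 with p
    funext q
    simp [Finsupp.lcoeFun, Pi.single_apply, Finsupp.single_apply, eq_comm]
    all_goals rfl
  refine LinearIndependent.of_comp ((evE F).comp (phi F).toLinearMap) ?_
  have : (⇑((evE F).comp (phi F).toLinearMap) ∘ fam F)
      = fun p : ℤ × Fin 4 => (Pi.single p (1 : F) : ℤ × Fin 4 → F) := by
    funext p
    simp only [Function.comp_apply, LinearMap.coe_comp, AlgHom.toLinearMap_apply]
    exact psi_fam F p
  rw [this]
  exact h2

lemma famProdMem (p q : ℤ × Fin 4) :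
    fam F p * fam F q ∈ Submodule.span F (Set.range (fam F)) := by
  have he : ∀ i, Ke F i ∈ Submodule.span F (Set.range (fam F)) :=
    fun i => Submodule.subset_span ⟨(i, 0), rfl⟩
  have hc : ∀ i, Kc F i ∈ Submodule.span F (Set.range (fam F)) :=
    fun i => Submodule.subset_span ⟨(i, 1), rfl⟩
  have ha : ∀ i, Ka F i ∈ Submodule.span F (Set.range (fam F)) :=
    fun i => Submodule.subset_span ⟨(i, 2), rfl⟩
  have hb : ∀ i, Kb F i ∈ Submodule.span F (Set.range (fam F)) :=
    fun i => Submodule.subset_span ⟨(i, 3), rfl⟩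
  obtain ⟨i, k⟩ := p; obtain ⟨j, l⟩ := q
  fin_cases k <;> fin_cases l <;>
    simp only [fam, Fin.zero_eta, Fin.mk_one, Fin.reduceFinMk, Fin.isValue,
      Matrix.cons_val_zero, Matrix.cons_val_one, Matrix.head_cons,
      Matrix.cons_val_two, Matrix.tail_cons, Matrix.cons_val_three] <;>
    first
      | (rw [mul_ee]; split_ifs <;> first | exact he _ | exact zero_mem _)
      | (rw [mul_ec]; split_ifs <;> first | exact hc _ | exact zero_mem _)
      | (rw [mul_ea]; split_ifs <;> first | exact ha _ | exact zero_mem _)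
      | (rw [mul_eb]; split_ifs <;> first | exact hb _ | exact zero_mem _)
      | (rw [mul_ce]; split_ifs <;> first | exact hc _ | exact zero_mem _)
      | (rw [mul_cc]; exact zero_mem _)
      | (rw [mul_ca]; exact zero_mem _)
      | (rw [mul_cb]; exact zero_mem _)
      | (rw [mul_ae]; split_ifs <;> first | exact ha _ | exact zero_mem _)
      | (rw [mul_ac]; exact zero_mem _)
      | (rw [mul_aa]; exact zero_mem _)
      | (rw [mul_ab]; split_ifs <;> first | exact hc _ | exact zero_mem _)
      | (rw [mul_be]; split_ifs <;> first | exact hb _ | exact zero_mem _)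
      | (rw [mul_bc]; exact zero_mem _)
      | (rw [mul_ba]; split_ifs <;> first | exact hc _ | exact zero_mem _)
      | (rw [mul_bb]; exact zero_mem _)

lemma mul_mem_spanS :
    ∀ u ∈ Submodule.span F (Set.range (fam F)), ∀ v ∈ Submodule.span F (Set.range (fam F)),
      u * v ∈ Submodule.span F (Set.range (fam F)) := by
  intro u hu
  induction hu using Submodule.span_induction with
  | mem x hx =>
      intro v hv
      induction hv using Submodule.span_induction with
      | mem y hy =>
          obtain ⟨p, rfl⟩ := hx; obtain ⟨q, rfl⟩ := hy
          exact famProdMem F p q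
      | zero => simp
      | add a b _ _ hA hB => rw [mul_add]; exact add_mem hA hB
      | smul c a _ hA => rw [mul_smul_comm]; exact Submodule.smul_mem _ _ hA
  | zero => intro v _; simp
  | add a b _ _ hA hB => intro v hv; rw [add_mul]; exact add_mem (hA v hv) (hB v hv)
  | smul c a _ hA => intro v hv; rw [smul_mul_assoc]; exact Submodule.smul_mem _ _ (hA v hv)

/-- the span of the basis family as a non-unital subalgebra. -/
noncomputable def spanAlg : NonUnitalSubalgebra F (KOneInf F) where
  carrier := Submodule.span F (Set.range (fam F))
  add_mem' h1 h2 := add_mem h1 h2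
  zero_mem' := zero_mem _
  smul_mem' c x h := Submodule.smul_mem _ _ h
  mul_mem' h1 h2 := mul_mem_spanS F _ h1 _ h2

lemma span_eq_adjoin :
    (Submodule.span F (Set.range (fam F)) : Set (KOneInf F))
      = (NonUnitalAlgebra.adjoin F
          (Set.range (Ke F) ∪ Set.range (Ka F) ∪ Set.range (Kb F)) : Set (KOneInf F)) := by
  apply Set.Subset.antisymm
  · intro x hx
    have hx' : x ∈ Submodule.span F (Set.range (fam F)) := hx
    have hle : Submodule.span F (Set.range (fam F)) ≤
        (NonUnitalAlgebra.adjoin F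
          (Set.range (Ke F) ∪ Set.range (Ka F) ∪ Set.range (Kb F))).toSubmodule := by
      apply Submodule.span_le.mpr
      rintro _ ⟨⟨i, k⟩, rfl⟩
      fin_cases k
      · exact NonUnitalAlgebra.subset_adjoin F (Or.inl (Or.inl ⟨i, rfl⟩))
      · show Ka F i * Kb F i ∈ _
        have h1 : Ka F i ∈ NonUnitalAlgebra.adjoin F
            (Set.range (Ke F) ∪ Set.range (Ka F) ∪ Set.range (Kb F)) :=
          NonUnitalAlgebra.subset_adjoin F (Or.inl (Or.inr ⟨i, rfl⟩))
        have h2 : Kb F i ∈ NonUnitalAlgebra.adjoin F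
            (Set.range (Ke F) ∪ Set.range (Ka F) ∪ Set.range (Kb F)) :=
          NonUnitalAlgebra.subset_adjoin F (Or.inr ⟨i, rfl⟩)
        exact NonUnitalSubalgebra.mem_toSubmodule _ |>.mpr (mul_mem h1 h2)
      · exact NonUnitalAlgebra.subset_adjoin F (Or.inl (Or.inr ⟨i, rfl⟩))
      · exact NonUnitalAlgebra.subset_adjoin F (Or.inr ⟨i, rfl⟩)
    exact hle hx'
  · intro x hx
    have hle : NonUnitalAlgebra.adjoin F
        (Set.range (Ke F) ∪ Set.range (Ka F) ∪ Set.range (Kb F)) ≤ spanAlg F := by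
      apply NonUnitalAlgebra.adjoin_le
      rintro _ (((⟨i, rfl⟩ | ⟨i, rfl⟩) | ⟨i, rfl⟩))
      · exact Submodule.subset_span ⟨(i, 0), rfl⟩
      · exact Submodule.subset_span ⟨(i, 2), rfl⟩
      · exact Submodule.subset_span ⟨(i, 3), rfl⟩
    exact hle hx

lemma mem_span_one :
    ∀ x : KOneInf F, x ∈ Submodule.span F (insert 1 (Set.range (fam F))) := by
  have hone : (1 : KOneInf F) ∈ Submodule.span F (insert 1 (Set.range (fam F))) :=
    Submodule.subset_span (Set.mem_insert _ _)
  have hS : Submodule.span F (Set.range (fam F)) ≤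
      Submodule.span F (insert 1 (Set.range (fam F))) :=
    Submodule.span_mono (Set.subset_insert _ _)
  have hmul : ∀ u ∈ Submodule.span F (insert 1 (Set.range (fam F))),
      ∀ v ∈ Submodule.span F (insert 1 (Set.range (fam F))),
        u * v ∈ Submodule.span F (insert 1 (Set.range (fam F))) := by
    intro u hu
    induction hu using Submodule.span_induction with
    | mem x hx =>
        rcases hx with rfl | hx
        · intro v hv; rw [one_mul]; exact hv
        · intro v hv
          induction hv using Submodule.span_induction with
          | mem y hy =>
              rcases hy with rfl | hy
              · rw [mul_one]
                exact Submodule.subset_span (Set.mem_insert_of_mem _ hx)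
              · obtain ⟨p, rfl⟩ := hx; obtain ⟨q, rfl⟩ := hy
                exact hS (famProdMem F p q)
          | zero => simp
          | add a b _ _ hA hB => rw [mul_add]; exact add_mem hA hB
          | smul c a _ hA => rw [mul_smul_comm]; exact Submodule.smul_mem _ _ hA
    | zero => intro v _; simp
    | add a b _ _ hA hB => intro v hv; rw [add_mul]; exact add_mem (hA v hv) (hB v hv)
    | smul c a _ hA =>
        intro v hv; rw [smul_mul_assoc]; exact Submodule.smul_mem _ _ (hA v hv)
  intro x
  obtain ⟨y, rfl⟩ := RingQuot.mkAlgHom_surjective F (PathRel F) x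
  induction y using FreeAlgebra.induction with
  | grade0 r =>
      rw [AlgHom.commutes, Algebra.algebraMap_eq_smul_one]
      exact Submodule.smul_mem _ _ hone
  | grade1 g =>
      cases g with
      | e i => exact hS (Submodule.subset_span ⟨(i, 0), rfl⟩)
      | a i => exact hS (Submodule.subset_span ⟨(i, 2), rfl⟩)
      | b i => exact hS (Submodule.subset_span ⟨(i, 3), rfl⟩)
  | mul a b hA hB => rw [map_mul]; exact hmul _ hA _ hB
  | add a b hA hB => rw [map_add]; exact add_mem hA hB

lemma ortho (i j : ℤ) (x : KOneInf F) (h : 2 ≤ |i - j|) :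
    Ke F j * x * Ke F i = 0 := by
  have hfacts : i ≠ j ∧ i ≠ j + 1 ∧ j ≠ i + 1 := by
    rcases abs_cases (i - j) with ⟨h2, _⟩ | ⟨h2, _⟩ <;> constructor <;> omega
  obtain ⟨hij, hij1, hji1⟩ := hfacts
  have hx := mem_span_one F x
  induction hx using Submodule.span_induction with
  | mem y hy =>
      rcases hy with rfl | ⟨⟨k, l⟩, rfl⟩
      · rw [mul_one, mul_ee, if_neg (Ne.symm hij)]
      · fin_cases l
        · show Ke F j * Ke F k * Ke F i = 0
          rw [mul_ee]
          split_ifs with h1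
          · rw [mul_ee]; subst h1; rw [if_neg (Ne.symm hij)]
          · rw [zero_mul]
        · show Ke F j * Kc F k * Ke F i = 0
          rw [mul_ec]
          split_ifs with h1
          · rw [mul_ce]; subst h1; rw [if_neg hij]
          · rw [zero_mul]
        · show Ke F j * Ka F k * Ke F i = 0
          rw [mul_ea]
          split_ifs with h1
          · rw [mul_ae]; subst h1; rw [if_neg hij1]
          · rw [zero_mul]
        · show Ke F j * Kb F k * Ke F i = 0
          rw [mul_eb]
          split_ifs with h1
          · rw [mul_be, if_neg (show ¬ i = k by omega)]
          · rw [zero_mul]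
  | zero => rw [mul_zero, zero_mul]
  | add a b _ _ hA hB =>
      rw [mul_add, add_mul, hA, hB, add_zero]
  | smul c a _ hA =>
      rw [mul_smul_comm, smul_mul_assoc, hA, smul_zero]

end Main

/-- In `K₁^∞`, the set `{e_i, c_i, a_i, b_i : i ∈ ℤ}` is an `F`-basis of the path
algebra (i.e. of the non-unital subalgebra generated by the lazy paths and arrows,
inside the unital hull); in particular `e_j K₁^∞ e_i = 0` whenever `|i - j| ≥ 2`. -/
theorem basis_of_KOneInf (F : Type*) [Field F] :
    LinearIndependent F (fun pr : ℤ × Fin 4 =>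
      (![Ke F pr.1, Kc F pr.1, Ka F pr.1, Kb F pr.1] pr.2 : KOneInf F)) ∧
    (Submodule.span F (Set.range (fun pr : ℤ × Fin 4 =>
        (![Ke F pr.1, Kc F pr.1, Ka F pr.1, Kb F pr.1] pr.2 : KOneInf F))) : Set (KOneInf F))
      = (NonUnitalAlgebra.adjoin F
          (Set.range (Ke F) ∪ Set.range (Ka F) ∪ Set.range (Kb F)) : Set (KOneInf F)) ∧
    (∀ (i j : ℤ) (x : KOneInf F), 2 ≤ |i - j| → Ke F j * x * Ke F i = 0) := by
  exact ⟨lin_indep F, span_eq_adjoin F, fun i j x h => ortho F i j x h⟩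
end

section
/- Define the crystal graph on the set Λ of diagrammatic weights with directed edges μ →ᵢ λ of colour i ∈ ℤ whenever λ is obtained from μ by changing the labels at vertices i and i+1 according to one of the six local moves: ∨∘ → ∘∨, ∧∘ → ∘∧, ×∨ → ∨×, ×∧ → ∧×, ×∘ → ∨∧, ∨∧ → ∘× (all other vertices unchanged). For every λ ∈ Λ_{p,q}^∘, there is a directed path in the crystal graph from λ_{p,q} to λ of length ht(λ) - ht(λ_{p,q}) with all edge colours in the interval I_{p,q} = {p-m+1, ..., q+n-1}. -/
/-- The four possible labels of a vertex of a diagrammatic weight. -/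
inductive Label : Type
  | circ   -- ∘
  | wedge  -- ∧
  | vee    -- ∨
  | times  -- ×
  deriving DecidableEq

/-- The set `Λ(m|n)` of diagrammatic weights: labelings of `ℤ` in which a total of `m`
vertices are labelled `×` or `∨`, a total of `n` vertices are labelled `∘` or `∨`,
and all remaining (cofinitely many) vertices are labelled `∧`. -/
def LamSet (m n : ℕ) : Set (ℤ → Label) :=
  {f | {i : ℤ | f i = Label.times ∨ f i = Label.vee}.Finite ∧
       {i : ℤ | f i = Label.times ∨ f i = Label.vee}.ncard = m ∧
       {i : ℤ | f i = Label.circ ∨ f i = Label.vee}.Finite ∧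
       {i : ℤ | f i = Label.circ ∨ f i = Label.vee}.ncard = n}

/-- The height of a diagrammatic weight:
`ht(λ) = Σ_{i : λ(i) = ×} i − Σ_{i : λ(i) = ∘} i`. -/
noncomputable def ht (f : ℤ → Label) : ℤ :=
  (∑ᶠ i ∈ {i : ℤ | f i = Label.times}, i) - (∑ᶠ i ∈ {i : ℤ | f i = Label.circ}, i)

/-- The crystal graph edge relation `μ →ᵢ λ` of colour `i`: `λ` is obtained from `μ` by
changing the labels at vertices `i` and `i+1` according to one of the six local moves
`∨∘ → ∘∨`, `∧∘ → ∘∧`, `×∨ → ∨×`, `×∧ → ∧×`, `×∘ → ∨∧`, `∨∧ → ∘×`,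
all other vertices being unchanged. -/
def CrystalEdge (i : ℤ) (mu lam : ℤ → Label) : Prop :=
  (∀ j : ℤ, j ≠ i → j ≠ i + 1 → lam j = mu j) ∧
  ((mu i = Label.vee ∧ mu (i+1) = Label.circ ∧ lam i = Label.circ ∧ lam (i+1) = Label.vee) ∨
   (mu i = Label.wedge ∧ mu (i+1) = Label.circ ∧ lam i = Label.circ ∧ lam (i+1) = Label.wedge) ∨
   (mu i = Label.times ∧ mu (i+1) = Label.vee ∧ lam i = Label.vee ∧ lam (i+1) = Label.times) ∨
   (mu i = Label.times ∧ mu (i+1) = Label.wedge ∧ lam i = Label.wedge ∧ lam (i+1) = Label.times) ∨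
   (mu i = Label.times ∧ mu (i+1) = Label.circ ∧ lam i = Label.vee ∧ lam (i+1) = Label.wedge) ∨
   (mu i = Label.vee ∧ mu (i+1) = Label.wedge ∧ lam i = Label.circ ∧ lam (i+1) = Label.times))

/-- The ground-state weight `λ_{p,q}`: `×` on vertices `p-m+1, …, p`, `∘` on vertices
`q+1, …, q+n`, and `∧` elsewhere. -/
def lamPQ (m n : ℕ) (p q : ℤ) : ℤ → Label := fun i =>
  if p - m + 1 ≤ i ∧ i ≤ p then Label.times
  else if q + 1 ≤ i ∧ i ≤ q + n then Label.circ
  else Label.wedge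

/-- The strip condition defining `Λ_{p,q}`: the label is `∧` at every vertex outside the
interval `I_{p,q}⁺ = {p-m+1, …, q+n}`. -/
def InStrip (m n : ℕ) (p q : ℤ) : Set (ℤ → Label) :=
  {f | ∀ i : ℤ, (i < p - m + 1 ∨ q + n < i) → f i = Label.wedge}

/-- The balance condition defining `Λ_{p,q}^∘` inside `Λ_{p,q}`: for every
`j ∈ I_{p,q}⁺`, among the vertices `j, …, q+n` the number of `∧`'s is at least the
number of `∨`'s. -/
def BalancedWt (m n : ℕ) (p q : ℤ) (f : ℤ → Label) : Prop :=
  ∀ j : ℤ, p - m + 1 ≤ j → j ≤ q + n →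
    {i : ℤ | j ≤ i ∧ i ≤ q + n ∧ f i = Label.vee}.ncard ≤
    {i : ℤ | j ≤ i ∧ i ≤ q + n ∧ f i = Label.wedge}.ncard

open Finset in
lemma CP.card_filter_erase {s : Finset ℤ} {P : ℤ → Prop} [DecidablePred P] {a : ℤ}
    (ha : a ∈ s) :
    (s.filter P).card = ((s.erase a).filter P).card + if P a then 1 else 0 := by
  by_cases h : P a
  · rw [if_pos h]
    have hins : s.filter P = insert a ((s.erase a).filter P) := by
      rw [Finset.filter_erase, Finset.insert_erase (Finset.mem_filter.2 ⟨ha, h⟩)]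
    rw [hins, Finset.card_insert_of_notMem (by simp)]
  · rw [if_neg h]
    have : (s.erase a).filter P = s.filter P := by
      rw [Finset.filter_erase, Finset.erase_eq_of_notMem (by simp [Finset.mem_filter, h])]
    rw [this]; ring

/-- count of label ℓ among positions `[j, N]`. -/
noncomputable def CP.cnt (N : ℤ) (f : ℤ → Label) (ℓ : Label) (j : ℤ) : ℕ :=
  ((Finset.Icc j N).filter (fun x => f x = ℓ)).card

lemma CP.cnt_congr {N : ℤ} {f g : ℤ → Label} {ℓ : Label} {j : ℤ}
    (h : ∀ x, j ≤ x → x ≤ N → f x = g x) : CP.cnt N f ℓ j = CP.cnt N g ℓ j := by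
  unfold CP.cnt
  congr 1
  apply Finset.filter_congr
  intro x hx
  rw [Finset.mem_Icc] at hx
  rw [h x hx.1 hx.2]

lemma CP.cnt_zero {N : ℤ} {f : ℤ → Label} {ℓ : Label} {j : ℤ}
    (h : ∀ x, j ≤ x → x ≤ N → f x ≠ ℓ) : CP.cnt N f ℓ j = 0 := by
  unfold CP.cnt
  rw [Finset.card_eq_zero, Finset.filter_eq_empty_iff]
  intro x hx
  rw [Finset.mem_Icc] at hx
  exact h x hx.1 hx.2

lemma CP.cnt_succ {N : ℤ} (f : ℤ → Label) (ℓ : Label) {j : ℤ} (hjN : j ≤ N) :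
    CP.cnt N f ℓ j = (if f j = ℓ then 1 else 0) + CP.cnt N f ℓ (j + 1) := by
  unfold CP.cnt
  have hIcc : Finset.Icc j N = insert j (Finset.Icc (j+1) N) := by
    ext x; simp only [Finset.mem_Icc, Finset.mem_insert]; omega
  have hnot : j ∉ (Finset.Icc (j+1) N).filter (fun x => f x = ℓ) := by
    simp [Finset.mem_Icc]
  rw [hIcc, Finset.filter_insert]
  by_cases h : f j = ℓ
  · rw [if_pos h, if_pos h, Finset.card_insert_of_notMem hnot]; omega
  · rw [if_neg h, if_neg h]; omega

lemma CP.cnt_pos {N : ℤ} {f : ℤ → Label} {ℓ : Label} {j x : ℤ}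
    (hjx : j ≤ x) (hxN : x ≤ N) (hx : f x = ℓ) : 1 ≤ CP.cnt N f ℓ j := by
  refine Finset.card_pos.2 ⟨x, ?_⟩
  simp [Finset.mem_Icc, hx, hjx, hxN]

lemma CP.cnt_pair {N i j : ℤ} (f : ℤ → Label) (ℓ : Label) (hji : j ≤ i) (hiN : i + 1 ≤ N) :
    CP.cnt N f ℓ j
      = ((((Finset.Icc j N).erase i).erase (i+1)).filter (fun x => f x = ℓ)).card
        + ((if f i = ℓ then 1 else 0) + (if f (i+1) = ℓ then 1 else 0)) := by
  have hi : i ∈ Finset.Icc j N := by rw [Finset.mem_Icc]; omega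
  have hi1 : (i+1) ∈ (Finset.Icc j N).erase i := by
    rw [Finset.mem_erase, Finset.mem_Icc]; constructor; · omega
    omega
  rw [CP.cnt, CP.card_filter_erase hi, CP.card_filter_erase hi1]
  ring

/-- signed weight contribution of one vertex. -/
def CP.wt (l : Label) (x : ℤ) : ℤ :=
  match l with
  | Label.times => x
  | Label.circ => -x
  | _ => 0

lemma CP.strip_mem {m n : ℕ} {p q : ℤ} {f : ℤ → Label} (hf : f ∈ InStrip m n p q)
    {x : ℤ} {ℓ : Label} (hℓ : ℓ ≠ Label.wedge) (hx : f x = ℓ) :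
    p - m + 1 ≤ x ∧ x ≤ q + n := by
  by_contra hcon
  have := hf x (by omega)
  rw [hx] at this; exact hℓ this

lemma CP.ht_eq {m n : ℕ} {p q : ℤ} {f : ℤ → Label} (hf : f ∈ InStrip m n p q) :
    ht f = ∑ x ∈ Finset.Icc (p - m + 1) (q + n), CP.wt (f x) x := by
  have hX : {i : ℤ | f i = Label.times}
      = ↑((Finset.Icc (p - m + 1) (q + n)).filter (fun x => f x = Label.times)) := by
    ext x
    simp only [Set.mem_setOf_eq, Finset.coe_filter, Finset.mem_Icc]
    constructor
    · intro h; exact ⟨CP.strip_mem hf (by simp) h, h⟩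
    · exact fun h => h.2
  have hC : {i : ℤ | f i = Label.circ}
      = ↑((Finset.Icc (p - m + 1) (q + n)).filter (fun x => f x = Label.circ)) := by
    ext x
    simp only [Set.mem_setOf_eq, Finset.coe_filter, Finset.mem_Icc]
    constructor
    · intro h; exact ⟨CP.strip_mem hf (by simp) h, h⟩
    · exact fun h => h.2
  rw [ht, hX, hC, finsum_mem_coe_finset, finsum_mem_coe_finset]
  have hcongr : ∀ x ∈ Finset.Icc (p - m + 1) (q + n),
      CP.wt (f x) x = (if f x = Label.times then x else 0)
        - (if f x = Label.circ then x else 0) := by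
    intro x _
    cases h : f x <;> simp [CP.wt]
  rw [Finset.sum_congr rfl hcongr, Finset.sum_sub_distrib,
    ← Finset.sum_filter, ← Finset.sum_filter]

lemma CP.edge_ht {lo N i : ℤ} {mu lam : ℤ → Label} (hedge : CrystalEdge i mu lam)
    (hlo : lo ≤ i) (hiN : i + 1 ≤ N) :
    (∑ x ∈ Finset.Icc lo N, CP.wt (mu x) x) + 1
      = ∑ x ∈ Finset.Icc lo N, CP.wt (lam x) x := by
  have hsub : ({i, i+1} : Finset ℤ) ⊆ Finset.Icc lo N := by
    intro x hx
    simp only [Finset.mem_insert, Finset.mem_singleton] at hx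
    rw [Finset.mem_Icc]; omega
  have hkey : ∑ x ∈ Finset.Icc lo N, (CP.wt (lam x) x - CP.wt (mu x) x) = 1 := by
    rw [← Finset.sum_subset hsub (by
      intro x _ hx
      simp only [Finset.mem_insert, Finset.mem_singleton, not_or] at hx
      rw [hedge.1 x hx.1 hx.2]; ring)]
    rw [Finset.sum_pair (by omega : i ≠ i + 1)]
    rcases hedge.2 with ⟨a1,a2,a3,a4⟩|⟨a1,a2,a3,a4⟩|⟨a1,a2,a3,a4⟩|⟨a1,a2,a3,a4⟩|⟨a1,a2,a3,a4⟩|⟨a1,a2,a3,a4⟩ <;>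
      rw [a1,a2,a3,a4] <;> simp [CP.wt] <;> ring
  have := Finset.sum_sub_distrib (s := Finset.Icc lo N)
    (f := fun x => CP.wt (lam x) x) (g := fun x => CP.wt (mu x) x)
  omega

lemma CP.ht_lb {m n : ℕ} {p q : ℤ} {f : ℤ → Label} (hf : f ∈ InStrip m n p q) :
    -(∑ x ∈ Finset.Icc (p - m + 1) (q + n), |x|) ≤ ht f := by
  rw [CP.ht_eq hf, ← Finset.sum_neg_distrib]
  apply Finset.sum_le_sum
  intro x _
  have h1 := neg_abs_le x
  have h2 := abs_nonneg x
  have h3 := le_abs_self x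
  cases f x <;> simp [CP.wt] <;> omega

lemma CP.balanced_iff {m n : ℕ} {p q : ℤ} (f : ℤ → Label) :
    BalancedWt m n p q f ↔ ∀ j, p - m + 1 ≤ j → j ≤ q + n →
      CP.cnt (q + n) f Label.vee j ≤ CP.cnt (q + n) f Label.wedge j := by
  have hset : ∀ (ℓ : Label) (j : ℤ), {i : ℤ | j ≤ i ∧ i ≤ q + n ∧ f i = ℓ}
      = ↑((Finset.Icc j (q + n)).filter (fun x => f x = ℓ)) := by
    intro ℓ j
    ext x
    simp only [Set.mem_setOf_eq, Finset.coe_filter, Finset.mem_Icc]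
    tauto
  unfold BalancedWt CP.cnt
  constructor
  · intro h j hj hjN
    have := h j hj hjN
    rwa [hset, hset, Set.ncard_coe_finset, Set.ncard_coe_finset] at this
  · intro h j hj hjN
    rw [hset, hset, Set.ncard_coe_finset, Set.ncard_coe_finset]
    exact h j hj hjN

lemma CP.lamset_iff {m n : ℕ} {p q : ℤ} {f : ℤ → Label} (hf : f ∈ InStrip m n p q) :
    f ∈ LamSet m n ↔
      (((Finset.Icc (p - m + 1) (q + n)).filter
          (fun x => f x = Label.times ∨ f x = Label.vee)).card = m ∧
       ((Finset.Icc (p - m + 1) (q + n)).filter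
          (fun x => f x = Label.circ ∨ f x = Label.vee)).card = n) := by
  have hs1 : {i : ℤ | f i = Label.times ∨ f i = Label.vee}
      = ↑((Finset.Icc (p - m + 1) (q + n)).filter
          (fun x => f x = Label.times ∨ f x = Label.vee)) := by
    ext x
    simp only [Set.mem_setOf_eq, Finset.coe_filter, Finset.mem_Icc]
    constructor
    · intro h
      refine ⟨?_, h⟩
      rcases h with h | h
      · exact CP.strip_mem hf (by simp) h
      · exact CP.strip_mem hf (by simp) h
    · exact fun h => h.2
  have hs2 : {i : ℤ | f i = Label.circ ∨ f i = Label.vee}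
      = ↑((Finset.Icc (p - m + 1) (q + n)).filter
          (fun x => f x = Label.circ ∨ f x = Label.vee)) := by
    ext x
    simp only [Set.mem_setOf_eq, Finset.coe_filter, Finset.mem_Icc]
    constructor
    · intro h
      refine ⟨?_, h⟩
      rcases h with h | h
      · exact CP.strip_mem hf (by simp) h
      · exact CP.strip_mem hf (by simp) h
    · exact fun h => h.2
  unfold LamSet
  rw [Set.mem_setOf_eq, hs1, hs2, Set.ncard_coe_finset, Set.ncard_coe_finset]
  refine ⟨fun h => ⟨h.2.1, h.2.2.2⟩, fun h => ⟨Finset.finite_toSet _, h.1, Finset.finite_toSet _, h.2⟩⟩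

lemma CP.erase_filter_eq {N i j : ℤ} {mu lam : ℤ → Label}
    (hoff : ∀ x : ℤ, x ≠ i → x ≠ i + 1 → lam x = mu x) (ℓ : Label) :
    ((((Finset.Icc j N).erase i).erase (i+1)).filter (fun x => mu x = ℓ))
      = (((Finset.Icc j N).erase i).erase (i+1)).filter (fun x => lam x = ℓ) := by
  apply Finset.filter_congr
  intro x hx
  simp only [Finset.mem_erase] at hx
  rw [hoff x hx.2.1 hx.1]

lemma CP.bal_step {lo N i : ℤ} {mu lam : ℤ → Label} (hedge : CrystalEdge i mu lam)
    (hlo : lo ≤ i) (hiN : i + 1 ≤ N)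
    (hbal : ∀ j, lo ≤ j → j ≤ N → CP.cnt N lam Label.vee j ≤ CP.cnt N lam Label.wedge j)
    (hcond : CP.cnt N mu Label.vee (i+1) ≤ CP.cnt N mu Label.wedge (i+1)) :
    ∀ j, lo ≤ j → j ≤ N → CP.cnt N mu Label.vee j ≤ CP.cnt N mu Label.wedge j := by
  intro j hj hjN
  rcases le_or_gt j i with hji | hji
  · have h1 := hbal j hj hjN
    rw [CP.cnt_pair lam Label.vee hji hiN, CP.cnt_pair lam Label.wedge hji hiN] at h1
    rw [CP.cnt_pair mu Label.vee hji hiN, CP.cnt_pair mu Label.wedge hji hiN,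
      CP.erase_filter_eq hedge.1, CP.erase_filter_eq hedge.1]
    rcases hedge.2 with ⟨a1,a2,a3,a4⟩|⟨a1,a2,a3,a4⟩|⟨a1,a2,a3,a4⟩|⟨a1,a2,a3,a4⟩|⟨a1,a2,a3,a4⟩|⟨a1,a2,a3,a4⟩ <;>
      simp only [a1,a2,a3,a4] at h1 ⊢ <;> simp at h1 ⊢ <;> omega
  · rcases eq_or_lt_of_le (show i + 1 ≤ j by omega) with hj1 | hj1
    · rw [← hj1]; exact hcond
    · have hmv : ∀ x, j ≤ x → x ≤ N → mu x = lam x := fun x hx _ =>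
        (hedge.1 x (by omega) (by omega)).symm
      rw [CP.cnt_congr hmv, CP.cnt_congr hmv]
      exact hbal j hj hjN

lemma CP.edge_card_pred {lo N i : ℤ} {mu lam : ℤ → Label} (hedge : CrystalEdge i mu lam)
    (hlo : lo ≤ i) (hiN : i + 1 ≤ N) (Q : Label → Prop) [DecidablePred Q]
    (hQ : ((if Q (mu i) then 1 else 0) + if Q (mu (i+1)) then 1 else 0 : ℕ)
        = (if Q (lam i) then 1 else 0) + if Q (lam (i+1)) then 1 else 0) :
    ((Finset.Icc lo N).filter (fun x => Q (mu x))).card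
      = ((Finset.Icc lo N).filter (fun x => Q (lam x))).card := by
  have hi : i ∈ Finset.Icc lo N := by rw [Finset.mem_Icc]; omega
  have hi1 : (i+1) ∈ (Finset.Icc lo N).erase i := by
    rw [Finset.mem_erase, Finset.mem_Icc]; omega
  rw [CP.card_filter_erase hi, CP.card_filter_erase hi1,
    CP.card_filter_erase hi, CP.card_filter_erase hi1]
  have heq : (((Finset.Icc lo N).erase i).erase (i+1)).filter (fun x => Q (mu x))
      = (((Finset.Icc lo N).erase i).erase (i+1)).filter (fun x => Q (lam x)) := by
    apply Finset.filter_congr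
    intro x hx
    simp only [Finset.mem_erase] at hx
    rw [hedge.1 x hx.2.1 hx.1]
  rw [heq]; omega

lemma CP.update_eval_i {f : ℤ → Label} {i : ℤ} (a b : Label) :
    Function.update (Function.update f i a) (i+1) b i = a := by
  rw [Function.update_of_ne (by omega), Function.update_self]

lemma CP.update_eval_i1 {f : ℤ → Label} {i : ℤ} (a b : Label) :
    Function.update (Function.update f i a) (i+1) b (i+1) = b := by
  rw [Function.update_self]

lemma CP.update_eval_off {f : ℤ → Label} {i x : ℤ} (a b : Label)
    (h1 : x ≠ i) (h2 : x ≠ i + 1) :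
    Function.update (Function.update f i a) (i+1) b x = f x := by
  rw [Function.update_of_ne h2, Function.update_of_ne h1]

lemma CP.edge_update {lam : ℤ → Label} {i : ℤ} {a b : Label}
    (hd : (a = Label.vee ∧ b = Label.circ ∧ lam i = Label.circ ∧ lam (i+1) = Label.vee) ∨
          (a = Label.wedge ∧ b = Label.circ ∧ lam i = Label.circ ∧ lam (i+1) = Label.wedge) ∨
          (a = Label.times ∧ b = Label.vee ∧ lam i = Label.vee ∧ lam (i+1) = Label.times) ∨
          (a = Label.times ∧ b = Label.wedge ∧ lam i = Label.wedge ∧ lam (i+1) = Label.times) ∨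
          (a = Label.times ∧ b = Label.circ ∧ lam i = Label.vee ∧ lam (i+1) = Label.wedge) ∨
          (a = Label.vee ∧ b = Label.wedge ∧ lam i = Label.circ ∧ lam (i+1) = Label.times)) :
    CrystalEdge i (Function.update (Function.update lam i a) (i+1) b) lam := by
  constructor
  · intro j hj1 hj2
    rw [CP.update_eval_off a b hj1 hj2]
  · rw [CP.update_eval_i a b, CP.update_eval_i1 a b]
    exact hd

lemma CP.cnt_update_succ {N : ℤ} {f : ℤ → Label} {i : ℤ} (a b : Label) (ℓ : Label)
    (hiN : i + 1 ≤ N) :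
    CP.cnt N (Function.update (Function.update f i a) (i+1) b) ℓ (i+1)
      = (if b = ℓ then 1 else 0) + CP.cnt N f ℓ (i+2) := by
  rw [CP.cnt_succ _ ℓ hiN, CP.update_eval_i1 a b]
  have h2 : CP.cnt N (Function.update (Function.update f i a) (i+1) b) ℓ (i+1+1)
      = CP.cnt N f ℓ (i+2) := by
    have : i + 1 + 1 = i + 2 := by ring
    rw [this]
    exact CP.cnt_congr (fun x hx _ => CP.update_eval_off a b (by omega) (by omega))
  rw [h2]

lemma CP.make_move {m n : ℕ} {p q : ℤ} {lam : ℤ → Label}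
    (h1 : lam ∈ LamSet m n) (h2 : lam ∈ InStrip m n p q) (h3 : BalancedWt m n p q lam)
    {i : ℤ} (a b : Label) (hlo : p - m + 1 ≤ i) (hiN : i + 1 ≤ q + n)
    (hd : (a = Label.vee ∧ b = Label.circ ∧ lam i = Label.circ ∧ lam (i+1) = Label.vee) ∨
          (a = Label.wedge ∧ b = Label.circ ∧ lam i = Label.circ ∧ lam (i+1) = Label.wedge) ∨
          (a = Label.times ∧ b = Label.vee ∧ lam i = Label.vee ∧ lam (i+1) = Label.times) ∨
          (a = Label.times ∧ b = Label.wedge ∧ lam i = Label.wedge ∧ lam (i+1) = Label.times) ∨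
          (a = Label.times ∧ b = Label.circ ∧ lam i = Label.vee ∧ lam (i+1) = Label.wedge) ∨
          (a = Label.vee ∧ b = Label.wedge ∧ lam i = Label.circ ∧ lam (i+1) = Label.times))
    (hcond : (if b = Label.vee then 1 else 0) + CP.cnt (q+n) lam Label.vee (i+2)
        ≤ (if b = Label.wedge then 1 else 0) + CP.cnt (q+n) lam Label.wedge (i+2)) :
    ∃ (mu : ℤ → Label) (c : ℤ), mu ∈ LamSet m n ∧ mu ∈ InStrip m n p q ∧
      BalancedWt m n p q mu ∧ (p - m + 1 ≤ c ∧ c ≤ q + n - 1) ∧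
      CrystalEdge c mu lam ∧ ht mu + 1 = ht lam := by
  set mu := Function.update (Function.update lam i a) (i+1) b with hmu
  have hedge : CrystalEdge i mu lam := CP.edge_update hd
  have hstrip : mu ∈ InStrip m n p q := by
    intro x hx
    rw [hmu, CP.update_eval_off a b (by omega) (by omega)]
    exact h2 x hx
  have hls : mu ∈ LamSet m n := by
    rw [CP.lamset_iff hstrip]
    obtain ⟨hm, hn⟩ := (CP.lamset_iff h2).1 h1
    constructor
    · refine Eq.trans ?_ hm
      apply CP.edge_card_pred hedge hlo hiN (fun l => l = Label.times ∨ l = Label.vee)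
      rw [hmu, CP.update_eval_i a b, CP.update_eval_i1 a b]
      rcases hd with ⟨a1,a2,a3,a4⟩|⟨a1,a2,a3,a4⟩|⟨a1,a2,a3,a4⟩|⟨a1,a2,a3,a4⟩|⟨a1,a2,a3,a4⟩|⟨a1,a2,a3,a4⟩ <;>
        simp [a1,a2,a3,a4]
    · refine Eq.trans ?_ hn
      apply CP.edge_card_pred hedge hlo hiN (fun l => l = Label.circ ∨ l = Label.vee)
      rw [hmu, CP.update_eval_i a b, CP.update_eval_i1 a b]
      rcases hd with ⟨a1,a2,a3,a4⟩|⟨a1,a2,a3,a4⟩|⟨a1,a2,a3,a4⟩|⟨a1,a2,a3,a4⟩|⟨a1,a2,a3,a4⟩|⟨a1,a2,a3,a4⟩ <;>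
        simp [a1,a2,a3,a4]
  have hbal : BalancedWt m n p q mu := by
    rw [CP.balanced_iff]
    apply CP.bal_step hedge hlo hiN ((CP.balanced_iff lam).1 h3)
    rw [hmu, CP.cnt_update_succ a b Label.vee hiN, CP.cnt_update_succ a b Label.wedge hiN]
    exact hcond
  refine ⟨mu, i, hls, hstrip, hbal, ⟨hlo, by omega⟩, hedge, ?_⟩
  rw [CP.ht_eq hstrip, CP.ht_eq h2]
  exact CP.edge_ht hedge hlo hiN

lemma CP.descent {m n : ℕ} {p q : ℤ} (hpq : p ≤ q) {lam : ℤ → Label}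
    (h1 : lam ∈ LamSet m n) (h2 : lam ∈ InStrip m n p q) (h3 : BalancedWt m n p q lam)
    (hne : lam ≠ lamPQ m n p q) :
    ∃ (mu : ℤ → Label) (c : ℤ), mu ∈ LamSet m n ∧ mu ∈ InStrip m n p q ∧
      BalancedWt m n p q mu ∧ (p - m + 1 ≤ c ∧ c ≤ q + n - 1) ∧
      CrystalEdge c mu lam ∧ ht mu + 1 = ht lam := by
  have hbal := (CP.balanced_iff lam).1 h3
  by_cases hV : ((Finset.Icc (p - (m:ℤ) + 1) (q + (n:ℤ))).filter
      (fun x => lam x = Label.vee)).Nonempty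
  · -- there is some ∨ ; take the rightmost one
    obtain ⟨r, hr'⟩ : ∃ r, r = ((Finset.Icc (p - (m:ℤ) + 1) (q + (n:ℤ))).filter
      (fun x => lam x = Label.vee)).max' hV := ⟨_, rfl⟩
    have hrmem := Finset.max'_mem _ hV
    rw [← hr', Finset.mem_filter, Finset.mem_Icc] at hrmem
    obtain ⟨⟨hrlo, hrN⟩, hrv⟩ := hrmem
    have hnov : ∀ x, r < x → lam x ≠ Label.vee := by
      intro x hx hlx
      by_cases hmem : x ∈ Finset.Icc (p - (m:ℤ) + 1) (q + (n:ℤ))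
      · have hxle : x ≤ r := by
          rw [hr']
          exact Finset.le_max' _ x (Finset.mem_filter.2 ⟨hmem, hlx⟩)
        omega
      · rw [Finset.mem_Icc] at hmem
        have := h2 x (by omega)
        rw [hlx] at this
        exact absurd this (by simp)
    have hcnt0 : ∀ j, r < j → CP.cnt (q + (n:ℤ)) lam Label.vee j = 0 := fun j hj =>
      CP.cnt_zero (fun x hx _ => hnov x (by omega))
    have hrN' : r < q + (n:ℤ) := by
      rcases eq_or_lt_of_le hrN with heq | h
      · exfalso
        have hb := hbal r hrlo hrN
        have hpos := CP.cnt_pos (le_refl r) hrN hrv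
        have h0 : CP.cnt (q + (n:ℤ)) lam Label.wedge r = 0 := CP.cnt_zero (by
          intro x hx1 hx2 hw
          have hxr : x = r := by omega
          rw [hxr, hrv] at hw
          exact absurd hw (by simp))
        omega
      · exact h
    have hv2 : CP.cnt (q + (n:ℤ)) lam Label.vee (r+2) = 0 := hcnt0 _ (by omega)
    have hv1 : CP.cnt (q + (n:ℤ)) lam Label.vee (r+1) = 0 := hcnt0 _ (by omega)
    cases hcase : lam (r+1) with
    | vee => exact absurd hcase (hnov _ (by omega))
    | times =>
        -- move ×∨ → ∨× read backwards : mu = ×∨, lam = ∨×, colour r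
        refine CP.make_move h1 h2 h3 Label.times Label.vee hrlo (by omega)
          (by right; right; left; exact ⟨rfl, rfl, hrv, hcase⟩) ?_
        have hbr := hbal r hrlo (by omega)
        rw [CP.cnt_succ lam Label.vee (by omega : r ≤ q + (n:ℤ)),
          CP.cnt_succ lam Label.wedge (by omega : r ≤ q + (n:ℤ))] at hbr
        rw [CP.cnt_succ lam Label.wedge (by omega : r + 1 ≤ q + (n:ℤ))] at hbr
        have e2 : r + 1 + 1 = r + 2 := by ring
        rw [e2] at hbr
        simp only [hrv, hcase] at hbr
        simp at hbr ⊢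
        omega
    | wedge =>
        -- mu = ×∘, lam = ∨∧, colour r
        refine CP.make_move h1 h2 h3 Label.times Label.circ hrlo (by omega)
          (by right; right; right; right; left; exact ⟨rfl, rfl, hrv, hcase⟩) ?_
        simp [hv2]
    | circ =>
        by_cases hC : ((Finset.Icc (r+1) (q + (n:ℤ))).filter
            (fun x => ¬ lam x = Label.circ)).Nonempty
        · obtain ⟨s, hs'⟩ : ∃ s, s = ((Finset.Icc (r+1) (q + (n:ℤ))).filter
            (fun x => ¬ lam x = Label.circ)).min' hC := ⟨_, rfl⟩
          have hsmem := Finset.min'_mem _ hC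
          rw [← hs', Finset.mem_filter, Finset.mem_Icc] at hsmem
          obtain ⟨⟨hsr, hsN⟩, hsc⟩ := hsmem
          have hs1 : r + 1 < s := by
            rcases eq_or_lt_of_le hsr with heq | h
            · exact absurd (heq ▸ hcase) hsc
            · exact h
          have hsm1 : lam (s-1) = Label.circ := by
            by_contra hcon
            have hle := Finset.min'_le ((Finset.Icc (r+1) (q + (n:ℤ))).filter
              (fun x => ¬ lam x = Label.circ)) (s-1) (Finset.mem_filter.2
                ⟨Finset.mem_Icc.2 ⟨by omega, by omega⟩, hcon⟩)
            omega
          have hss : s - 1 + 1 = s := by ring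
          have hss2 : s - 1 + 2 = s + 1 := by ring
          have hvs : CP.cnt (q + (n:ℤ)) lam Label.vee (s+1) = 0 := hcnt0 _ (by omega)
          cases hcase2 : lam s with
          | vee => exact absurd hcase2 (hnov _ (by omega))
          | circ => exact absurd hcase2 hsc
          | wedge =>
              -- mu = ∧∘, lam = ∘∧, colour s-1
              refine CP.make_move (i := s - 1) h1 h2 h3 Label.wedge Label.circ (by omega) (by omega)
                (by right; left; exact ⟨rfl, rfl, hsm1, by rw [hss]; exact hcase2⟩) ?_
              rw [hss2]
              simp [hvs]
          | times =>
              -- mu = ∨∧, lam = ∘×, colour s-1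
              refine CP.make_move (i := s - 1) h1 h2 h3 Label.vee Label.wedge (by omega) (by omega)
                (by right; right; right; right; right; exact ⟨rfl, rfl, hsm1, by rw [hss]; exact hcase2⟩) ?_
              rw [hss2]
              simp [hvs]
        · -- everything right of r is ∘ : contradicts balance at r
          exfalso
          rw [Finset.not_nonempty_iff_eq_empty, Finset.filter_eq_empty_iff] at hC
          have hball := hbal r hrlo (by omega)
          have hpos := CP.cnt_pos (le_refl r) hrN hrv
          have h0 : CP.cnt (q + (n:ℤ)) lam Label.wedge r = 0 := CP.cnt_zero (by
            intro x hx1 hx2 hw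
            rcases eq_or_lt_of_le hx1 with heq | hlt
            · rw [← heq, hrv] at hw
              exact absurd hw (by simp)
            · have := hC (Finset.mem_Icc.2 ⟨by omega, hx2⟩)
              simp at this
              rw [this] at hw
              exact absurd hw (by simp))
          omega
  · -- no ∨ at all
    have hnov : ∀ x, lam x ≠ Label.vee := by
      intro x hx
      apply hV
      refine ⟨x, Finset.mem_filter.2 ⟨Finset.mem_Icc.2 ?_, hx⟩⟩
      exact CP.strip_mem h2 (by simp) hx
    have hcv : ∀ j, CP.cnt (q + (n:ℤ)) lam Label.vee j = 0 := fun j =>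
      CP.cnt_zero (fun x _ _ => hnov x)
    by_cases hX : ∃ k, (p - (m:ℤ) + 1 + 1 ≤ k ∧ k ≤ q + (n:ℤ)) ∧
        lam k = Label.times ∧ ¬ lam (k-1) = Label.times
    · obtain ⟨k, ⟨hk1, hk2⟩, hkt, hknt⟩ := hX
      have hik : k - 1 + 1 = k := by ring
      cases hcase : lam (k-1) with
      | times => exact absurd hcase hknt
      | vee => exact absurd hcase (hnov _)
      | wedge =>
          -- mu = ×∧, lam = ∧×, colour k-1
          refine CP.make_move (i := k - 1) h1 h2 h3 Label.times Label.wedge (by omega) (by omega)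
            (by right; right; right; left; exact ⟨rfl, rfl, hcase, by rw [hik]; exact hkt⟩) ?_
          simp [hcv]
      | circ =>
          -- mu = ∨∧, lam = ∘×, colour k-1
          refine CP.make_move (i := k - 1) h1 h2 h3 Label.vee Label.wedge (by omega) (by omega)
            (by right; right; right; right; right; exact ⟨rfl, rfl, hcase, by rw [hik]; exact hkt⟩) ?_
          simp [hcv]
    · by_cases hC2 : ∃ i, (p - (m:ℤ) + 1 ≤ i ∧ i ≤ q + (n:ℤ) - 1) ∧
          lam i = Label.circ ∧ lam (i+1) = Label.wedge
      · obtain ⟨i, ⟨hi1, hi2⟩, hic, hiw⟩ := hC2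
        refine CP.make_move h1 h2 h3 Label.wedge Label.circ hi1 (by omega)
          (by right; left; exact ⟨rfl, rfl, hic, hiw⟩) ?_
        simp [hcv]
      · -- no moves at all: lam is the ground state, contradiction
        exfalso
        apply hne
        push_neg at hX hC2
        have hXstep : ∀ k, p - (m:ℤ) + 1 + 1 ≤ k → k ≤ q + (n:ℤ) →
            lam k = Label.times → lam (k-1) = Label.times := by
          intro k hk1 hk2 hkt
          by_contra h
          exact h (hX k ⟨hk1, hk2⟩ hkt)
        have hCstep : ∀ i, p - (m:ℤ) + 1 ≤ i → i ≤ q + (n:ℤ) - 1 →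
            lam i = Label.circ → lam (i+1) = Label.circ := by
          intro i hi1 hi2 hic
          have hnw : lam (i+1) ≠ Label.wedge := fun h => (hC2 i ⟨hi1, hi2⟩ hic) h
          have hnt : lam (i+1) ≠ Label.times := by
            intro h
            have := hX (i+1) ⟨by omega, by omega⟩ h
            rw [show i + 1 - 1 = i by ring, hic] at this
            exact absurd this (by simp)
          cases h : lam (i+1) with
          | circ => rfl
          | wedge => exact absurd h hnw
          | times => exact absurd h hnt
          | vee => exact absurd h (hnov _)
        have hXcl : ∀ (d : ℕ) (k : ℤ), lam k = Label.times →
            p - (m:ℤ) + 1 ≤ k - d → lam (k - d) = Label.times := by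
          intro d
          induction d with
          | zero => intro k h _; simpa using h
          | succ d ih =>
              intro k hk hlo2
              push_cast at hlo2
              have hstep1 : lam (k - d) = Label.times := ih k hk (by push_cast; omega)
              have hkN : k - (d:ℤ) ≤ q + (n:ℤ) := (CP.strip_mem h2 (by simp) hstep1).2
              have := hXstep (k - d) (by omega) hkN hstep1
              have heq : k - ((d:ℕ)+1 : ℕ) = (k - d) - 1 := by push_cast; ring
              rw [heq]
              exact this
        have hXall : ∀ k j, lam k = Label.times → p - (m:ℤ) + 1 ≤ j → j ≤ k →
            lam j = Label.times := by
          intro k j hk hj1 hj2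
          have hj : j = k - ((k - j).toNat : ℤ) := by omega
          rw [hj]
          exact hXcl _ k hk (by omega)
        have hCcl : ∀ (d : ℕ) (i : ℤ), lam i = Label.circ →
            i + d ≤ q + (n:ℤ) → lam (i + d) = Label.circ := by
          intro d
          induction d with
          | zero => intro i h _; simpa using h
          | succ d ih =>
              intro i hi hiN
              push_cast at hiN
              have hstep1 : lam (i + d) = Label.circ := ih i hi (by push_cast; omega)
              have hilo : p - (m:ℤ) + 1 ≤ i + (d:ℤ) := (CP.strip_mem h2 (by simp) hstep1).1
              have := hCstep (i + d) hilo (by omega) hstep1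
              have heq : i + ((d:ℕ)+1 : ℕ) = (i + d) + 1 := by push_cast; ring
              rw [heq]
              exact this
        have hCall : ∀ i j, lam i = Label.circ → i ≤ j → j ≤ q + (n:ℤ) →
            lam j = Label.circ := by
          intro i j hi hj1 hj2
          have hj : j = i + ((j - i).toNat : ℤ) := by omega
          rw [hj]
          exact hCcl _ i hi (by omega)
        obtain ⟨hm, hn⟩ := (CP.lamset_iff h2).1 h1
        have hmX : ((Finset.Icc (p - (m:ℤ) + 1) (q + (n:ℤ))).filter
            (fun x => lam x = Label.times)).card = m := by
          refine Eq.trans ?_ hm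
          congr 1
          apply Finset.filter_congr
          intro x _
          simp [hnov x]
        have hnC : ((Finset.Icc (p - (m:ℤ) + 1) (q + (n:ℤ))).filter
            (fun x => lam x = Label.circ)).card = n := by
          refine Eq.trans ?_ hn
          congr 1
          apply Finset.filter_congr
          intro x _
          simp [hnov x]
        have hXiff : ∀ x, lam x = Label.times ↔ (p - (m:ℤ) + 1 ≤ x ∧ x ≤ p) := by
          intro x
          constructor
          · intro hx
            obtain ⟨hx1, hx2⟩ := CP.strip_mem h2 (by simp) hx
            refine ⟨hx1, ?_⟩
            have hsub : Finset.Icc (p - (m:ℤ) + 1) x ⊆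
                (Finset.Icc (p - (m:ℤ) + 1) (q + (n:ℤ))).filter
                  (fun y => lam y = Label.times) := by
              intro y hy
              rw [Finset.mem_Icc] at hy
              exact Finset.mem_filter.2 ⟨Finset.mem_Icc.2 ⟨hy.1, by omega⟩,
                hXall x y hx hy.1 hy.2⟩
            have hcard := Finset.card_le_card hsub
            rw [Int.card_Icc, hmX] at hcard
            omega
          · intro ⟨hx1, hx2⟩
            by_contra hnx
            have hsub : (Finset.Icc (p - (m:ℤ) + 1) (q + (n:ℤ))).filter
                (fun y => lam y = Label.times) ⊆ Finset.Icc (p - (m:ℤ) + 1) (x - 1) := by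
              intro y hy
              rw [Finset.mem_filter, Finset.mem_Icc] at hy
              rw [Finset.mem_Icc]
              refine ⟨hy.1.1, ?_⟩
              by_contra hcon
              exact hnx (hXall y x hy.2 hx1 (by omega))
            have hcard := Finset.card_le_card hsub
            rw [Int.card_Icc, hmX] at hcard
            omega
        have hCiff : ∀ x, lam x = Label.circ ↔ (q + 1 ≤ x ∧ x ≤ q + (n:ℤ)) := by
          intro x
          constructor
          · intro hx
            obtain ⟨hx1, hx2⟩ := CP.strip_mem h2 (by simp) hx
            refine ⟨?_, hx2⟩
            have hsub : Finset.Icc x (q + (n:ℤ)) ⊆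
                (Finset.Icc (p - (m:ℤ) + 1) (q + (n:ℤ))).filter
                  (fun y => lam y = Label.circ) := by
              intro y hy
              rw [Finset.mem_Icc] at hy
              exact Finset.mem_filter.2 ⟨Finset.mem_Icc.2 ⟨by omega, hy.2⟩,
                hCall x y hx hy.1 hy.2⟩
            have hcard := Finset.card_le_card hsub
            rw [Int.card_Icc, hnC] at hcard
            omega
          · intro ⟨hx1, hx2⟩
            by_contra hnx
            have hsub : (Finset.Icc (p - (m:ℤ) + 1) (q + (n:ℤ))).filter
                (fun y => lam y = Label.circ) ⊆ Finset.Icc (x + 1) (q + (n:ℤ)) := by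
              intro y hy
              rw [Finset.mem_filter, Finset.mem_Icc] at hy
              rw [Finset.mem_Icc]
              refine ⟨?_, hy.1.2⟩
              by_contra hcon
              exact hnx (hCall y x hy.2 (by omega) hx2)
            have hcard := Finset.card_le_card hsub
            rw [Int.card_Icc, hnC] at hcard
            omega
        funext x
        rw [lamPQ]
        split_ifs with ha hb
        · exact (hXiff x).2 ha
        · exact (hCiff x).2 hb
        · cases h : lam x with
          | wedge => rfl
          | vee => exact absurd h (hnov _)
          | times => exact absurd ((hXiff x).1 h) ha
          | circ => exact absurd ((hCiff x).1 h) hb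

lemma CP.build {m n : ℕ} {p q : ℤ} (hpq : p ≤ q) :
    ∀ (k : ℕ) (f : ℤ → Label), f ∈ LamSet m n → f ∈ InStrip m n p q → BalancedWt m n p q f →
    (ht f + (∑ x ∈ Finset.Icc (p - (m:ℤ) + 1) (q + (n:ℤ)), |x|)).toNat ≤ k →
    ∃ (len : ℕ) (seq : ℕ → ℤ → Label) (col : ℕ → ℤ),
      seq 0 = lamPQ m n p q ∧ seq len = f ∧ ht f = ht (lamPQ m n p q) + len ∧
      ∀ t, t < len → (p - m + 1 ≤ col t ∧ col t ≤ q + n - 1) ∧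
        CrystalEdge (col t) (seq t) (seq (t+1)) := by
  intro k
  induction k with
  | zero =>
      intro f h1 h2 h3 hk
      by_cases hne : f = lamPQ m n p q
      · refine ⟨0, fun _ => f, fun _ => p - m + 1, hne, rfl, by rw [hne]; simp, ?_⟩
        intro t ht
        omega
      · exfalso
        obtain ⟨mu, c, hm1, hm2, hm3, hmc, hmedge, hmht⟩ := CP.descent hpq h1 h2 h3 hne
        have hlb := CP.ht_lb hm2
        omega
  | succ k ih =>
      intro f h1 h2 h3 hk
      by_cases hne : f = lamPQ m n p q
      · refine ⟨0, fun _ => f, fun _ => p - m + 1, hne, rfl, by rw [hne]; simp, ?_⟩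
        intro t ht
        omega
      · obtain ⟨mu, c, hm1, hm2, hm3, hmc, hmedge, hmht⟩ := CP.descent hpq h1 h2 h3 hne
        have hlb := CP.ht_lb hm2
        obtain ⟨len, seq, col, hs0, hslen, hht, hedges⟩ :=
          ih mu hm1 hm2 hm3 (by omega)
        refine ⟨len + 1, fun t => if t ≤ len then seq t else f,
          fun t => if t < len then col t else c, ?_, ?_, ?_, ?_⟩
        · simpa using hs0
        · simp
        · push_cast
          omega
        · intro t htl
          by_cases hcase : t < len
          · have ht1 : t ≤ len := by omega
            have ht2 : t + 1 ≤ len := by omega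
            simp only [if_pos hcase, if_pos ht1, if_pos ht2]
            exact hedges t hcase
          · have hteq : t = len := by omega
            subst hteq
            simp only [if_neg hcase, if_pos (le_refl t), if_neg (by omega : ¬ t + 1 ≤ t)]
            rw [hslen]
            exact ⟨hmc, hmedge⟩

/-- For every `λ ∈ Λ_{p,q}^∘` there is a directed path in the crystal graph from the
ground-state weight `λ_{p,q}` to `λ` of length `ht(λ) - ht(λ_{p,q})`, all of whose edge
colours lie in the interval `I_{p,q} = {p-m+1, …, q+n-1}`. -/
theorem crystal_path_from_ground_state (m n : ℕ) (p q : ℤ) (hpq : p ≤ q)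
    (lam : ℤ → Label) (h1 : lam ∈ LamSet m n) (h2 : lam ∈ InStrip m n p q)
    (h3 : BalancedWt m n p q lam) :
    ∃ (seq : Fin ((ht lam - ht (lamPQ m n p q)).toNat + 1) → (ℤ → Label))
      (col : Fin ((ht lam - ht (lamPQ m n p q)).toNat) → ℤ),
      seq 0 = lamPQ m n p q ∧
      seq (Fin.last _) = lam ∧
      ∀ t : Fin ((ht lam - ht (lamPQ m n p q)).toNat),
        (p - m + 1 ≤ col t ∧ col t ≤ q + n - 1) ∧
        CrystalEdge (col t) (seq t.castSucc) (seq t.succ) := by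
  obtain ⟨len, seq, col, hs0, hslen, hht, hedges⟩ :=
    CP.build hpq ((ht lam + (∑ x ∈ Finset.Icc (p - (m:ℤ) + 1) (q + (n:ℤ)), |x|)).toNat)
      lam h1 h2 h3 le_rfl
  have hlen : (ht lam - ht (lamPQ m n p q)).toNat = len := by omega
  refine ⟨fun t => seq t.val, fun t => col t.val, ?_, ?_, ?_⟩
  · show seq ((0 : Fin _) : ℕ) = lamPQ m n p q
    rw [Fin.val_zero]
    exact hs0
  · show seq ((Fin.last _ : Fin _) : ℕ) = lam
    rw [Fin.val_last, hlen]
    exact hslen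
  · intro t
    have htl : (t : ℕ) < len := by
      have := t.isLt
      omega
    have h := hedges t.val htl
    exact ⟨h.1, h.2⟩
end
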